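/- arXiv:2110.02767 — 10 statements merged into one kernel-verified Lean document; each statement's English description precedes it below -/
import Mathlib

section
/- Let f be a holomorphic mapping of the unit disk U into itself with f(0) = 0. Then for every z in U, |f(z)| ≤ |z| (|f'(0)| + |z|) / (1 + |f'(0)||z|). -/
open Metric Complex

private lemma osserman_aux (u α t r : ℝ) (hu0 : 0 ≤ u) (ha0 : 0 ≤ α) (ht0 : 0 ≤ t)
    (hu : u ≤ 1) (ha : α < 1) (ht : t < 1)
    (hr : r ≤ α * u)
    (hsq : u^2 + α^2 - 2*r ≤ t^2 * (1 + α^2*u^2 - 2*r)) :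
    t * u * (1 + α * t) ≤ t * (α + t) := by
  have ht2 : 0 ≤ 1 - t^2 := by nlinarith
  have h1 : (1 - t^2) * (2*r) ≤ (1 - t^2) * (2*(α*u)) := by
    apply mul_le_mul_of_nonneg_left (by linarith) ht2
  have hQ : ((1+α*t)*u - (α+t)) * ((1-α*t)*u - (α-t)) ≤ 0 := by nlinarith [h1, hsq]
  have h2 : 0 < 1 - α*u := by nlinarith
  nlinarith [hQ, h2, sq_nonneg ((1+α*t)*u - (α+t))]

theorem osserman_estimate (f : ℂ → ℂ)
    (hd : DifferentiableOn ℂ f (ball 0 1))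
    (hb : ∀ z ∈ ball (0:ℂ) 1, ‖f z‖ < 1)
    (hf0 : f 0 = 0)
    (z : ℂ) (hz : z ∈ ball (0:ℂ) 1) :
    ‖f z‖ ≤
      ‖z‖ * (‖deriv f 0‖ + ‖z‖) /
        (1 + ‖deriv f 0‖ * ‖z‖) := by
  have hmaps : Set.MapsTo f (ball (0:ℂ) 1) (ball (f 0) 1) := by
    intro w hw
    rw [hf0, mem_ball_zero_iff]
    exact hb w hw
  set g := dslope f 0 with hgdef
  set a := deriv f 0 with hadef
  have hga : g 0 = a := dslope_same f 0
  have hgle : ∀ w ∈ ball (0:ℂ) 1, ‖g w‖ ≤ 1 := by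
    intro w hw
    simpa using Complex.norm_dslope_le_div_of_mapsTo_ball hd (hmaps.mono_right ball_subset_closedBall) hw
  have ha1 : ‖a‖ ≤ 1 := by
    simpa [hga] using hgle 0 (mem_ball_self one_pos)
  have htz : ‖z‖ < 1 := mem_ball_zero_iff.1 hz
  have ht0 : 0 ≤ ‖z‖ := norm_nonneg z
  have ha0 : 0 ≤ ‖a‖ := norm_nonneg a
  rcases eq_or_ne z 0 with rfl | hz0
  · simp [hf0]
  have hfz : f z = z * g z := by
    rw [hgdef, dslope_of_ne f hz0, slope_def_field]
    field_simp [hf0]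
    simp only [hf0, sub_zero]; ring
  rcases eq_or_lt_of_le ha1 with hae | halt
  · -- |a| = 1 case: RHS = |z|, use Schwarz
    have hs : ‖f z‖ ≤ ‖z‖ :=
      Complex.norm_le_norm_of_mapsTo_ball hd (hmaps.mono_right (by rw [hf0]; exact ball_subset_closedBall)) hf0 htz
    rw [hae, one_mul, mul_div_assoc, div_self (by positivity), mul_one]
    exact hs
  -- main case
  set h : ℂ → ℂ := fun w => (g w - a) / (1 - (starRingEnd ℂ) a * g w) with hhdef
  have hden : ∀ w ∈ ball (0:ℂ) 1, 1 - (starRingEnd ℂ) a * g w ≠ 0 := by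
    intro w hw hcon
    rw [sub_eq_zero] at hcon
    have h1 : ‖(starRingEnd ℂ) a * g w‖ < 1 := by
      rw [norm_mul, Complex.norm_conj]
      calc ‖a‖ * ‖g w‖ ≤ ‖a‖ * 1 :=
            mul_le_mul_of_nonneg_left (hgle w hw) ha0
        _ < 1 := by linarith
    rw [← hcon] at h1
    simp at h1
  have hgdiff : DifferentiableOn ℂ g (ball 0 1) :=
    (differentiableOn_dslope (isOpen_ball.mem_nhds (mem_ball_self one_pos))).mpr hd
  have hhdiff : DifferentiableOn ℂ h (ball 0 1) :=
    DifferentiableOn.div (hgdiff.sub (differentiableOn_const a))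
      ((differentiableOn_const 1).sub ((differentiableOn_const _).mul hgdiff)) hden
  have hh0 : h 0 = 0 := by simp [hhdef, hga]
  have hnormSq : ∀ w ∈ ball (0:ℂ) 1,
      Complex.normSq (g w - a) ≤ Complex.normSq (1 - (starRingEnd ℂ) a * g w) := by
    intro w hw
    have e1 : Complex.normSq (g w - a)
        = Complex.normSq (g w) + Complex.normSq a - 2 * ((starRingEnd ℂ) a * g w).re := by
      rw [Complex.normSq_sub, mul_comm (g w) ((starRingEnd ℂ) a)]
    have e2 : Complex.normSq (1 - (starRingEnd ℂ) a * g w)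
        = 1 + Complex.normSq a * Complex.normSq (g w) - 2 * ((starRingEnd ℂ) a * g w).re := by
      simp only [Complex.normSq_sub, Complex.normSq_one, Complex.normSq_mul,
        Complex.normSq_conj, one_mul, map_mul, Complex.conj_conj, Complex.mul_re,
        Complex.conj_re, Complex.conj_im]
      ring
    have hna : Complex.normSq a < 1 := by
      rw [← Complex.sq_norm]; nlinarith
    have hng : Complex.normSq (g w) ≤ 1 := by
      have := hgle w hw
      rw [← Complex.sq_norm]; nlinarith [norm_nonneg (g w)]
    rw [e1, e2]
    nlinarith [Complex.normSq_nonneg a, Complex.normSq_nonneg (g w)]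
  have hhle : ∀ w ∈ ball (0:ℂ) 1, ‖h w‖ ≤ 1 := by
    intro w hw
    rw [hhdef]
    simp only [norm_div]
    rw [div_le_one (norm_pos_iff.2 (hden w hw))]
    rw [Complex.norm_def, Complex.norm_def]
    exact Real.sqrt_le_sqrt (hnormSq w hw)
  have hschwarzh : ‖h z‖ ≤ ‖z‖ := by
    refine le_of_forall_pos_le_add fun ε hε => ?_
    have hmapsh : Set.MapsTo h (ball (0:ℂ) 1) (ball (h 0) (1 + ε)) := by
      intro w hw
      rw [hh0, mem_ball_zero_iff]
      calc ‖h w‖ ≤ 1 := hhle w hw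
        _ < 1 + ε := by linarith
    have := Complex.dist_le_div_mul_dist_of_mapsTo_ball hhdiff (hmapsh.mono_right ball_subset_closedBall) hz
    rw [hh0] at this
    simp only [dist_zero_right, div_one] at this
    nlinarith
  -- unfold h in hschwarzh
  have hkey : ‖g z - a‖ ≤
      ‖z‖ * ‖1 - (starRingEnd ℂ) a * g z‖ := by
    rw [hhdef] at hschwarzh
    simp only [norm_div] at hschwarzh
    rw [div_le_iff₀ (norm_pos_iff.2 (hden z hz))] at hschwarzh
    linarith [hschwarzh]
  -- square it
  have hsq : Complex.normSq (g z - a)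
      ≤ (‖z‖)^2 * Complex.normSq (1 - (starRingEnd ℂ) a * g z) := by
    have := mul_self_le_mul_self (norm_nonneg (g z - a)) hkey
    rw [mul_mul_mul_comm] at this
    simpa [← Complex.sq_norm, sq] using this
  set u := ‖g z‖
  set α := ‖a‖
  set t := ‖z‖
  set r := ((starRingEnd ℂ) a * g z).re with hrdef
  have hr : r ≤ α * u := by
    calc r ≤ ‖(starRingEnd ℂ) a * g z‖ := Complex.re_le_norm _
      _ = α * u := by rw [norm_mul, Complex.norm_conj]
  have e1 : Complex.normSq (g z - a) = u^2 + α^2 - 2*r := by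
    rw [show u^2 = Complex.normSq (g z) from Complex.sq_norm _,
      show α^2 = Complex.normSq a from Complex.sq_norm _,
      Complex.normSq_sub, mul_comm (g z) ((starRingEnd ℂ) a)]
  have e2 : Complex.normSq (1 - (starRingEnd ℂ) a * g z) = 1 + α^2*u^2 - 2*r := by
    rw [show u^2 = Complex.normSq (g z) from Complex.sq_norm _,
      show α^2 = Complex.normSq a from Complex.sq_norm _, hrdef]
    simp only [Complex.normSq_sub, Complex.normSq_one, Complex.normSq_mul,
      Complex.normSq_conj, one_mul, map_mul, Complex.conj_conj, Complex.mul_re,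
      Complex.conj_re, Complex.conj_im]
    ring
  rw [e1, e2] at hsq
  have hu0 : 0 ≤ u := norm_nonneg _
  have hu1 : u ≤ 1 := hgle z hz
  have hmain : t * u * (1 + α * t) ≤ t * (α + t) :=
    osserman_aux u α t r hu0 ha0 ht0 hu1 halt htz hr hsq
  have hfzabs : ‖f z‖ = t * u := by rw [hfz, norm_mul]
  rw [hfzabs, le_div_iff₀ (by positivity)]
  linarith [hmain]
end

section
/- Let f be a holomorphic mapping of the unit disk U into itself with f(0) = 0, and suppose f extends differentiably to a boundary point b with |b| = 1 and |f(b)| = 1. Then |f'(b)| ≥ 2 / (1 + |f'(0)|). -/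
open Metric Complex Filter

lemma mobius_lower_aux (u w : ℂ) (hu : ‖u‖ < 1) (hw : ‖w‖ < 1) :
    (‖w‖ - ‖u‖) * ‖1 - (starRingEnd ℂ) u * w‖
      ≤ ‖w - u‖ * (1 - ‖u‖ * ‖w‖) := by
  set x := ‖w‖ with hxdef
  set y := ‖u‖ with hydef
  have hx0 : 0 ≤ x := norm_nonneg w
  have hy0 : 0 ≤ y := norm_nonneg u
  have hM0 : 0 ≤ ‖w - u‖ := norm_nonneg _
  have hN0 : 0 ≤ ‖1 - (starRingEnd ℂ) u * w‖ := norm_nonneg _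
  set s : ℝ := ((starRingEnd ℂ) u * w).re with hsdef
  have hs : s ≤ y * x := by
    have := Complex.re_le_norm ((starRingEnd ℂ) u * w)
    rwa [norm_mul, Complex.norm_conj] at this
  have hM2 : ‖w - u‖ ^ 2 = x ^ 2 + y ^ 2 - 2 * s := by
    rw [Complex.sq_norm, Complex.normSq_sub, hxdef, hydef, Complex.sq_norm, Complex.sq_norm,
      hsdef, mul_comm w]
  have hN2 : ‖1 - (starRingEnd ℂ) u * w‖ ^ 2 = 1 - 2 * s + y ^ 2 * x ^ 2 := by
    rw [Complex.sq_norm, Complex.normSq_sub, Complex.normSq_one, map_mul, Complex.normSq_conj,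
      one_mul, Complex.conj_re, hxdef, hydef, Complex.sq_norm, Complex.sq_norm,
      hsdef]
    ring
  rcases le_or_gt x y with hxy | hxy
  · calc (x - y) * ‖1 - (starRingEnd ℂ) u * w‖ ≤ 0 :=
          mul_nonpos_of_nonpos_of_nonneg (by linarith) hN0
      _ ≤ ‖w - u‖ * (1 - y * x) := by
          have : y * x < 1 := by nlinarith
          exact mul_nonneg hM0 (by linarith)
  · have hyx1 : y * x < 1 := by nlinarith
    have hsq : ((x - y) * ‖1 - (starRingEnd ℂ) u * w‖) ^ 2
        ≤ (‖w - u‖ * (1 - y * x)) ^ 2 := by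
      rw [mul_pow, mul_pow, hM2, hN2]
      nlinarith [mul_nonneg (mul_nonneg (sub_nonneg.2 hs)
        (by nlinarith : (0:ℝ) ≤ 1 - x ^ 2)) (by nlinarith : (0:ℝ) ≤ 1 - y ^ 2)]
    have h1 : 0 ≤ (x - y) * ‖1 - (starRingEnd ℂ) u * w‖ :=
      mul_nonneg (by linarith) hN0
    have h2 : 0 ≤ ‖w - u‖ * (1 - y * x) := mul_nonneg hM0 (by linarith)
    nlinarith [hsq, h1, h2]

lemma mobius_lt_one (u w : ℂ) (hu : ‖u‖ < 1) (hw : ‖w‖ < 1) :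
    ‖w - u‖ < ‖1 - (starRingEnd ℂ) u * w‖ := by
  have hsq : ‖w - u‖ ^ 2 < ‖1 - (starRingEnd ℂ) u * w‖ ^ 2 := by
    rw [Complex.sq_norm, Complex.sq_norm, Complex.normSq_sub, Complex.normSq_sub,
      Complex.normSq_one, map_mul, Complex.normSq_conj, one_mul, Complex.conj_re, mul_comm w]
    have hx : Complex.normSq w = ‖w‖ ^ 2 := (Complex.sq_norm w).symm
    have hy : Complex.normSq u = ‖u‖ ^ 2 := (Complex.sq_norm u).symm
    rw [hx, hy]
    nlinarith [mul_pos (by nlinarith [norm_nonneg w] : (0:ℝ) < 1 - ‖w‖ ^ 2)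
      (by nlinarith [norm_nonneg u] : (0:ℝ) < 1 - ‖u‖ ^ 2)]
  exact lt_of_pow_lt_pow_left₀ 2 (norm_nonneg _) hsq

lemma schwarz_pick_zero (g : ℂ → ℂ) (hg : DifferentiableOn ℂ g (ball 0 1))
    (hgb : ∀ z ∈ ball (0:ℂ) 1, ‖g z‖ < 1) (z : ℂ) (hz : z ∈ ball (0:ℂ) 1) :
    ‖g z‖ * (1 + ‖g 0‖ * ‖z‖)
      ≤ ‖g 0‖ + ‖z‖ := by
  set u := g 0 with hudef
  have hu : ‖u‖ < 1 := hgb 0 (mem_ball_self one_pos)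
  set h : ℂ → ℂ := fun w => (g w - u) / (1 - (starRingEnd ℂ) u * g w) with hhdef
  have hden : ∀ w ∈ ball (0:ℂ) 1, 1 - (starRingEnd ℂ) u * g w ≠ 0 := by
    intro w hw hzero
    have h1 : ‖g w - u‖ < ‖1 - (starRingEnd ℂ) u * g w‖ :=
      mobius_lt_one u (g w) hu (hgb w hw)
    rw [hzero, norm_zero] at h1
    exact absurd h1 (not_lt.2 (norm_nonneg _))
  have hdh : DifferentiableOn ℂ h (ball 0 1) := by
    apply DifferentiableOn.div
    · exact hg.sub_const u
    · exact (differentiableOn_const 1).sub ((differentiableOn_const _).mul hg)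
    · exact hden
  have hh0 : h 0 = 0 := by simp [hhdef, hudef]
  have hmaps : Set.MapsTo h (ball (0:ℂ) 1) (ball (0:ℂ) 1) := by
    intro w hw
    rw [mem_ball_zero_iff, hhdef]
    simp only [norm_div]
    rw [div_lt_one (by
      have := mobius_lt_one u (g w) hu (hgb w hw)
      exact lt_of_le_of_lt (norm_nonneg _) this)]
    exact mobius_lt_one u (g w) hu (hgb w hw)
  have hsch : ‖h z‖ ≤ ‖z‖ := by
    apply Complex.norm_le_norm_of_mapsTo_ball hdh (hmaps.mono_right ball_subset_closedBall) hh0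
    rwa [mem_ball_zero_iff] at hz
  -- unpack
  have hDpos : 0 < ‖1 - (starRingEnd ℂ) u * g z‖ :=
    lt_of_le_of_lt (norm_nonneg _) (mobius_lt_one u (g z) hu (hgb z hz))
  have habs : ‖g z - u‖ ≤ ‖z‖ * ‖1 - (starRingEnd ℂ) u * g z‖ := by
    have : ‖h z‖ = ‖g z - u‖ / ‖1 - (starRingEnd ℂ) u * g z‖ := by
      rw [hhdef]; simp [norm_div]
    rw [this, div_le_iff₀ hDpos] at hsch
    linarith [hsch]
  have hlow := mobius_lower_aux u (g z) hu (hgb z hz)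
  have hgz1 : ‖u‖ * ‖g z‖ < 1 := by
    nlinarith [norm_nonneg u, norm_nonneg (g z), hgb z hz]
  -- (|gz| - |u|) * D ≤ |gz - u| * (1 - |u||gz|) ≤ |z| * D * (1 - |u||gz|)
  have step : (‖g z‖ - ‖u‖) * ‖1 - (starRingEnd ℂ) u * g z‖
      ≤ ‖z‖ * ‖1 - (starRingEnd ℂ) u * g z‖
        * (1 - ‖u‖ * ‖g z‖) :=
    le_trans hlow (by nlinarith [norm_nonneg (g z)])
  have final : ‖g z‖ - ‖u‖
      ≤ ‖z‖ * (1 - ‖u‖ * ‖g z‖) := by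
    have := (mul_le_mul_iff_of_pos_right hDpos).mp (by linarith [step] :
      (‖g z‖ - ‖u‖) * ‖1 - (starRingEnd ℂ) u * g z‖
        ≤ (‖z‖ * (1 - ‖u‖ * ‖g z‖))
          * ‖1 - (starRingEnd ℂ) u * g z‖)
    linarith [this]
  nlinarith [final]

theorem osserman_boundary_schwarz (f : ℂ → ℂ)
    (hd : DifferentiableOn ℂ f (ball 0 1))
    (hb : ∀ z ∈ ball (0:ℂ) 1, ‖f z‖ < 1)
    (hf0 : f 0 = 0)
    (b : ℂ) (hbn : ‖b‖ = 1)
    (hdb : DifferentiableAt ℂ f b)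
    (hfb : ‖f b‖ = 1) :
    ‖deriv f b‖ ≥ 2 / (1 + ‖deriv f 0‖) := by
  set a := ‖deriv f 0‖ with hadef
  have ha0 : 0 ≤ a := norm_nonneg _
  have hb0 : b ≠ 0 := by
    intro h; rw [h] at hbn; simp at hbn
  set g : ℂ → ℂ := dslope f 0 with hgdef
  have hgdiff : DifferentiableOn ℂ g (ball 0 1) :=
    (differentiableOn_dslope (isOpen_ball.mem_nhds (mem_ball_self one_pos))).mpr hd
  have hmapsf : Set.MapsTo f (ball (0:ℂ) 1) (ball (f 0) 1) := by
    intro z hz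
    rw [hf0, mem_ball_zero_iff]
    exact hb z hz
  have hgle : ∀ z ∈ ball (0:ℂ) 1, ‖g z‖ ≤ 1 := by
    intro z hz
    have := Complex.norm_dslope_le_div_of_mapsTo_ball hd (hmapsf.mono_right ball_subset_closedBall) hz
    simpa using this
  have hg0 : ‖g 0‖ = a := by rw [hgdef, dslope_same, hadef]
  have hfg : ∀ z : ℂ, f z = z * g z := by
    intro z
    have h1 := sub_smul_dslope f 0 z
    rw [hf0, sub_zero, sub_zero, smul_eq_mul] at h1
    rw [← h1, hgdef]
  have hkey : ∀ z ∈ ball (0:ℂ) 1,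
      ‖g z‖ * (1 + a * ‖z‖) ≤ a + ‖z‖ := by
    by_cases hsup : ∀ z ∈ ball (0:ℂ) 1, ‖g z‖ < 1
    · intro z hz
      have := schwarz_pick_zero g hgdiff hsup z hz
      rwa [hg0] at this
    · push_neg at hsup
      obtain ⟨z₀, hz₀, hz₀1⟩ := hsup
      have heq : ‖g z₀‖ = 1 := le_antisymm (hgle z₀ hz₀) hz₀1
      have hmax : IsMaxOn (norm ∘ g) (ball (0:ℂ) 1) z₀ := by
        intro w hw
        simp only [Function.comp_apply, Set.mem_setOf_eq, heq]
        exact hgle w hw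
      have hconst := Complex.eqOn_of_isPreconnected_of_isMaxOn_norm
        (convex_ball (0:ℂ) 1).isPreconnected isOpen_ball hgdiff hz₀ hmax
      intro z hz
      have h1 : ‖g z‖ = 1 := by
        rw [hconst hz]; simpa using heq
      have h2 : a = 1 := by
        rw [← hg0, hconst (mem_ball_self one_pos)]; simpa using heq
      rw [h1, h2]
      nlinarith [norm_nonneg z]
  -- the radial estimate
  have hrad : ∀ r : ℝ, r ∈ Set.Ioo (0:ℝ) 1 →
      (1 + r) / (1 + a * r)
        ≤ ‖f ((r:ℂ) * b) - f b‖ / ‖(r:ℂ) * b - b‖ := by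
    intro r hr
    obtain ⟨hr0, hr1⟩ := hr
    have hzb : ‖(r:ℂ) * b‖ = r := by
      rw [norm_mul, Complex.norm_real, Real.norm_eq_abs, hbn, mul_one, abs_of_pos hr0]
    have hzball : (r:ℂ) * b ∈ ball (0:ℂ) 1 := by
      rw [mem_ball_zero_iff, hzb]; exact hr1
    have hbz : ‖(r:ℂ) * b - b‖ = 1 - r := by
      have h1 : (r:ℂ) * b - b = ((r - 1 : ℝ) : ℂ) * b := by push_cast; ring
      rw [h1, norm_mul, Complex.norm_real, Real.norm_eq_abs, hbn, mul_one, abs_of_neg (by linarith)]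
      ring
    have hfz : ‖f ((r:ℂ)*b)‖ * (1 + a * r) ≤ r * (a + r) := by
      have h1 := hkey ((r:ℂ)*b) hzball
      rw [hzb] at h1
      have h2 : ‖f ((r:ℂ)*b)‖ = r * ‖g ((r:ℂ)*b)‖ := by
        rw [hfg ((r:ℂ)*b), norm_mul, hzb]
      rw [h2]
      nlinarith [h1]
    have hlow : 1 - ‖f ((r:ℂ)*b)‖ ≤ ‖f ((r:ℂ)*b) - f b‖ := by
      have h1 := norm_sub_norm_le (f b) (f ((r:ℂ)*b))
      rw [norm_sub_rev] at h1
      rw [hfb] at h1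
      exact h1
    rw [hbz, div_le_div_iff₀ (by positivity) (by linarith)]
    have h3 : 0 ≤ 1 + a * r := by positivity
    nlinarith [mul_le_mul_of_nonneg_right hlow h3, hfz]
  -- limits
  have hIoo : Set.Ioo (0:ℝ) 1 ∈ nhdsWithin (1:ℝ) (Set.Iio 1) :=
    Ioo_mem_nhdsLT_of_mem ⟨one_pos, le_rfl⟩
  have L1 : Tendsto (fun r : ℝ => (1 + r) / (1 + a * r)) (nhdsWithin 1 (Set.Iio 1))
      (nhds (2 / (1 + a))) := by
    have hc : ContinuousAt (fun r : ℝ => (1 + r) / (1 + a * r)) 1 := by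
      apply ContinuousAt.div
      · fun_prop
      · fun_prop
      · nlinarith
    have h2 : (fun r : ℝ => (1 + r) / (1 + a * r)) 1 = 2 / (1 + a) := by norm_num
    rw [← h2]
    exact hc.continuousWithinAt.tendsto
  have hslope : Tendsto (slope f b) (nhdsWithin b {b}ᶜ) (nhds (deriv f b)) :=
    hasDerivAt_iff_tendsto_slope.mp hdb.hasDerivAt
  have hpath : Tendsto (fun r : ℝ => (r:ℂ) * b) (nhdsWithin 1 (Set.Iio 1))
      (nhdsWithin b {b}ᶜ) := by
    rw [tendsto_nhdsWithin_iff]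
    constructor
    · have hc : Tendsto (fun r : ℝ => (r:ℂ) * b) (nhds 1) (nhds ((1:ℂ) * b)) := by
        exact (Complex.continuous_ofReal.mul continuous_const).tendsto 1
      rw [one_mul] at hc
      exact hc.mono_left nhdsWithin_le_nhds
    · filter_upwards [self_mem_nhdsWithin] with r hr
      simp only [Set.mem_compl_iff, Set.mem_singleton_iff]
      intro hcon
      have h1 : ((r:ℂ) - 1) * b = 0 := by rw [sub_mul, one_mul, hcon, sub_self]
      rcases mul_eq_zero.mp h1 with h' | h'
      · have : (r:ℂ) = 1 := by
          have := sub_eq_zero.mp h'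
          exact this
        have : r = 1 := by exact_mod_cast this
        exact absurd this (ne_of_lt hr)
      · exact hb0 h'
  have L2 : Tendsto (fun r : ℝ => ‖f ((r:ℂ) * b) - f b‖ / ‖(r:ℂ) * b - b‖)
      (nhdsWithin 1 (Set.Iio 1)) (nhds (‖deriv f b‖)) := by
    have h1 : Tendsto (fun r : ℝ => slope f b ((r:ℂ) * b)) (nhdsWithin 1 (Set.Iio 1))
        (nhds (deriv f b)) := hslope.comp hpath
    have h2 := (continuous_norm.tendsto (deriv f b)).comp h1
    apply h2.congr
    intro r
    simp only [Function.comp_apply]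
    rw [slope_def_field, norm_div]
  have hev : (fun r : ℝ => (1 + r) / (1 + a * r)) ≤ᶠ[nhdsWithin 1 (Set.Iio 1)]
      fun r : ℝ => ‖f ((r:ℂ) * b) - f b‖ / ‖(r:ℂ) * b - b‖ := by
    filter_upwards [hIoo] with r hr using hrad r hr
  exact le_of_tendsto_of_tendsto L1 L2 hev
end

section
/- Let X and Y be complex Banach spaces with open unit balls B_X and B_Y, and let f : B_X → closure(B_Y) be a holomorphic mapping. Then for all z ∈ B_X, ‖f(z)‖ ≤ (‖f(0)‖ + ‖z‖) / (1 + ‖f(0)‖ ‖z‖). -/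
open Metric Complex

lemma mob_sq (u a : ℂ) (hu : ‖u‖ ≤ 1) (ha : ‖a‖ ≤ 1) :
    ‖u + a‖ * (1 + ‖u‖ * ‖a‖) ≤ (‖u‖ + ‖a‖) * ‖1 + (starRingEnd ℂ) a * u‖ := by
  have h1 : 0 ≤ ‖u + a‖ * (1 + ‖u‖ * ‖a‖) := by positivity
  have h2 : 0 ≤ (‖u‖ + ‖a‖) * ‖1 + (starRingEnd ℂ) a * u‖ := by positivity
  rw [← pow_le_pow_iff_left₀ h1 h2 two_ne_zero]
  have e1 : ‖u + a‖ ^ 2 = ‖u‖ ^ 2 + ‖a‖ ^ 2 + 2 * ((starRingEnd ℂ) a * u).re := by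
    simp only [Complex.sq_norm, normSq_add]
    rw [mul_comm ((starRingEnd ℂ) a) u]
  have e2 : ‖1 + (starRingEnd ℂ) a * u‖ ^ 2
      = 1 + (‖a‖ * ‖u‖) ^ 2 + 2 * ((starRingEnd ℂ) a * u).re := by
    simp only [Complex.sq_norm, normSq_add]
    simp [normSq_mul, normSq_conj, normSq_eq_norm_sq, mul_pow]
  have hs : |((starRingEnd ℂ) a * u).re| ≤ ‖a‖ * ‖u‖ := by
    calc |((starRingEnd ℂ) a * u).re| ≤ ‖(starRingEnd ℂ) a * u‖ := Complex.abs_re_le_norm _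
    _ = ‖a‖ * ‖u‖ := by rw [norm_mul, RingHomIsometric.norm_map]
  have hs2 := (abs_le.1 hs).2
  have hu0 : 0 ≤ ‖u‖ := norm_nonneg u
  have ha0 : 0 ≤ ‖a‖ := norm_nonneg a
  have k1 : 0 ≤ 1 - ‖u‖ ^ 2 := by nlinarith
  have k2 : 0 ≤ 1 - ‖a‖ ^ 2 := by nlinarith
  nlinarith [mul_nonneg (mul_nonneg (sub_nonneg.2 hs2) k1) k2, e1, e2]

lemma schwarz_pick (h : ℂ → ℂ) (hd : DifferentiableOn ℂ h (ball 0 1))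
    (hb : ∀ v ∈ ball (0:ℂ) 1, ‖h v‖ ≤ 1) (ha : ‖h 0‖ < 1)
    (w : ℂ) (hw : w ∈ ball (0:ℂ) 1) :
    ‖h w‖ ≤ (‖h 0‖ + ‖w‖) / (1 + ‖h 0‖ * ‖w‖) := by
  set a := h 0 with ha0
  set g : ℂ → ℂ := fun v => (h v - a) / (1 - (starRingEnd ℂ) a * h v) with hg
  have hden : ∀ v ∈ ball (0:ℂ) 1, 1 - (starRingEnd ℂ) a * h v ≠ 0 := by
    intro v hv
    have hlt : ‖(starRingEnd ℂ) a * h v‖ < 1 := by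
      rw [norm_mul, RingHomIsometric.norm_map]
      calc ‖a‖ * ‖h v‖ ≤ ‖a‖ * 1 := mul_le_mul_of_nonneg_left (hb v hv) (norm_nonneg a)
        _ < 1 := by simpa using ha
    intro hc
    rw [sub_eq_zero] at hc
    rw [← hc] at hlt
    simp at hlt
  have hgd : DifferentiableOn ℂ g (ball 0 1) :=
    DifferentiableOn.div (hd.sub (differentiableOn_const a))
      ((differentiableOn_const 1).sub ((differentiableOn_const _).mul hd)) hden
  have hg0 : g 0 = 0 := by simp [hg, ha0]
  have hgb : ∀ v ∈ ball (0:ℂ) 1, ‖g v‖ ≤ 1 := by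
    intro v hv
    rw [hg]
    simp only [norm_div]
    rw [div_le_one (norm_pos_iff.2 (hden v hv))]
    have hbv := hb v hv
    have ha1 : ‖a‖ ≤ 1 := ha.le
    have h1 : 0 ≤ ‖h v - a‖ := norm_nonneg _
    have h2 : 0 ≤ ‖1 - (starRingEnd ℂ) a * h v‖ := norm_nonneg _
    rw [← pow_le_pow_iff_left₀ h1 h2 two_ne_zero]
    have e1 : ‖h v - a‖ ^ 2 = ‖h v‖ ^ 2 + ‖a‖ ^ 2 - 2 * ((starRingEnd ℂ) a * h v).re := by
      simp only [Complex.sq_norm, normSq_sub]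
      rw [mul_comm ((starRingEnd ℂ) a) (h v)]
    have e2 : ‖1 - (starRingEnd ℂ) a * h v‖ ^ 2
        = 1 + (‖a‖ * ‖h v‖) ^ 2 - 2 * ((starRingEnd ℂ) a * h v).re := by
      simp only [Complex.sq_norm, normSq_sub]
      simp [normSq_mul, normSq_conj, normSq_eq_norm_sq, mul_pow]
    have p0 : 0 ≤ ‖h v‖ := norm_nonneg _
    have q0 : 0 ≤ ‖a‖ := norm_nonneg _
    have k1 : 0 ≤ 1 - ‖h v‖ ^ 2 := by nlinarith
    have k2 : 0 ≤ 1 - ‖a‖ ^ 2 := by nlinarith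
    nlinarith [mul_nonneg k1 k2, e1, e2]
  have hsch : ‖g w‖ ≤ ‖w‖ := by
    apply le_of_forall_pos_le_add
    intro ε hε
    have hmaps : Set.MapsTo g (ball 0 1) (ball (g 0) (1 + ε)) := by
      intro v hv
      rw [hg0, mem_ball, dist_zero_right]
      exact lt_of_le_of_lt (hgb v hv) (by linarith)
    have hdist := Complex.dist_le_div_mul_dist_of_mapsTo_ball hgd (hmaps.mono_right ball_subset_closedBall) hw
    rw [hg0, dist_zero_right, dist_zero_right, div_one] at hdist
    have hw1 : ‖w‖ ≤ 1 := (mem_ball_zero_iff.1 hw).le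
    nlinarith
  have key : g w * (1 - (starRingEnd ℂ) a * h w) = h w - a :=
    div_mul_cancel₀ _ (hden w hw)
  have hw' : h w * (1 + (starRingEnd ℂ) a * g w) = g w + a := by linear_combination -key
  have hltg : ‖(starRingEnd ℂ) a * g w‖ < 1 := by
    rw [norm_mul, RingHomIsometric.norm_map]
    calc ‖a‖ * ‖g w‖ ≤ ‖a‖ * 1 := mul_le_mul_of_nonneg_left (hgb w hw) (norm_nonneg a)
      _ < 1 := by simpa using ha
  have hne : 1 + (starRingEnd ℂ) a * g w ≠ 0 := by
    intro hc
    have hm1 : (starRingEnd ℂ) a * g w = -1 := by linear_combination hc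
    rw [hm1] at hltg
    simp at hltg
  have hden2 : (0:ℝ) < ‖1 + (starRingEnd ℂ) a * g w‖ := norm_pos_iff.2 hne
  have hnorm : ‖h w‖ * ‖1 + (starRingEnd ℂ) a * g w‖ = ‖g w + a‖ := by
    rw [← norm_mul, hw']
  have mob := mob_sq (g w) a (hgb w hw) ha.le
  have step1 : ‖h w‖ ≤ (‖g w‖ + ‖a‖) / (1 + ‖g w‖ * ‖a‖) := by
    rw [le_div_iff₀ (by positivity), ← mul_le_mul_iff_of_pos_right hden2]
    calc ‖h w‖ * (1 + ‖g w‖ * ‖a‖) * ‖1 + (starRingEnd ℂ) a * g w‖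
        = ‖g w + a‖ * (1 + ‖g w‖ * ‖a‖) := by rw [← hnorm]; ring
      _ ≤ (‖g w‖ + ‖a‖) * ‖1 + (starRingEnd ℂ) a * g w‖ := mob
  have step2 : (‖g w‖ + ‖a‖) / (1 + ‖g w‖ * ‖a‖) ≤ (‖a‖ + ‖w‖) / (1 + ‖a‖ * ‖w‖) := by
    rw [div_le_div_iff₀ (by positivity) (by positivity)]
    have hq2 : 0 ≤ 1 - ‖a‖ ^ 2 := by nlinarith [norm_nonneg a, ha.le]
    nlinarith [mul_nonneg (sub_nonneg.2 hsch) hq2, norm_nonneg (g w), norm_nonneg a, norm_nonneg w]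
  exact step1.trans step2


theorem schwarz_banach_closure {X Y : Type*}
    [NormedAddCommGroup X] [NormedSpace ℂ X] [CompleteSpace X]
    [NormedAddCommGroup Y] [NormedSpace ℂ Y] [CompleteSpace Y]
    (f : X → Y)
    (hd : DifferentiableOn ℂ f (ball 0 1))
    (hb : ∀ z ∈ ball (0:X) 1, ‖f z‖ ≤ 1)
    (z : X) (hz : z ∈ ball (0:X) 1) :
    ‖f z‖ ≤ (‖f 0‖ + ‖z‖) / (1 + ‖f 0‖ * ‖z‖) := by
  rcases eq_or_ne z 0 with rfl | hz0
  · simp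
  have hz1 : ‖z‖ < 1 := mem_ball_zero_iff.1 hz
  have hzpos : (0:ℝ) < ‖z‖ := norm_pos_iff.2 hz0
  have hf0 : ‖f 0‖ ≤ 1 := hb 0 (by simp)
  rcases lt_or_eq_of_le hf0 with hf1 | hf1
  · rcases eq_or_ne (f z) 0 with hfz | hfz
    · rw [hfz]; simp only [norm_zero]; positivity
    obtain ⟨φ, hφ1, hφ2⟩ := exists_dual_vector ℂ (f z) (norm_ne_zero_iff.2 hfz)
    set u : X := ((‖z‖ : ℂ))⁻¹ • z with hu_def
    have hu : ‖u‖ = 1 := by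
      rw [hu_def, norm_smul, norm_inv, Complex.norm_real, Real.norm_eq_abs,
        _root_.abs_of_nonneg (norm_nonneg z)]
      field_simp
    set s : ℂ → X := fun lam => lam • u with hs_def
    have hsmaps : Set.MapsTo s (ball 0 1) (ball (0:X) 1) := by
      intro lam hlam
      rw [mem_ball_zero_iff, hs_def]
      simp only
      rw [norm_smul, hu, mul_one]
      exact mem_ball_zero_iff.1 hlam
    set h : ℂ → ℂ := fun lam => φ (f (s lam)) with hh_def
    have hhd : DifferentiableOn ℂ h (ball 0 1) := by
      apply (φ.differentiable.comp_differentiableOn)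
      exact hd.comp ((differentiable_id.smul_const u).differentiableOn) hsmaps
    have hhb : ∀ v ∈ ball (0:ℂ) 1, ‖h v‖ ≤ 1 := by
      intro v hv
      calc ‖h v‖ ≤ ‖φ‖ * ‖f (s v)‖ := φ.le_opNorm _
        _ ≤ 1 * 1 := by
            apply mul_le_mul (le_of_eq hφ1) (hb _ (hsmaps hv)) (norm_nonneg _) zero_le_one
        _ = 1 := one_mul 1
    have hs0 : s 0 = 0 := by simp [hs_def]
    have hh0 : h 0 = φ (f 0) := by rw [hh_def]; simp [hs0]
    have hh0le : ‖h 0‖ ≤ ‖f 0‖ := by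
      rw [hh0]
      calc ‖φ (f 0)‖ ≤ ‖φ‖ * ‖f 0‖ := φ.le_opNorm _
        _ = ‖f 0‖ := by rw [hφ1, one_mul]
    have hh0lt : ‖h 0‖ < 1 := lt_of_le_of_lt hh0le hf1
    have hwmem : ((‖z‖ : ℂ)) ∈ ball (0:ℂ) 1 := by
      rw [mem_ball_zero_iff, Complex.norm_real, Real.norm_eq_abs,
        _root_.abs_of_nonneg (norm_nonneg z)]
      exact hz1
    have hsz : s ((‖z‖ : ℂ)) = z := by
      rw [hs_def]
      simp only
      rw [hu_def, smul_smul, mul_inv_cancel₀ (by exact_mod_cast hzpos.ne'), one_smul]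
    have hval : ‖h ((‖z‖ : ℂ))‖ = ‖f z‖ := by
      rw [hh_def]
      simp only
      rw [hsz, hφ2]
      simp
    have main := schwarz_pick h hhd hhb hh0lt _ hwmem
    rw [hval, Complex.norm_real, Real.norm_eq_abs,
      _root_.abs_of_nonneg (norm_nonneg z)] at main
    refine main.trans ?_
    rw [div_le_div_iff₀ (by positivity) (by positivity)]
    have k1 : 0 ≤ 1 - ‖z‖ ^ 2 := by nlinarith [norm_nonneg z]
    nlinarith [mul_nonneg (sub_nonneg.2 hh0le) k1, norm_nonneg (h 0), norm_nonneg (f 0)]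
  · rw [hf1, one_mul, div_self (by positivity)]
    exact hb z hz
end

section
/- Let X and Y be complex Banach spaces with open unit balls B_X and B_Y, and let f : B_X → B_Y be a holomorphic mapping with f(0) = 0. Then for all z ∈ B_X, ‖f(z)‖ ≤ ‖z‖ (‖Df(0)‖ + ‖z‖) / (1 + ‖Df(0)‖ ‖z‖), and in particular ‖f(z)‖ ≤ ‖z‖. -/
open Metric Complex Set

lemma real_key (a t s r : ℝ) (ha : 0 ≤ a) (ha1 : a ≤ 1) (ht : 0 ≤ t) (ht1 : t < 1)
    (hs : 0 ≤ s) (hr : r ≤ a * s)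
    (h : s ^ 2 - 2 * r + a ^ 2 ≤ t ^ 2 * (1 - 2 * r + a ^ 2 * s ^ 2)) :
    s * (1 + a * t) ≤ a + t := by
  have hat : 0 < 1 - a * t := by nlinarith
  have ht2 : (0:ℝ) ≤ 1 - t ^ 2 := by nlinarith
  have h2 : s ^ 2 * (1 - a ^ 2 * t ^ 2) ≤ t ^ 2 - a ^ 2 + 2 * (1 - t ^ 2) * (a * s) := by
    nlinarith [mul_nonneg ht2 (sub_nonneg.2 hr)]
  by_cases h3 : 0 < s * (1 - a * t) + (t - a)
  · nlinarith
  · push_neg at h3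
    have hs1 : s ≤ 1 := by nlinarith
    have has : a * s ≤ 1 := by nlinarith
    nlinarith [mul_nonneg ht (sub_nonneg.2 has)]

lemma complex_key (c ζ : ℂ) (t : ℝ) (hc : ‖c‖ ≤ 1) (ht : 0 ≤ t) (ht1 : t < 1)
    (h : ‖ζ - c‖ ≤ t * ‖1 - (starRingEnd ℂ) c * ζ‖) :
    ‖ζ‖ * (1 + ‖c‖ * t) ≤ ‖c‖ + t := by
  set a := ‖c‖ with ha_def
  set s := ‖ζ‖ with hs_def
  set r := ((starRingEnd ℂ) c * ζ).re with hr_def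
  have hr : r ≤ a * s := by
    calc r ≤ ‖(starRingEnd ℂ) c * ζ‖ := Complex.re_le_norm _
    _ = a * s := by rw [norm_mul, Complex.norm_conj]
  have hsq : normSq (ζ - c) ≤ t ^ 2 * normSq (1 - (starRingEnd ℂ) c * ζ) := by
    have := mul_self_le_mul_self (norm_nonneg _) h
    rw [← Complex.sq_norm, ← Complex.sq_norm] at *
    nlinarith [norm_nonneg (ζ - c), norm_nonneg (1 - (starRingEnd ℂ) c * ζ)]
  have e1 : normSq (ζ - c) = s ^ 2 - 2 * r + a ^ 2 := by
    rw [Complex.normSq_sub, ← Complex.sq_norm, ← Complex.sq_norm]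
    have : (ζ * (starRingEnd ℂ) c).re = r := by rw [mul_comm]
    linarith
  have e2 : normSq (1 - (starRingEnd ℂ) c * ζ) = 1 - 2 * r + a ^ 2 * s ^ 2 := by
    rw [Complex.normSq_sub, Complex.normSq_one, Complex.normSq_mul, Complex.normSq_conj,
      ← Complex.sq_norm, ← Complex.sq_norm, one_mul]
    have : ((starRingEnd ℂ) ((starRingEnd ℂ) c * ζ)).re = r := Complex.conj_re _
    linarith
  rw [e1, e2] at hsq
  exact real_key a t s r (norm_nonneg c) hc ht ht1 (norm_nonneg ζ) hr hsq

lemma mobius_lt (c ζ : ℂ) (hc : ‖c‖ < 1) (hζ : ‖ζ‖ < 1) :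
    ‖ζ - c‖ < ‖1 - (starRingEnd ℂ) c * ζ‖ := by
  have h1 : normSq (ζ - c) < normSq (1 - (starRingEnd ℂ) c * ζ) := by
    rw [Complex.normSq_sub, Complex.normSq_sub, Complex.normSq_one, Complex.normSq_mul,
      Complex.normSq_conj]
    have e : ((1:ℂ) * (starRingEnd ℂ) ((starRingEnd ℂ) c * ζ)).re = (ζ * (starRingEnd ℂ) c).re := by
      rw [one_mul, Complex.conj_re, mul_comm]
    rw [e]
    have h2 : normSq c < 1 := by rw [← Complex.sq_norm]; nlinarith [norm_nonneg c]
    have h3 : normSq ζ < 1 := by rw [← Complex.sq_norm]; nlinarith [norm_nonneg ζ]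
    nlinarith [normSq_nonneg c, normSq_nonneg ζ]
  have := Real.sqrt_lt_sqrt (normSq_nonneg _) h1
  rwa [← Complex.norm_def, ← Complex.norm_def] at this

lemma slice_props {X Y : Type*}
    [NormedAddCommGroup X] [NormedSpace ℂ X]
    [NormedAddCommGroup Y] [NormedSpace ℂ Y]
    (f : X → Y)
    (hd : DifferentiableOn ℂ f (ball 0 1))
    (hb : ∀ z ∈ ball (0:X) 1, ‖f z‖ < 1)
    (hf0 : f 0 = 0)
    {u : X} (hu : ‖u‖ = 1) :
    DifferentiableOn ℂ (fun w : ℂ => f (w • u)) (ball 0 1) ∧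
    MapsTo (fun w : ℂ => f (w • u)) (ball 0 1) (ball (0:Y) 1) ∧
    HasDerivAt (fun w : ℂ => f (w • u)) (fderiv ℂ f 0 u) 0 := by
  have hmem : ∀ w : ℂ, w ∈ ball (0:ℂ) 1 → w • u ∈ ball (0:X) 1 := by
    intro w hw
    rw [mem_ball_zero_iff] at hw ⊢
    rw [norm_smul, hu, mul_one]
    exact hw
  have hsm : Differentiable ℂ (fun w : ℂ => w • u) := fun w =>
    ((hasDerivAt_id w).smul_const u).differentiableAt
  refine ⟨hd.comp hsm.differentiableOn hmem, ?_, ?_⟩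
  · intro w hw
    rw [mem_ball_zero_iff]
    exact hb _ (hmem w hw)
  · have hfd : DifferentiableAt ℂ f 0 :=
      hd.differentiableAt (isOpen_ball.mem_nhds (mem_ball_self one_pos))
    have h1 : HasDerivAt (fun w : ℂ => w • u) ((1:ℂ) • u) 0 := (hasDerivAt_id 0).smul_const u
    rw [one_smul] at h1
    have h2 : HasFDerivAt f (fderiv ℂ f 0) ((0:ℂ) • u) := by
      rw [zero_smul]; exact hfd.hasFDerivAt
    exact h2.comp_hasDerivAt 0 h1
set_option maxHeartbeats 1000000 in
theorem schwarz_banach_fixed_origin {X Y : Type*}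
    [NormedAddCommGroup X] [NormedSpace ℂ X] [CompleteSpace X]
    [NormedAddCommGroup Y] [NormedSpace ℂ Y] [CompleteSpace Y]
    (f : X → Y)
    (hd : DifferentiableOn ℂ f (ball 0 1))
    (hb : ∀ z ∈ ball (0:X) 1, ‖f z‖ < 1)
    (hf0 : f 0 = 0)
    (z : X) (hz : z ∈ ball (0:X) 1) :
    ‖f z‖ ≤ ‖z‖ * (‖fderiv ℂ f 0‖ + ‖z‖) / (1 + ‖fderiv ℂ f 0‖ * ‖z‖) ∧ ‖f z‖ ≤ ‖z‖ := by
  set a : ℝ := ‖fderiv ℂ f 0‖ with ha_def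
  have ha0 : 0 ≤ a := norm_nonneg _
  rcases eq_or_ne z 0 with rfl | hz0
  · simp [hf0]
  -- basic facts about z
  set t : ℝ := ‖z‖ with ht_def
  have ht0 : 0 < t := norm_pos_iff.2 hz0
  have ht1 : t < 1 := by rwa [mem_ball_zero_iff] at hz
  have htC : ((t:ℂ)) ≠ 0 := by exact_mod_cast ht0.ne'
  have tball : ((t:ℂ)) ∈ ball (0:ℂ) 1 := by
    rw [mem_ball_zero_iff, Complex.norm_real, Real.norm_of_nonneg ht0.le]
    exact ht1
  -- the unit vector and the slice
  set u : X := ((t:ℂ))⁻¹ • z with hu_def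
  have hu : ‖u‖ = 1 := by
    rw [hu_def, norm_smul, norm_inv, Complex.norm_real, norm_norm, ← ht_def,
      inv_mul_cancel₀ ht0.ne']
  have htu : ((t:ℂ)) • u = z := smul_inv_smul₀ htC z
  obtain ⟨gdiff, gmaps, gderiv⟩ := slice_props f hd hb hf0 hu
  set g : ℂ → Y := fun w => f (w • u) with hg_def
  have hg0 : g 0 = 0 := by rw [hg_def]; simp [hf0]
  have gmaps' : Set.MapsTo g (ball 0 1) (ball (g 0) 1) := by rwa [hg0]
  have hgt : g ((t:ℂ)) = f z := by rw [hg_def]; simp only [htu]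
  -- Part 2 : ‖f z‖ ≤ ‖z‖
  have part2 : ‖f z‖ ≤ t := by
    have := Complex.dist_le_div_mul_dist_of_mapsTo_ball gdiff (gmaps'.mono_right ball_subset_closedBall) tball
    rw [hgt, hg0, dist_zero_right, dist_zero_right, Complex.norm_real,
      Real.norm_of_nonneg ht0.le, one_div_one, one_mul] at this
    exact this
  -- ‖fderiv ℂ f 0‖ ≤ 1
  have hDle : a ≤ 1 := by
    refine ContinuousLinearMap.opNorm_le_bound _ zero_le_one fun x => ?_
    rcases eq_or_ne x 0 with rfl | hx0
    · simp
    have hxt : (((‖x‖:ℝ):ℂ)) ≠ 0 := by exact_mod_cast (norm_pos_iff.2 hx0).ne'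
    set v : X := (((‖x‖:ℝ):ℂ))⁻¹ • x with hv_def
    have hv : ‖v‖ = 1 := by
      rw [hv_def, norm_smul, norm_inv, Complex.norm_real, norm_norm,
        inv_mul_cancel₀ (norm_pos_iff.2 hx0).ne']
    obtain ⟨gdx, gmx, gdvx⟩ := slice_props f hd hb hf0 hv
    have hg0x : (fun w : ℂ => f (w • v)) 0 = 0 := by simp [hf0]
    have hder := Complex.norm_deriv_le_div_of_mapsTo_ball gdx (by rw [zero_smul, hf0]; exact gmx.mono_right ball_subset_closedBall) one_pos
    rw [gdvx.deriv, div_one] at hder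
    have hxv : (((‖x‖:ℝ):ℂ)) • v = x := smul_inv_smul₀ hxt x
    calc ‖(fderiv ℂ f 0) x‖ = ‖(fderiv ℂ f 0) ((((‖x‖:ℝ):ℂ)) • v)‖ := by rw [hxv]
      _ = ‖x‖ * ‖(fderiv ℂ f 0) v‖ := by
          rw [map_smul, norm_smul, Complex.norm_real, norm_norm]
      _ ≤ 1 * ‖x‖ := by rw [one_mul]; nlinarith [norm_nonneg x]
  -- trivial case f z = 0
  rcases eq_or_ne (f z) 0 with hfz | hfz
  · constructor
    · rw [hfz, norm_zero]; positivity
    · rw [hfz, norm_zero]; exact ht0.le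
  -- dual functional
  obtain ⟨ℓ, hℓ1, hℓfz⟩ := exists_dual_vector ℂ (f z) (norm_ne_zero_iff.2 hfz)
  set h : ℂ → ℂ := fun w => ℓ (g w) with hh_def
  have hdiff : DifferentiableOn ℂ h (ball 0 1) :=
    ℓ.differentiable.comp_differentiableOn gdiff
  have hh0 : h 0 = 0 := by rw [hh_def]; simp [hg0]
  have hmaps : Set.MapsTo h (ball 0 1) (ball (h 0) 1) := by
    rw [hh0]
    intro w hw
    rw [mem_ball_zero_iff]
    calc ‖ℓ (g w)‖ ≤ ‖ℓ‖ * ‖g w‖ := ℓ.le_opNorm _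
      _ < 1 := by
          rw [hℓ1, one_mul]
          exact mem_ball_zero_iff.1 (gmaps hw)
  have hderiv : HasDerivAt h (ℓ ((fderiv ℂ f 0) u)) 0 :=
    ℓ.hasFDerivAt.comp_hasDerivAt 0 gderiv
  set k : ℂ → ℂ := dslope h 0 with hk_def
  have hk0 : k 0 = ℓ ((fderiv ℂ f 0) u) := by
    rw [hk_def, dslope_same]; exact hderiv.deriv
  have hkbound : ∀ w ∈ ball (0:ℂ) 1, ‖k w‖ ≤ 1 := fun w hw => by
    have := Complex.norm_dslope_le_div_of_mapsTo_ball hdiff (hmaps.mono_right ball_subset_closedBall) hw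
    rwa [div_one] at this
  have hkdiff : DifferentiableOn ℂ k (ball 0 1) :=
    (differentiableOn_dslope (isOpen_ball.mem_nhds (mem_ball_self one_pos))).mpr hdiff
  set a' : ℝ := ‖k 0‖ with ha'_def
  have ha'le : a' ≤ a := by
    rw [ha'_def, hk0]
    calc ‖ℓ ((fderiv ℂ f 0) u)‖ ≤ ‖ℓ‖ * ‖(fderiv ℂ f 0) u‖ := ℓ.le_opNorm _
      _ ≤ 1 * (a * ‖u‖) := by
          rw [hℓ1]
          exact mul_le_mul_of_nonneg_left ((fderiv ℂ f 0).le_opNorm u) zero_le_one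
      _ = a := by rw [hu, mul_one, one_mul]
  have ha'1 : a' ≤ 1 := by
    have := hkbound 0 (mem_ball_self one_pos)
    exact this
  -- the key bound on k at t
  have key : ‖k ((t:ℂ))‖ * (1 + a' * t) ≤ a' + t := by
    by_cases hA : ∃ w ∈ ball (0:ℂ) 1, 1 ≤ ‖k w‖
    · obtain ⟨w₀, hw₀, h1le⟩ := hA
      have hmax : IsMaxOn (norm ∘ k) (ball 0 1) w₀ := fun w hw =>
        le_trans (hkbound w hw) h1le
      have heq := Complex.eqOn_of_isPreconnected_of_isMaxOn_norm
        (convex_ball (0:ℂ) 1).isPreconnected isOpen_ball hkdiff hw₀ hmax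
      have e1 : k ((t:ℂ)) = k w₀ := heq tball
      have e2 : k 0 = k w₀ := heq (mem_ball_self one_pos)
      rw [e1, ← e2, ← ha'_def]
      nlinarith [mul_nonneg (mul_nonneg ht0.le (sub_nonneg.2 ha'1))
        (by nlinarith [norm_nonneg (k 0)] : (0:ℝ) ≤ 1 + a')]
    · push_neg at hA
      have ha'lt : a' < 1 := by
        have := hA 0 (mem_ball_self one_pos)
        exact this
      set F : ℂ → ℂ := fun w => (k w - k 0) / (1 - (starRingEnd ℂ) (k 0) * k w) with hF_def
      have hden : ∀ w ∈ ball (0:ℂ) 1, 1 - (starRingEnd ℂ) (k 0) * k w ≠ 0 := by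
        intro w hw heq0
        have h1 : (1:ℂ) = (starRingEnd ℂ) (k 0) * k w := by
          rw [← sub_eq_zero]; exact heq0
        have h2 : (1:ℝ) = a' * ‖k w‖ := by
          calc (1:ℝ) = ‖(1:ℂ)‖ := by simp
            _ = ‖(starRingEnd ℂ) (k 0) * k w‖ := by rw [← h1]
            _ = a' * ‖k w‖ := by rw [norm_mul, Complex.norm_conj]
        have h3 : ‖k w‖ < 1 := by
          exact hA w hw
        nlinarith [norm_nonneg (k w), norm_nonneg (k 0)]
      have hFdiff : DifferentiableOn ℂ F (ball 0 1) := by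
        refine DifferentiableOn.div (hkdiff.sub_const _) ?_ hden
        exact (differentiableOn_const _).sub ((differentiableOn_const _).mul hkdiff)
      have hF0 : F 0 = 0 := by rw [hF_def]; simp
      have hFmaps : Set.MapsTo F (ball 0 1) (ball (F 0) 1) := by
        rw [hF0]
        intro w hw
        rw [mem_ball_zero_iff, hF_def, norm_div]
        have hdpos : 0 < ‖1 - (starRingEnd ℂ) (k 0) * k w‖ :=
          norm_pos_iff.2 (hden w hw)
        rw [div_lt_one hdpos]
        exact mobius_lt (k 0) (k w) ha'lt (hA w hw)
      have hFt := Complex.dist_le_div_mul_dist_of_mapsTo_ball hFdiff (hFmaps.mono_right ball_subset_closedBall) tball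
      rw [hF0, dist_zero_right, dist_zero_right, Complex.norm_real,
        Real.norm_of_nonneg ht0.le, one_div_one, one_mul, hF_def] at hFt
      have hdpos : 0 < ‖1 - (starRingEnd ℂ) (k 0) * k ((t:ℂ))‖ :=
        norm_pos_iff.2 (hden _ tball)
      rw [norm_div, div_le_iff₀ hdpos] at hFt
      exact complex_key (k 0) (k ((t:ℂ))) t ha'1 ht0.le ht1 hFt
  -- relate ‖f z‖ to k t
  have hfz_eq : ‖f z‖ = t * ‖k ((t:ℂ))‖ := by
    have hkt : k ((t:ℂ)) = h ((t:ℂ)) / ((t:ℂ)) := by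
      rw [hk_def, dslope_of_ne h htC, slope_def_field, hh0, sub_zero, sub_zero]
    have hht : h ((t:ℂ)) = ((‖f z‖:ℝ):ℂ) := by
      rw [hh_def]; simp only [hgt]; exact hℓfz
    rw [hkt, norm_div, hht, Complex.norm_real, Complex.norm_real,
      Real.norm_of_nonneg (norm_nonneg _), Real.norm_of_nonneg ht0.le]
    field_simp
  -- conclude
  have ha'0 : 0 ≤ a' := norm_nonneg _
  set s : ℝ := ‖k ((t:ℂ))‖ with hs_def
  have hs0 : 0 ≤ s := norm_nonneg _
  have hpos' : 0 < 1 + a' * t := add_pos_of_pos_of_nonneg one_pos (mul_nonneg ha'0 ht0.le)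
  have hpos : 0 < 1 + a * t := add_pos_of_pos_of_nonneg one_pos (mul_nonneg ha0 ht0.le)
  clear_value s a' a t
  refine ⟨?_, part2⟩
  rw [le_div_iff₀ hpos, hfz_eq]
  have H1 : 0 ≤ ((a' + t) - s * (1 + a' * t)) * (1 + a * t) :=
    mul_nonneg (by linarith) hpos.le
  have H2 : 0 ≤ (a - a') * (1 - t ^ 2) :=
    mul_nonneg (by linarith) (by nlinarith)
  nlinarith [mul_pos hpos hpos']
end

section
/- Let X and Y be complex Banach spaces with open unit balls B_X, B_Y, and let f : B_X → B_Y be holomorphic with f(0) = 0. Suppose b ∈ ∂B_X is such that the radial derivative Df(b)b = lim_{r→1⁻} (f(rb) − f(b))/(r − 1) exists and ‖f(b)‖ = 1 (where f(b) = lim_{r→1⁻} f(rb)). Then ‖Df(b)b‖ ≥ 2 / (1 + ‖Df(0)‖). -/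
open Metric Filter Topology
open Set

private lemma mobius_norm_le_one (a u : ℂ) (ha : ‖a‖ ≤ 1) (hu : ‖u‖ ≤ 1) :
    ‖u - a‖ ≤ ‖1 - (starRingEnd ℂ) a * u‖ := by
  rw [← pow_le_pow_iff_left₀ (norm_nonneg _) (norm_nonneg _) two_ne_zero,
    Complex.sq_norm, Complex.sq_norm]
  have h1 : Complex.normSq (1 - (starRingEnd ℂ) a * u) - Complex.normSq (u - a)
      = (1 - Complex.normSq a) * (1 - Complex.normSq u) := by
    simp only [Complex.normSq_apply, Complex.sub_re, Complex.sub_im, Complex.mul_re,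
      Complex.mul_im, Complex.one_re, Complex.one_im, Complex.conj_re, Complex.conj_im]
    ring
  have h2 : Complex.normSq a ≤ 1 := by
    rw [Complex.normSq_eq_norm_sq]; nlinarith [norm_nonneg a]
  have h3 : Complex.normSq u ≤ 1 := by
    rw [Complex.normSq_eq_norm_sq]; nlinarith [norm_nonneg u]
  nlinarith [h1, h2, h3]

private lemma mobius_norm_bound (a u : ℂ) (r : ℝ) (ha : ‖a‖ ≤ 1) (hu : ‖u‖ ≤ r) (hr : r ≤ 1) :
    ‖u + a‖ * (1 + ‖a‖ * r) ≤ (‖a‖ + r) * ‖1 + (starRingEnd ℂ) a * u‖ := by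
  have hα : (0:ℝ) ≤ ‖a‖ := norm_nonneg a
  have hs : (0:ℝ) ≤ ‖u‖ := norm_nonneg u
  have hr0 : (0:ℝ) ≤ r := hs.trans hu
  have na : ‖a‖^2 = a.re^2 + a.im^2 := by
    rw [Complex.sq_norm, Complex.normSq_apply]; ring
  have nu : ‖u‖^2 = u.re^2 + u.im^2 := by
    rw [Complex.sq_norm, Complex.normSq_apply]; ring
  have ht : (u * (starRingEnd ℂ) a).re ≤ ‖u‖ * ‖a‖ := by
    calc (u * (starRingEnd ℂ) a).re ≤ ‖u * (starRingEnd ℂ) a‖ := Complex.re_le_norm _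
    _ = ‖u‖ * ‖a‖ := by rw [norm_mul, RCLike.norm_conj]
  have e1 : ‖u + a‖ ^ 2 = ‖u‖^2 + ‖a‖^2 + 2 * (u * (starRingEnd ℂ) a).re := by
    rw [Complex.sq_norm (u + a), na, nu]
    simp only [Complex.normSq_apply, Complex.add_re, Complex.add_im, Complex.mul_re,
      Complex.mul_im, Complex.conj_re, Complex.conj_im]
    ring
  have e2 : ‖1 + (starRingEnd ℂ) a * u‖ ^ 2
      = 1 + ‖a‖^2 * ‖u‖^2 + 2 * (u * (starRingEnd ℂ) a).re := by
    rw [Complex.sq_norm (1 + (starRingEnd ℂ) a * u), na, nu]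
    simp only [Complex.normSq_apply, Complex.add_re, Complex.add_im, Complex.mul_re,
      Complex.mul_im, Complex.one_re, Complex.one_im, Complex.conj_re, Complex.conj_im]
    ring
  rw [← pow_le_pow_iff_left₀ (by positivity) (by positivity) two_ne_zero, mul_pow, mul_pow, e1, e2]
  set s := ‖u‖
  set α := ‖a‖
  set t := (u * (starRingEnd ℂ) a).re
  have ht' : t ≤ α * s := by rw [mul_comm]; exact ht
  have p1 : (0:ℝ) ≤ 1 - α^2 := by nlinarith
  have p2 : (0:ℝ) ≤ 1 - r^2 := by nlinarith
  have key : (1 + α*r)^2 - (α+r)^2 = (1-α^2)*(1-r^2) := by ring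
  have h1 : 0 ≤ (α * s - t) * ((1 + α*r)^2 - (α + r)^2) := by
    apply mul_nonneg (sub_nonneg.2 ht')
    rw [key]; exact mul_nonneg p1 p2
  have h2 : 0 ≤ ((r - s) * (1 - α^2)) * ((α + r) * (1 + α*s) + (s + α) * (1 + α*r)) := by
    apply mul_nonneg (mul_nonneg (sub_nonneg.2 hu) p1)
    have : (0:ℝ) ≤ α*s := mul_nonneg hα hs
    have : (0:ℝ) ≤ α*r := mul_nonneg hα hr0
    nlinarith
  nlinarith [h1, h2]

private lemma schwarz_norm_le' (F : ℂ → ℂ) (hdF : DifferentiableOn ℂ F (ball 0 1)) (h0 : F 0 = 0)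
    (hle : ∀ w ∈ ball (0:ℂ) 1, ‖F w‖ ≤ 1) {z : ℂ} (hz : z ∈ ball (0:ℂ) 1) : ‖F z‖ ≤ ‖z‖ := by
  rcases eq_or_ne z 0 with rfl | hz0
  · simp [h0]
  have hz' : 0 < ‖z‖ := norm_pos_iff.2 hz0
  have hs : ∀ s : ℝ, 1 < s → ‖F z‖ ≤ s * ‖z‖ := by
    intro s hs1
    have hmaps : MapsTo F (ball 0 1) (ball (F 0) s) := by
      intro w hw
      rw [h0, mem_ball, dist_zero_right]
      exact lt_of_le_of_lt (hle w hw) hs1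
    have hds := Complex.norm_dslope_le_div_of_mapsTo_ball hdF (hmaps.mono_right ball_subset_closedBall) hz
    rw [dslope_of_ne _ hz0, slope_def_field, h0, sub_zero, sub_zero, div_one] at hds
    rw [norm_div] at hds
    calc ‖F z‖ = ‖F z‖ / ‖z‖ * ‖z‖ := (div_mul_cancel₀ _ hz'.ne').symm
    _ ≤ s * ‖z‖ := by gcongr
  refine le_of_forall_gt_imp_ge_of_dense fun c hc => ?_
  have h1 : 1 < c / ‖z‖ := (one_lt_div hz').2 hc
  have := hs _ h1
  rwa [div_mul_cancel₀ _ hz'.ne'] at this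

private lemma one_dim_bound (h : ℂ → ℂ) (hdh : DifferentiableOn ℂ h (ball 0 1)) (h0 : h 0 = 0)
    (hlt : ∀ z ∈ ball (0:ℂ) 1, ‖h z‖ < 1) (r : ℝ) (hr0 : 0 < r) (hr1 : r < 1) :
    ‖h r‖ * (1 + ‖deriv h 0‖ * r) ≤ r * (‖deriv h 0‖ + r) := by
  set g := dslope h 0 with hg
  have hg_diff : DifferentiableOn ℂ g (ball 0 1) :=
    (Complex.differentiableOn_dslope (ball_mem_nhds 0 one_pos)).mpr hdh
  have hmaps : MapsTo h (ball 0 1) (ball (h 0) 1) := by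
    intro w hw
    rw [h0, mem_ball, dist_zero_right]
    exact hlt w hw
  have hg_le : ∀ w ∈ ball (0:ℂ) 1, ‖g w‖ ≤ 1 := fun w hw => by
    simpa using Complex.norm_dslope_le_div_of_mapsTo_ball hdh (hmaps.mono_right ball_subset_closedBall) hw
  set a := g 0 with ha_def
  have hga : a = deriv h 0 := dslope_same h 0
  have ha1 : ‖a‖ ≤ 1 := hg_le 0 (by simp)
  have hrmem : ((r:ℂ)) ∈ ball (0:ℂ) 1 := by
    rw [mem_ball_zero_iff, Complex.norm_real, Real.norm_eq_abs, abs_of_pos hr0]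
    exact hr1
  have hrnorm : ‖((r:ℂ))‖ = r := by
    rw [Complex.norm_real, Real.norm_eq_abs, abs_of_pos hr0]
  -- main bound on ‖g r‖
  have main : ‖g ((r:ℂ))‖ * (1 + ‖a‖ * r) ≤ ‖a‖ + r := by
    rcases eq_or_lt_of_le ha1 with heq | hlt1
    · -- ‖a‖ = 1
      have := hg_le _ hrmem
      rw [heq]
      nlinarith [hg_le _ hrmem, hr0.le]
    · set c := (starRingEnd ℂ) a with hc
      have hcn : ‖c‖ = ‖a‖ := by rw [hc, RCLike.norm_conj]
      have hden : ∀ w ∈ ball (0:ℂ) 1, (1 : ℂ) - c * g w ≠ 0 := by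
        intro w hw
        rw [sub_ne_zero]
        intro h1
        have h2 : ‖c * g w‖ ≤ ‖a‖ := by
          rw [norm_mul, hcn]
          nlinarith [hg_le w hw, norm_nonneg a]
        rw [← h1, norm_one] at h2
        linarith
      set F := fun w => (g w - a) / (1 - c * g w) with hF
      have hFd : DifferentiableOn ℂ F (ball 0 1) := by
        apply DifferentiableOn.div (hg_diff.sub (differentiableOn_const a))
        · exact (differentiableOn_const 1).sub ((differentiableOn_const c).mul hg_diff)
        · exact hden
      have hF0 : F 0 = 0 := by simp [hF, ha_def]
      have hF1 : ∀ w ∈ ball (0:ℂ) 1, ‖F w‖ ≤ 1 := by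
        intro w hw
        rw [hF]
        simp only
        rw [norm_div]
        apply div_le_one_of_le₀ (mobius_norm_le_one a (g w) ha1 (hg_le w hw)) (norm_nonneg _)
      have hFr : ‖F ((r:ℂ))‖ ≤ r := by
        have := schwarz_norm_le' F hFd hF0 hF1 hrmem
        rwa [hrnorm] at this
      have d1 : (1:ℂ) - c * g ((r:ℂ)) ≠ 0 := hden _ hrmem
      have rel : F ((r:ℂ)) * (1 - c * g ((r:ℂ))) = g ((r:ℂ)) - a :=
        div_mul_cancel₀ _ d1
      obtain ⟨u, hu⟩ : ∃ u, F ((r:ℂ)) = u := ⟨_, rfl⟩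
      rw [hu] at hFr rel
      have rel2 : u + a = g ((r:ℂ)) * (1 + c * u) := by
        linear_combination rel
      have hmob := mobius_norm_bound a u r ha1 hFr hr1.le
      have hnormprod : ‖u + a‖ = ‖g ((r:ℂ))‖ * ‖1 + c * u‖ := by
        rw [rel2, norm_mul]
      have hd2 : 0 < ‖(1:ℂ) + c * u‖ := by
        rw [norm_pos_iff]
        intro h1
        have h2 : c * u = -1 := by linear_combination h1
        have h3 : ‖c * u‖ = 1 := by rw [h2]; simp
        rw [norm_mul, hcn] at h3
        nlinarith [norm_nonneg u, norm_nonneg a]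
      rw [hnormprod, mul_right_comm] at hmob
      exact le_of_mul_le_mul_right hmob hd2
  -- h r = r * g r
  have hrne : ((r:ℂ)) ≠ 0 := by
    simpa using hr0.ne'
  have hhr : ‖h ((r:ℂ))‖ = r * ‖g ((r:ℂ))‖ := by
    rw [hg, dslope_of_ne _ hrne, slope_def_field, h0, sub_zero, sub_zero, norm_div, hrnorm]
    field_simp
  rw [← hga, hhr]
  nlinarith [main, hr0.le]

theorem boundary_schwarz_banach {X Y : Type*}
    [NormedAddCommGroup X] [NormedSpace ℂ X] [CompleteSpace X]
    [NormedAddCommGroup Y] [NormedSpace ℂ Y] [CompleteSpace Y]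
    (f : X → Y)
    (hd : DifferentiableOn ℂ f (ball 0 1))
    (hb : ∀ z ∈ ball (0:X) 1, ‖f z‖ < 1)
    (hf0 : f 0 = 0)
    (b : X) (hbn : ‖b‖ = 1) (fb D : Y)
    (hfb : Tendsto (fun r : ℝ => f (r • b)) (𝓝[<] (1:ℝ)) (𝓝 fb))
    (hD : Tendsto (fun r : ℝ => (r - 1)⁻¹ • (f (r • b) - fb)) (𝓝[<] (1:ℝ)) (𝓝 D))
    (hfbn : ‖fb‖ = 1) :
    ‖D‖ ≥ 2 / (1 + ‖fderiv ℂ f 0‖) := by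
  have hfb0 : fb ≠ 0 := by
    intro h; rw [h, norm_zero] at hfbn; norm_num at hfbn
  obtain ⟨ℓ, hl1, hlfb⟩ := exists_dual_vector ℂ fb (norm_ne_zero_iff.mpr hfb0)
  set h : ℂ → ℂ := fun z => ℓ (f (z • b)) with hhdef
  have hsb : ∀ z : ℂ, z ∈ ball (0:ℂ) 1 → z • b ∈ ball (0:X) 1 := by
    intro z hz
    rw [mem_ball_zero_iff] at hz ⊢
    rw [norm_smul, hbn, mul_one]
    exact hz
  have hcomp : DifferentiableOn ℂ (fun z : ℂ => f (z • b)) (ball 0 1) :=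
    hd.comp ((differentiable_id.smul_const b).differentiableOn) hsb
  have hdh : DifferentiableOn ℂ h (ball 0 1) :=
    ℓ.differentiable.comp_differentiableOn hcomp
  have h0 : h 0 = 0 := by simp [hhdef, hf0]
  have hlt : ∀ z ∈ ball (0:ℂ) 1, ‖h z‖ < 1 := by
    intro z hz
    calc ‖h z‖ ≤ ‖ℓ‖ * ‖f (z • b)‖ := ℓ.le_opNorm _
    _ = ‖f (z • b)‖ := by rw [hl1, one_mul]
    _ < 1 := hb _ (hsb z hz)
  -- derivative at 0
  have hfd : DifferentiableAt ℂ f 0 :=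
    (hd 0 (mem_ball_self one_pos)).differentiableAt (isOpen_ball.mem_nhds (mem_ball_self one_pos))
  have h1 : HasDerivAt (fun z : ℂ => z • b) ((1:ℂ) • b) 0 := (hasDerivAt_id (0:ℂ)).smul_const b
  have hf' : HasFDerivAt f (fderiv ℂ f 0) ((0:ℂ) • b) := by
    rw [zero_smul]; exact hfd.hasFDerivAt
  have h2 : HasDerivAt (fun z : ℂ => f (z • b)) ((fderiv ℂ f 0) b) 0 := by
    have := hf'.comp_hasDerivAt (0:ℂ) h1
    simpa [Function.comp_def] using this
  have h4 : HasDerivAt h (ℓ ((fderiv ℂ f 0) b)) 0 := by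
    have := ℓ.hasFDerivAt.comp_hasDerivAt (0:ℂ) h2
    simpa [hhdef, Function.comp_def] using this
  set a := ‖deriv h 0‖ with hadef
  have ha0 : 0 ≤ a := norm_nonneg _
  have ha_le : a ≤ ‖fderiv ℂ f 0‖ := by
    rw [hadef, h4.deriv]
    calc ‖ℓ ((fderiv ℂ f 0) b)‖ ≤ ‖ℓ‖ * ‖(fderiv ℂ f 0) b‖ := ℓ.le_opNorm _
    _ = ‖(fderiv ℂ f 0) b‖ := by rw [hl1, one_mul]
    _ ≤ ‖fderiv ℂ f 0‖ * ‖b‖ := (fderiv ℂ f 0).le_opNorm b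
    _ = ‖fderiv ℂ f 0‖ := by rw [hbn, mul_one]
  -- limits
  have t0 : Tendsto (fun r : ℝ => (ℓ ((r - 1)⁻¹ • (f (r • b) - fb))).re) (𝓝[<] (1:ℝ))
      (𝓝 ((ℓ D).re)) :=
    (Complex.continuous_re.tendsto _).comp ((ℓ.continuous.tendsto D).comp hD)
  have t2 : Tendsto (fun r : ℝ => (1+r)/(1+a*r)) (𝓝[<] (1:ℝ)) (𝓝 ((1+1)/(1+a*1))) := by
    apply Tendsto.mono_left _ nhdsWithin_le_nhds
    exact (tendsto_const_nhds.add tendsto_id).div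
      (tendsto_const_nhds.add (tendsto_const_nhds.mul tendsto_id)) (by positivity)
  have ev : ∀ᶠ r in 𝓝[<] (1:ℝ),
      (1+r)/(1+a*r) ≤ (ℓ ((r - 1)⁻¹ • (f (r • b) - fb))).re := by
    filter_upwards [Ioo_mem_nhdsLT_of_mem (⟨one_pos, le_rfl⟩ : (1:ℝ) ∈ Ioc (0:ℝ) 1)] with r hr
    have hr0 : 0 < r := hr.1
    have hr1 : r < 1 := hr.2
    have hval : ℓ ((r - 1)⁻¹ • (f (r • b) - fb)) = (r - 1)⁻¹ • (h ((r:ℂ)) - 1) := by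
      have hlfb1 : ℓ fb = 1 := by rw [hlfb, hfbn]; norm_num
      rw [ℓ.map_smul_of_tower, map_sub, hlfb1,
        show h ((r:ℂ)) = ℓ (f (((r:ℂ)) • b)) from rfl, Complex.coe_smul]
    rw [hval, Complex.smul_re, smul_eq_mul, Complex.sub_re, Complex.one_re]
    have h1r := one_dim_bound h hdh h0 hlt r hr0 hr1
    have hre : (h ((r:ℂ))).re ≤ ‖h ((r:ℂ))‖ := by
      exact Complex.re_le_norm _
    have hpos : (0:ℝ) < 1 + a*r := by positivity
    have hdpos : (0:ℝ) < 1 - r := by linarith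
    have e : (r-1)⁻¹ * ((h ((r:ℂ))).re - 1) = (1 - (h ((r:ℂ))).re)/(1-r) := by
      rw [eq_div_iff (by linarith : (1:ℝ) - r ≠ 0), inv_mul_eq_div,
        div_mul_eq_mul_div, div_eq_iff (by linarith : r - 1 ≠ 0)]
      ring
    rw [← hadef] at h1r
    rw [e, div_le_div_iff₀ hpos hdpos]
    nlinarith [h1r, hre, hpos]
  rw [show (1+1:ℝ)/(1+a*1) = 2/(1+a) by rw [mul_one]; norm_num] at t2
  have hle1 : 2/(1+a) ≤ (ℓ D).re := le_of_tendsto_of_tendsto t2 t0 ev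
  have h5 : (ℓ D).re ≤ ‖D‖ := by
    calc (ℓ D).re ≤ ‖ℓ D‖ := Complex.re_le_norm _
    _ = ‖ℓ D‖ := rfl
    _ ≤ ‖ℓ‖ * ‖D‖ := ℓ.le_opNorm D
    _ = ‖D‖ := by rw [hl1, one_mul]
  have h6 : 2/(1+‖fderiv ℂ f 0‖) ≤ 2/(1+a) := by gcongr
  linarith
end

section
/- Let f be a holomorphic self-mapping of the unit disk U that extends holomorphically past z = 1 with f(1) = 1. Then f'(1) ≥ 2|1 − f(0)|² / (1 − |f(0)|² + |f'(0)|). -/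
open Metric Complex ComplexConjugate Filter Set
open scoped Topology

lemma mobius_normSq (a w : ℂ) :
    Complex.normSq (1 - conj a * w) - Complex.normSq (w - a)
      = (1 - Complex.normSq a) * (1 - Complex.normSq w) := by
  simp only [Complex.normSq_apply, Complex.sub_re, Complex.sub_im, Complex.mul_re,
    Complex.mul_im, Complex.conj_re, Complex.conj_im, Complex.one_re, Complex.one_im]
  ring

lemma mobius_abs_sq (a w : ℂ) (h : 1 - conj a * w ≠ 0) :
    (1 - ‖a‖ ^ 2) * (1 - ‖w‖ ^ 2)
      = ‖1 - conj a * w‖ ^ 2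
        * (1 - ‖(w - a) / (1 - conj a * w)‖ ^ 2) := by
  have hden : Complex.normSq (1 - conj a * w) ≠ 0 := by
    simpa [Complex.normSq_eq_zero] using h
  rw [norm_div, div_pow]
  simp only [Complex.sq_norm]
  field_simp
  linarith [mobius_normSq a w]

lemma mobius_den_ne (u w : ℂ) (hu : ‖u‖ < 1) (hw : ‖w‖ ≤ 1) :
    1 - conj u * w ≠ 0 := by
  intro h
  have h1 : conj u * w = 1 := by linear_combination -h
  have h2 := congrArg norm h1
  rw [norm_mul, norm_one, Complex.norm_conj] at h2
  nlinarith [norm_nonneg w, norm_nonneg u]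

set_option maxHeartbeats 1600000 in
theorem zhu_boundary_schwarz (f : ℂ → ℂ) (ε : ℝ) (hε : 0 < ε)
    (hd : DifferentiableOn ℂ f (ball 0 1 ∪ ball 1 ε))
    (hb : ∀ z ∈ ball (0:ℂ) 1, ‖f z‖ < 1)
    (hf1 : f 1 = 1) :
    (deriv f 1).im = 0 ∧
      (deriv f 1).re ≥
        2 * ‖1 - f 0‖ ^ 2 /
          (1 - ‖f 0‖ ^ 2 + ‖deriv f 0‖) := by
  have hopen : IsOpen (ball (0:ℂ) 1 ∪ ball 1 ε) := isOpen_ball.union isOpen_ball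
  have h1mem : (1:ℂ) ∈ ball (0:ℂ) 1 ∪ ball 1 ε := Or.inr (mem_ball_self hε)
  have hdiff1 : DifferentiableAt ℂ f 1 := hd.differentiableAt (hopen.mem_nhds h1mem)
  have hder : Tendsto (slope f 1) (𝓝[≠] 1) (𝓝 (deriv f 1)) :=
    hasDerivAt_iff_tendsto_slope.mp hdiff1.hasDerivAt
  have key : ∀ θ : ℝ, θ ∈ Set.Ioo (-(Real.pi/2)) (Real.pi/2) →
      0 ≤ Real.cos θ * (deriv f 1).re - Real.sin θ * (deriv f 1).im := by
    intro θ hθ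
    have hcos : 0 < Real.cos θ := Real.cos_pos_of_mem_Ioo hθ
    set e : ℂ := Complex.exp (θ * I) with he
    have he0 : e ≠ 0 := Complex.exp_ne_zero _
    have hpath : Tendsto (fun t : ℝ => (1 : ℂ) - t * e) (𝓝[>] 0) (𝓝[≠] (1:ℂ)) := by
      rw [tendsto_nhdsWithin_iff]
      constructor
      · have hc : ContinuousAt (fun t : ℝ => (1:ℂ) - t * e) 0 := by fun_prop
        have := hc.tendsto.mono_left (nhdsWithin_le_nhds (s := Set.Ioi (0:ℝ)))
        simpa using this
      · filter_upwards [self_mem_nhdsWithin] with t ht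
        simp only [Set.mem_compl_iff, Set.mem_singleton_iff]
        intro h
        have h2 : (t:ℂ) * e = 0 := by linear_combination -h
        rcases mul_eq_zero.mp h2 with h' | h'
        · have h3 : t = 0 := by exact_mod_cast h'
          exact (ne_of_gt (Set.mem_Ioi.mp ht)) h3
        · exact he0 h'
    have habs : ∀ t : ℝ, ‖1 - t*e‖^2 = 1 - 2*t*Real.cos θ + t^2 := by
      intro t
      rw [Complex.sq_norm]
      simp only [he, Complex.normSq_apply, Complex.sub_re, Complex.sub_im, Complex.mul_re,
        Complex.mul_im, Complex.ofReal_re, Complex.ofReal_im, Complex.one_re, Complex.one_im,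
        Complex.exp_ofReal_mul_I_re, Complex.exp_ofReal_mul_I_im]
      nlinarith [Real.sin_sq_add_cos_sq θ]
    have hmem : ∀ᶠ t : ℝ in 𝓝[>] (0:ℝ), (1:ℂ) - t*e ∈ ball (0:ℂ) 1 := by
      filter_upwards [Ioo_mem_nhdsGT_of_mem (Set.mem_Ico.mpr ⟨le_rfl, by positivity⟩ :
        (0:ℝ) ∈ Set.Ico 0 (2*Real.cos θ))] with t ht
      rw [mem_ball_zero_iff]
      have h2 : ‖1 - t*e‖^2 < 1 := by rw [habs t]; nlinarith [ht.1, ht.2]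
      nlinarith [norm_nonneg (1 - t*e)]
    have hsl : Tendsto (fun t : ℝ => (e * slope f 1 (1 - t*e)).re) (𝓝[>] 0)
        (𝓝 ((e * deriv f 1).re)) := by
      exact (Complex.continuous_re.tendsto _).comp
        ((continuous_mul_left e).continuousAt.tendsto.comp (hder.comp hpath))
    have hnn : ∀ᶠ t : ℝ in 𝓝[>] (0:ℝ), 0 ≤ (e * slope f 1 (1 - t*e)).re := by
      filter_upwards [hmem, self_mem_nhdsWithin] with t hmt ht
      have ht0 : (0:ℝ) < t := ht
      have hfz : (f (1 - t*e)).re < 1 :=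
        lt_of_le_of_lt (Complex.re_le_norm _) (hb _ hmt)
      have ht0' : (t:ℂ) ≠ 0 := by exact_mod_cast ne_of_gt ht0
      have hslope : e * slope f 1 (1 - (t:ℝ)*e) = (1 - f (1 - (t:ℝ)*e)) / ((t:ℝ):ℂ) := by
        rw [slope_def_field, hf1]
        rw [show ((1:ℂ) - (t:ℝ)*e) - 1 = -((t:ℝ)*e) by ring]
        field_simp
        ring
      rw [hslope, Complex.div_ofReal_re]
      have : 0 ≤ ((1:ℂ) - f (1 - t*e)).re := by
        simp only [Complex.sub_re, Complex.one_re]; linarith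
      positivity
    have hkey : 0 ≤ (e * deriv f 1).re := ge_of_tendsto hsl hnn
    have : (e * deriv f 1).re = Real.cos θ * (deriv f 1).re - Real.sin θ * (deriv f 1).im := by
      rw [Complex.mul_re, he, Complex.exp_ofReal_mul_I_re, Complex.exp_ofReal_mul_I_im]
    linarith [hkey, this ▸ hkey]
  -- imaginary part
  have him : (deriv f 1).im = 0 := by
    have hcont : Continuous fun θ:ℝ => Real.cos θ * (deriv f 1).re - Real.sin θ * (deriv f 1).im := by
      fun_prop
    have hpi : -(Real.pi/2) < Real.pi/2 := by linarith [Real.pi_pos]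
    have h1 : 0 ≤ Real.cos (Real.pi/2) * (deriv f 1).re - Real.sin (Real.pi/2) * (deriv f 1).im := by
      refine ge_of_tendsto (hcont.continuousAt.tendsto.mono_left
        (nhdsWithin_le_nhds (s := Set.Iio (Real.pi/2)))) ?_
      filter_upwards [Ioo_mem_nhdsLT_of_mem (Set.mem_Ioc.mpr ⟨hpi, le_rfl⟩)] with θ hθ
      exact key θ ⟨hθ.1, hθ.2⟩
    have h2 : 0 ≤ Real.cos (-(Real.pi/2)) * (deriv f 1).re - Real.sin (-(Real.pi/2)) * (deriv f 1).im := by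
      refine ge_of_tendsto (hcont.continuousAt.tendsto.mono_left
        (nhdsWithin_le_nhds (s := Set.Ioi (-(Real.pi/2))))) ?_
      filter_upwards [Ioo_mem_nhdsGT_of_mem (Set.mem_Ico.mpr ⟨le_rfl, hpi⟩)] with θ hθ
      exact key θ ⟨hθ.1, hθ.2⟩
    rw [Real.cos_pi_div_two, Real.sin_pi_div_two] at h1
    rw [Real.cos_neg, Real.sin_neg, Real.cos_pi_div_two, Real.sin_pi_div_two] at h2
    linarith
  refine ⟨him, ?_⟩
  have hopen : IsOpen (ball (0:ℂ) 1 ∪ ball 1 ε) := isOpen_ball.union isOpen_ball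
  have h1mem : (1:ℂ) ∈ ball (0:ℂ) 1 ∪ ball 1 ε := Or.inr (mem_ball_self hε)
  have hdiff1 : DifferentiableAt ℂ f 1 := hd.differentiableAt (hopen.mem_nhds h1mem)
  have hder : Tendsto (slope f 1) (𝓝[≠] 1) (𝓝 (deriv f 1)) :=
    hasDerivAt_iff_tendsto_slope.mp hdiff1.hasDerivAt
  have h0mem : (0:ℂ) ∈ ball (0:ℂ) 1 := by simp
  have hdiff0 : DifferentiableAt ℂ f 0 := hd.differentiableAt (hopen.mem_nhds (Or.inl h0mem))
  set a := f 0 with ha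
  have haabs : ‖a‖ < 1 := hb 0 h0mem
  have hA2 : 0 < 1 - ‖a‖ ^ 2 := by nlinarith [norm_nonneg a]
  have hdball : DifferentiableOn ℂ f (ball 0 1) := hd.mono Set.subset_union_left
  set F : ℂ → ℂ := fun z => (f z - a) / (1 - conj a * f z) with hF
  have hF0 : F 0 = 0 := by simp [hF, ← ha]
  have hFident : ∀ z ∈ ball (0:ℂ) 1, (1 - ‖a‖ ^ 2) * (1 - ‖f z‖ ^ 2)
      = ‖1 - conj a * f z‖ ^ 2 * (1 - ‖F z‖ ^ 2) :=
    fun z hz => mobius_abs_sq a (f z) (mobius_den_ne a (f z) haabs (hb z hz).le)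
  have hFb : ∀ z ∈ ball (0:ℂ) 1, ‖F z‖ < 1 := by
    intro z hz
    have hid := hFident z hz
    have h1 : 0 < ‖1 - conj a * f z‖ := by
      rw [norm_pos_iff]; exact mobius_den_ne a (f z) haabs (hb z hz).le
    have h2 : 0 < (1 - ‖a‖ ^ 2) * (1 - ‖f z‖ ^ 2) :=
      mul_pos hA2 (by nlinarith [hb z hz, norm_nonneg (f z)])
    rw [hid] at h2
    have h3 : 0 < 1 - ‖F z‖ ^ 2 := by
      by_contra h3
      push_neg at h3
      nlinarith [mul_nonpos_of_nonneg_of_nonpos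
        (sq_nonneg (‖1 - conj a * f z‖)) h3]
    nlinarith [norm_nonneg (F z)]
  have hFd : DifferentiableOn ℂ F (ball 0 1) := by
    apply DifferentiableOn.div
    · exact hdball.sub (differentiableOn_const a)
    · exact (differentiableOn_const 1).sub ((differentiableOn_const (conj a)).mul hdball)
    · exact fun z hz => mobius_den_ne a (f z) haabs (hb z hz).le
  set G : ℂ → ℂ := dslope F 0 with hG
  have hGd : DifferentiableOn ℂ G (ball 0 1) :=
    (differentiableOn_dslope (ball_mem_nhds (0:ℂ) one_pos)).mpr hFd
  have hmaps : Set.MapsTo F (ball (0:ℂ) 1) (ball (F 0) 1) := by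
    intro z hz; rw [hF0, mem_ball_zero_iff]; exact hFb z hz
  have hGb : ∀ z ∈ ball (0:ℂ) 1, ‖G z‖ ≤ 1 := by
    intro z hz
    have h := Complex.norm_dslope_le_div_of_mapsTo_ball hFd (hmaps.mono_right ball_subset_closedBall) hz
    rwa [div_one] at h
  set b := G 0 with hbdef
  set B := ‖b‖ with hBdef
  have hBnn : 0 ≤ B := norm_nonneg b
  have hB1 : 0 < 1 + B := by linarith
  -- value of b
  have hbval : B * (1 - ‖a‖ ^ 2) = ‖deriv f 0‖ := by
    have hne : 1 - conj a * a ≠ 0 := mobius_den_ne a a haabs haabs.le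
    have hnum : HasDerivAt (fun w : ℂ => w - a) 1 a := (hasDerivAt_id a).sub_const a
    have hden2 : HasDerivAt (fun w : ℂ => 1 - conj a * w) (-(conj a)) a := by
      simpa using ((hasDerivAt_id a).const_mul (conj a)).const_sub 1
    have hdiv := hnum.div hden2 hne
    have hf0d : HasDerivAt f (deriv f 0) 0 := hdiff0.hasDerivAt
    have hdiva : HasDerivAt (fun y => (y - a) / (1 - conj a * y))
        ((1 * (1 - conj a * a) - (a - a) * -(conj a)) / (1 - conj a * a) ^ 2) (f 0) := by
      rw [← ha]; exact hdiv
    have hcomp : HasDerivAt F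
        ((1 * (1 - conj a * a) - (a - a) * -(conj a)) / (1 - conj a * a) ^ 2 * deriv f 0) 0 :=
      hdiva.comp 0 hf0d
    have hval : HasDerivAt F (deriv f 0 / (1 - conj a * a)) 0 := by
      convert hcomp using 1
      field_simp
      ring
    have hb' : b = deriv f 0 / (1 - conj a * a) := by
      rw [hbdef, hG, dslope_same]
      exact hval.deriv
    have hca : conj a * a = ((‖a‖ ^ 2 : ℝ) : ℂ) := by
      rw [Complex.sq_norm, mul_comm, Complex.mul_conj]
    have : B = ‖deriv f 0‖ / (1 - ‖a‖ ^ 2) := by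
      rw [hBdef, hb', norm_div, hca]
      rw [show (1:ℂ) - ((‖a‖ ^ 2 : ℝ):ℂ) = (((1 - ‖a‖ ^ 2 : ℝ)):ℂ) by push_cast; ring]
      rw [Complex.norm_real, Real.norm_eq_abs, abs_of_pos hA2]
    rw [this]
    field_simp
  -- Schwarz–Pick for G
  have hSP : ∀ z ∈ ball (0:ℂ) 1,
      (1 - ‖z‖ ^ 2) * ((1 - B) / (1 + B)) ≤ 1 - ‖G z‖ ^ 2 := by
    intro z hz
    have hz1 : ‖z‖ < 1 := by rwa [mem_ball_zero_iff] at hz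
    by_cases hB : 1 ≤ B
    · have hq : (1 - B) / (1 + B) ≤ 0 := div_nonpos_of_nonpos_of_nonneg (by linarith) (by linarith)
      have h1 : (1 - ‖z‖ ^ 2) * ((1 - B) / (1 + B)) ≤ 0 :=
        mul_nonpos_of_nonneg_of_nonpos (by nlinarith [norm_nonneg z]) hq
      nlinarith [hGb z hz, norm_nonneg (G z)]
    · push_neg at hB
      have hBlt : 0 < 1 - B := by linarith
      set K : ℂ → ℂ := fun w => (G w - b) / (1 - conj b * G w) with hK
      have hdenK : ∀ w ∈ ball (0:ℂ) 1, 1 - conj b * G w ≠ 0 :=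
        fun w hw => mobius_den_ne b (G w) hB (hGb w hw)
      have hKident : ∀ w ∈ ball (0:ℂ) 1, (1 - B ^ 2) * (1 - ‖G w‖ ^ 2)
          = ‖1 - conj b * G w‖ ^ 2 * (1 - ‖K w‖ ^ 2) :=
        fun w hw => mobius_abs_sq b (G w) (hdenK w hw)
      have hKd : DifferentiableOn ℂ K (ball 0 1) := by
        apply DifferentiableOn.div
        · exact hGd.sub (differentiableOn_const b)
        · exact (differentiableOn_const 1).sub ((differentiableOn_const (conj b)).mul hGd)
        · exact hdenK
      have hK0 : K 0 = 0 := by simp [hK, ← hbdef]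
      have hKb : ∀ w ∈ ball (0:ℂ) 1, ‖K w‖ ≤ 1 := by
        intro w hw
        have hid := hKident w hw
        have h1 : 0 < ‖1 - conj b * G w‖ := by
          rw [norm_pos_iff]; exact hdenK w hw
        have hLnn : 0 ≤ (1 - B ^ 2) * (1 - ‖G w‖ ^ 2) :=
          mul_nonneg (by nlinarith) (by nlinarith [hGb w hw, norm_nonneg (G w)])
        rw [hid] at hLnn
        have h3 : 0 ≤ 1 - ‖K w‖ ^ 2 := by
          by_contra h3
          push_neg at h3
          nlinarith [mul_neg_of_pos_of_neg (pow_pos h1 2)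
            (by linarith : 1 - ‖K w‖ ^ 2 < 0)]
        nlinarith [norm_nonneg (K w)]
      have hKz : ‖K z‖ ≤ ‖z‖ := by
        have hdel : ∀ δ : ℝ, 0 < δ → ‖K z‖ ≤ (1 + δ) * ‖z‖ := by
          intro δ hδ
          have hmapsK : Set.MapsTo K (ball (0:ℂ) 1) (ball (K 0) (1 + δ)) := by
            intro w hw
            rw [hK0, mem_ball_zero_iff]
            linarith [hKb w hw]
          have h := Complex.dist_le_div_mul_dist_of_mapsTo_ball hKd (hmapsK.mono_right ball_subset_closedBall) hz
          rw [hK0] at h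
          simpa [Complex.dist_eq, div_one] using h
        by_contra hcon
        push_neg at hcon
        have hz0 : 0 ≤ ‖z‖ := norm_nonneg z
        have hz1' : (0:ℝ) < ‖z‖ + 1 := by linarith
        have hδpos : 0 < (‖K z‖ - ‖z‖) / (‖z‖ + 1) :=
          div_pos (by linarith) hz1'
        have h2 := hdel _ hδpos
        have h6 : (‖K z‖ - ‖z‖) / (‖z‖ + 1)
            * (‖z‖ + 1) = ‖K z‖ - ‖z‖ :=
          div_mul_cancel₀ _ (ne_of_gt hz1')
        nlinarith [h2, h6, hδpos, hz0]
      -- conclude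
      have hid := hKident z hz
      have habs1 : 1 - B ≤ ‖1 - conj b * G z‖ := by
        have h1 : ‖conj b * G z‖ ≤ B := by
          rw [norm_mul, Complex.norm_conj]
          nlinarith [hGb z hz, norm_nonneg (G z)]
        have h2 := norm_sub_norm_le (1:ℂ) (conj b * G z)
        simp only [norm_one] at h2
        linarith [h2]
      rw [mul_div_assoc', div_le_iff₀ hB1]
      have h3 : (1 - B) ^ 2 ≤ ‖1 - conj b * G z‖ ^ 2 := by
        nlinarith [habs1]
      have h4 : 1 - ‖z‖ ^ 2 ≤ 1 - ‖K z‖ ^ 2 := by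
        nlinarith [norm_nonneg (K z), norm_nonneg z]
      have h5 : (1 - B) ^ 2 * (1 - ‖z‖ ^ 2)
          ≤ ‖1 - conj b * G z‖ ^ 2 * (1 - ‖K z‖ ^ 2) := by
        apply mul_le_mul h3 h4 (by nlinarith [norm_nonneg z]) (by positivity)
      nlinarith [hid, h5]
  -- main chain
  set q := (1 - B) / (1 + B) with hq
  set E : ℝ → ℝ := fun r =>
    ‖1 - conj a * f (r:ℂ)‖ ^ 2 * ((1 + r) * (1 + r ^ 2 * q))
      / (2 * (1 - ‖a‖ ^ 2)) with hE
  have hchain : ∀ r : ℝ, r ∈ Set.Ioo (0:ℝ) 1 → E r ≤ (slope f 1 (r:ℂ)).re := by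
    intro r hr
    obtain ⟨hr0, hr1⟩ := hr
    have hzb : (r:ℂ) ∈ ball (0:ℂ) 1 := by
      rw [mem_ball_zero_iff, Complex.norm_real, Real.norm_eq_abs, abs_of_pos hr0]
      exact hr1
    have hslr : (slope f 1 (r:ℂ)).re = (1 - (f (r:ℂ)).re) / (1 - r) := by
      rw [slope_def_field, hf1]
      rw [show ((r:ℂ) - 1) = (((r - 1 : ℝ)):ℂ) by push_cast; ring]
      rw [Complex.div_ofReal_re, Complex.sub_re, Complex.one_re]
      rw [div_eq_div_iff (by linarith) (by linarith)]
      ring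
    rw [hslr, le_div_iff₀ (by linarith : (0:ℝ) < 1 - r)]
    -- notation
    set u := ‖f (r:ℂ)‖ with hu
    have hult : u < 1 := hb _ hzb
    have hre : (f (r:ℂ)).re ≤ u := Complex.re_le_norm _
    set m := ‖1 - conj a * f (r:ℂ)‖ with hm
    have hid := hFident _ hzb
    have hr0ne : (r:ℂ) ≠ 0 := by exact_mod_cast hr0.ne'
    have hFG : ‖F (r:ℂ)‖ = r * ‖G (r:ℂ)‖ := by
      have hGr : G (r:ℂ) = F (r:ℂ) / (r:ℂ) := by
        rw [hG, dslope_of_ne _ hr0ne, slope_def_field, hF0]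
        simp
      have : F (r:ℂ) = (r:ℂ) * G (r:ℂ) := by
        rw [hGr]; field_simp
      rw [this, norm_mul, Complex.norm_real, Real.norm_eq_abs, abs_of_pos hr0]
    set g := ‖G (r:ℂ)‖ with hg
    have hgle : g ≤ 1 := hGb _ hzb
    have hsp := hSP _ hzb
    rw [← hg] at hsp
    rw [Complex.norm_real, Real.norm_eq_abs, abs_of_pos hr0] at hsp
    have e1 : (1 - r ^ 2) * (1 + r ^ 2 * q) ≤ 1 - r ^ 2 * g ^ 2 := by
      nlinarith [mul_le_mul_of_nonneg_left hsp (sq_nonneg r)]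
    have e3 : m ^ 2 * (1 - r ^ 2 * g ^ 2) = (1 - ‖a‖ ^ 2) * (1 - u ^ 2) := by
      rw [hid, hFG]; ring
    have e4 : 1 - u ^ 2 ≤ 2 * (1 - (f (r:ℂ)).re) := by nlinarith
    simp only [hE]
    rw [div_mul_eq_mul_div, div_le_iff₀ (by positivity)]
    have e2 : m ^ 2 * ((1 - r ^ 2) * (1 + r ^ 2 * q)) ≤ m ^ 2 * (1 - r ^ 2 * g ^ 2) :=
      mul_le_mul_of_nonneg_left e1 (by positivity)
    nlinarith [mul_le_mul_of_nonneg_left e4 hA2.le, e2, e3]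
  -- limits
  have hpathr : Tendsto (fun r : ℝ => (r:ℂ)) (𝓝[<] (1:ℝ)) (𝓝[≠] (1:ℂ)) := by
    rw [tendsto_nhdsWithin_iff]
    constructor
    · have := Complex.continuous_ofReal.continuousAt (x := (1:ℝ))
      simpa using this.tendsto.mono_left nhdsWithin_le_nhds
    · filter_upwards [self_mem_nhdsWithin] with r hr
      simp only [Set.mem_compl_iff, Set.mem_singleton_iff]
      intro h
      have : r = 1 := by exact_mod_cast h
      exact (ne_of_lt hr) this
  have hlim1 : Tendsto (fun r : ℝ => (slope f 1 (r:ℂ)).re) (𝓝[<] (1:ℝ)) (𝓝 (deriv f 1).re) :=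
    (Complex.continuous_re.tendsto _).comp (hder.comp hpathr)
  have hcf1 : ContinuousAt f 1 := hdiff1.continuousAt
  have hfa : ContinuousAt (fun r : ℝ => f (r:ℂ)) 1 := by
    apply ContinuousAt.comp (x := (1:ℝ)) (g := f) _ Complex.continuous_ofReal.continuousAt
    rw [Complex.ofReal_one]; exact hcf1
  set Linf := ‖1 - conj a‖ ^ 2 * ((1 + 1) * (1 + 1 ^ 2 * q))
      / (2 * (1 - ‖a‖ ^ 2)) with hLinf
  have hlim2 : Tendsto E (𝓝[<] (1:ℝ)) (𝓝 Linf) := by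
    have t1 : Tendsto (fun r : ℝ => ‖1 - conj a * f (r:ℂ)‖ ^ 2) (𝓝 (1:ℝ))
        (𝓝 (‖1 - conj a‖ ^ 2)) := by
      have hc : ContinuousAt (fun r : ℝ => ‖1 - conj a * f (r:ℂ)‖ ^ 2) 1 := by
        apply ContinuousAt.pow
        apply continuous_norm.continuousAt.comp
        exact continuousAt_const.sub (continuousAt_const.mul hfa)
      have := hc.tendsto
      simpa [hf1] using this
    have t2 : Tendsto (fun r : ℝ => (1 + r) * (1 + r ^ 2 * q)) (𝓝 (1:ℝ))
        (𝓝 ((1 + 1) * (1 + 1 ^ 2 * q))) := by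
      exact (Continuous.tendsto (by continuity) 1)
    exact ((t1.mul t2).div_const _).mono_left nhdsWithin_le_nhds
  have hfinal : Linf ≤ (deriv f 1).re := by
    refine le_of_tendsto_of_tendsto hlim2 hlim1 ?_
    filter_upwards [Ioo_mem_nhdsLT_of_mem (Set.mem_Ioc.mpr ⟨one_pos, le_rfl⟩)] with r hr
    exact hchain r hr
  -- compute Linf
  have habs1a : ‖1 - conj a‖ = ‖1 - a‖ := by
    rw [show (1:ℂ) - conj a = conj (1 - a) by rw [map_sub, map_one], Complex.norm_conj]
  have hLval : Linf = 2 * ‖1 - a‖ ^ 2 /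
      (1 - ‖a‖ ^ 2 + ‖deriv f 0‖) := by
    rw [hLinf, habs1a, hq, ← hbval]
    have h1 : (0:ℝ) < 1 - ‖a‖ ^ 2 + B * (1 - ‖a‖ ^ 2) := by nlinarith
    field_simp
    ring
  rw [ge_iff_le, ← hLval]
  exact hfinal
end

section
/- Let X and Y be complex Banach spaces with open unit balls B_X and B_Y, and let f : B_X → B_Y be a pluriharmonic mapping. Then for all z ∈ B_X, ‖f(z) − ((1 − ‖z‖²)/(1 + ‖z‖²)) f(0)‖ ≤ (4/π) arctan ‖z‖. -/
open Metric Set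

/-- A complex-valued function on the unit disk is harmonic if it can be written as
`h + conj g` with `h`, `g` holomorphic on the disk. -/
def IsHarmonicOnDisk (φ : ℂ → ℂ) : Prop :=
  ∃ h g : ℂ → ℂ, DifferentiableOn ℂ h (ball 0 1) ∧ DifferentiableOn ℂ g (ball 0 1) ∧
    ∀ ζ ∈ ball (0:ℂ) 1, φ ζ = h ζ + (starRingEnd ℂ) (g ζ)

namespace PHSchwarz

lemma abs_tan_lt_one {x : ℝ} (hx : |x| < Real.pi / 4) : |Real.tan x| < 1 := by
  have hpi := Real.pi_pos
  obtain ⟨h1, h2⟩ := abs_lt.1 hx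
  have hmem : x ∈ Ioo (-(Real.pi/2)) (Real.pi/2) := ⟨by linarith, by linarith⟩
  have hmem4 : (Real.pi/4 : ℝ) ∈ Ioo (-(Real.pi/2)) (Real.pi/2) := ⟨by linarith, by linarith⟩
  have hmem4' : (-(Real.pi/4) : ℝ) ∈ Ioo (-(Real.pi/2)) (Real.pi/2) := ⟨by linarith, by linarith⟩
  have hu : Real.tan x < 1 := by
    have := Real.strictMonoOn_tan hmem hmem4 h2
    rwa [Real.tan_pi_div_four] at this
  have hl : -1 < Real.tan x := by
    have := Real.strictMonoOn_tan hmem4' hmem h1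
    rwa [Real.tan_neg, Real.tan_pi_div_four] at this
  exact abs_lt.2 ⟨hl, hu⟩

lemma normSq_cos_sub_normSq_sin (q : ℂ) :
    Complex.normSq (Complex.cos q) - Complex.normSq (Complex.sin q) = Real.cos (2 * q.re) := by
  have h : ((Complex.normSq (Complex.cos q) : ℂ)) - (Complex.normSq (Complex.sin q) : ℂ)
      = ((Real.cos (2 * q.re) : ℝ) : ℂ) := by
    rw [← Complex.mul_conj, ← Complex.mul_conj, ← Complex.cos_conj, ← Complex.sin_conj,
      ← Complex.cos_add, Complex.add_conj, Complex.ofReal_cos]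
  exact_mod_cast h

lemma tan_strip {q : ℂ} (h : |q.re| < Real.pi / 4) :
    Complex.cos q ≠ 0 ∧ ‖Complex.tan q‖ < 1 := by
  have hpi := Real.pi_pos
  obtain ⟨h1, h2⟩ := abs_lt.1 h
  have hc : 0 < Real.cos (2 * q.re) :=
    Real.cos_pos_of_mem_Ioo ⟨by linarith, by linarith⟩
  have hkey := normSq_cos_sub_normSq_sin q
  have hsin := Complex.normSq_nonneg (Complex.sin q)
  have hcospos : 0 < Complex.normSq (Complex.cos q) := by linarith
  have hcos : Complex.cos q ≠ 0 := by
    intro h0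
    rw [h0, map_zero] at hcospos
    exact lt_irrefl _ hcospos
  refine ⟨hcos, ?_⟩
  rw [Complex.tan_eq_sin_div_cos, norm_div, div_lt_one (norm_pos_iff.mpr hcos)]
  have hlt : Complex.normSq (Complex.sin q) < Complex.normSq (Complex.cos q) := by linarith
  rw [← Complex.sq_norm, ← Complex.sq_norm] at hlt
  exact lt_of_pow_lt_pow_left₀ 2 (norm_nonneg _) hlt

lemma mobius_normSq_lt {a : ℝ} (ha : |a| < 1) {w : ℂ} (hw : ‖w‖ < 1) :
    Complex.normSq (w - (a:ℂ)) < Complex.normSq (1 - (a:ℂ) * w) := by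
  obtain ⟨ha1, ha2⟩ := abs_lt.1 ha
  have h1 : Complex.normSq w < 1 := by
    rw [← Complex.sq_norm]; nlinarith [norm_nonneg w]
  rw [Complex.normSq_apply] at h1 ⊢
  rw [Complex.normSq_apply]
  simp only [Complex.sub_re, Complex.sub_im, Complex.mul_re, Complex.mul_im,
    Complex.ofReal_re, Complex.ofReal_im, Complex.one_re, Complex.one_im]
  nlinarith [mul_pos (by nlinarith : (0:ℝ) < 1 - a*a)
    (by nlinarith : (0:ℝ) < 1 - (w.re*w.re + w.im*w.im))]

lemma mobius_ne {a : ℝ} (ha : |a| < 1) {w : ℂ} (hw : ‖w‖ < 1) :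
    1 - (a:ℂ) * w ≠ 0 := by
  intro h0
  have := mobius_normSq_lt ha hw
  rw [h0, map_zero] at this
  exact absurd this (not_lt.2 (Complex.normSq_nonneg _))

lemma mobius_abs_lt {a : ℝ} (ha : |a| < 1) {w : ℂ} (hw : ‖w‖ < 1) :
    ‖(w - (a:ℂ)) / (1 - (a:ℂ) * w)‖ < 1 := by
  rw [norm_div, div_lt_one (norm_pos_iff.mpr (mobius_ne ha hw))]
  have := mobius_normSq_lt ha hw
  rw [← Complex.sq_norm, ← Complex.sq_norm] at this
  exact lt_of_pow_lt_pow_left₀ 2 (norm_nonneg _) this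

set_option maxHeartbeats 1000000 in
lemma lemA {X Y a r : ℝ} (hX : |X| < Real.pi / 4) (ha : |a| < 1)
    (hr0 : 0 ≤ r) (hr1 : r < 1)
    (h : ‖(Complex.tan ((X:ℂ) + (Y:ℂ) * Complex.I) - (a:ℂ)) /
        (1 - (a:ℂ) * Complex.tan ((X:ℂ) + (Y:ℂ) * Complex.I))‖ ≤ r) :
    Real.tan X ≤ (a + r) / (1 + a * r) := by
  have hpi := Real.pi_pos
  obtain ⟨ha1, ha2⟩ := abs_lt.1 ha
  set q : ℂ := (X:ℂ) + (Y:ℂ) * Complex.I with hq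
  have hqre : q.re = X := by simp [hq]
  have hstrip := tan_strip (q := q) (by rw [hqre]; exact hX)
  obtain ⟨hcosne, habs⟩ := hstrip
  set w : ℂ := Complex.tan q with hw
  have hdne : 1 - (a:ℂ) * w ≠ 0 := mobius_ne ha habs
  -- squared inequality
  have h2 : Complex.normSq (w - (a:ℂ)) ≤ r^2 * Complex.normSq (1 - (a:ℂ) * w) := by
    have h' : ‖w - (a:ℂ)‖ ≤ r * ‖1 - (a:ℂ) * w‖ := by
      rw [norm_div, div_le_iff₀ (norm_pos_iff.mpr hdne)] at h
      exact h
    have := pow_le_pow_left₀ (norm_nonneg _) h' 2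
    rw [mul_pow, Complex.sq_norm, Complex.sq_norm] at this
    exact this
  -- explicit sin/cos
  set sX := Real.sin X
  set cX := Real.cos X
  set cY := Real.cosh Y
  set sY := Real.sinh Y
  have hsin : Complex.sin q = (sX:ℂ) * (cY:ℂ) + (cX:ℂ) * (sY:ℂ) * Complex.I := by
    rw [hq, Complex.sin_add, Complex.sin_mul_I, Complex.cos_mul_I,
      ← Complex.ofReal_sin, ← Complex.ofReal_cos, ← Complex.ofReal_sinh, ← Complex.ofReal_cosh]
    ring
  have hcos : Complex.cos q = (cX:ℂ) * (cY:ℂ) - (sX:ℂ) * (sY:ℂ) * Complex.I := by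
    rw [hq, Complex.cos_add, Complex.sin_mul_I, Complex.cos_mul_I,
      ← Complex.ofReal_sin, ← Complex.ofReal_cos, ← Complex.ofReal_sinh, ← Complex.ofReal_cosh]
    ring
  have e1 : w - (a:ℂ) = (Complex.sin q - (a:ℂ) * Complex.cos q) / Complex.cos q := by
    rw [hw, Complex.tan_eq_sin_div_cos]; field_simp; try ring
  have e2 : 1 - (a:ℂ) * w = (Complex.cos q - (a:ℂ) * Complex.sin q) / Complex.cos q := by
    rw [hw, Complex.tan_eq_sin_div_cos]; field_simp; try ring
  have e3 : Complex.sin q - (a:ℂ) * Complex.cos q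
      = (((sX - a*cX)*cY : ℝ) : ℂ) + (((cX + a*sX)*sY : ℝ) : ℂ) * Complex.I := by
    rw [hsin, hcos]; push_cast; ring
  have e4 : Complex.cos q - (a:ℂ) * Complex.sin q
      = (((cX - a*sX)*cY : ℝ) : ℂ) + ((-((sX + a*cX)*sY) : ℝ) : ℂ) * Complex.I := by
    rw [hsin, hcos]; push_cast; ring
  have n3 : Complex.normSq (Complex.sin q - (a:ℂ) * Complex.cos q)
      = ((sX - a*cX)*cY)^2 + ((cX + a*sX)*sY)^2 := by
    rw [e3, Complex.normSq_add_mul_I]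
  have n4 : Complex.normSq (Complex.cos q - (a:ℂ) * Complex.sin q)
      = ((cX - a*sX)*cY)^2 + ((sX + a*cX)*sY)^2 := by
    rw [e4, Complex.normSq_add_mul_I]; ring
  have hncos : 0 < Complex.normSq (Complex.cos q) := by
    rcases Complex.normSq_pos.2 hcosne with h; exact h
  -- rewrite h2
  rw [e1, e2, map_div₀, map_div₀, n3, n4] at h2
  have h2' : ((sX - a*cX)*cY)^2 + ((cX + a*sX)*sY)^2
      ≤ r^2 * (((cX - a*sX)*cY)^2 + ((sX + a*cX)*sY)^2) := by
    rw [div_le_iff₀ hncos] at h2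
    have e : r^2 * ((((cX - a*sX)*cY)^2 + ((sX + a*cX)*sY)^2) / Complex.normSq (Complex.cos q))
        * Complex.normSq (Complex.cos q)
        = r^2 * (((cX - a*sX)*cY)^2 + ((sX + a*cX)*sY)^2) := by field_simp
    rw [e] at h2
    exact h2
  -- convert to t
  set t := Real.tan X with ht
  have hcXpos : 0 < cX := Real.cos_pos_of_mem_Ioo ⟨by linarith [abs_lt.1 hX], by linarith [abs_lt.1 hX]⟩
  have hsx : sX = t * cX := by
    rw [ht, Real.tan_eq_sin_div_cos]; field_simp
    exact (mul_div_cancel_right₀ _ hcXpos.ne').symm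
  have htl : |t| < 1 := abs_tan_lt_one hX
  obtain ⟨ht1, ht2⟩ := abs_lt.1 htl
  have hcY : 1 ≤ cY := Real.one_le_cosh Y
  rw [hsx] at h2'
  clear h h2 hsin hcos e1 e2 e3 e4 n3 n4 hncos hdne habs hqre hsx
  clear_value t sX cX cY sY q w
  clear hq hw hcosne
  clear q w sX
  -- now pure real algebra
  have f1 : (0:ℝ) < 1 - t^2 := by nlinarith
  have f2 : (0:ℝ) < 1 - a^2 := by nlinarith
  have key : ((t^2 - a^2))^2 ≤ ((1 - a^2*t^2))^2 := by
    nlinarith [mul_pos (mul_pos f1 f2)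
      (mul_pos (by positivity : (0:ℝ) < 1 + a^2) (by positivity : (0:ℝ) < 1 + t^2))]
  have claim : (t - a)^2 * (((cX - a*(t*cX))*cY)^2 + ((t*cX + a*cX)*sY)^2)
      ≤ (1 - a*t)^2 * (((t*cX - a*cX)*cY)^2 + ((cX + a*(t*cX))*sY)^2) := by
    nlinarith [mul_nonneg (mul_nonneg (sq_nonneg cX) (sq_nonneg sY)) (sub_nonneg.2 key)]
  have h1at : 0 < 1 - a*t := by nlinarith
  have hn4pos : 0 < ((cX - a*(t*cX))*cY)^2 + ((t*cX + a*cX)*sY)^2 := by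
    have hp : 0 < ((cX - a*(t*cX))*cY)^2 := by
      have hfac : 0 < cX - a*(t*cX) := by nlinarith
      have : 0 < (cX - a*(t*cX))*cY := by nlinarith
      positivity
    nlinarith [sq_nonneg ((t*cX + a*cX)*sY)]
  have hfin : (t - a)^2 ≤ r^2 * (1 - a*t)^2 := by
    have step : (t - a)^2 * (((cX - a*(t*cX))*cY)^2 + ((t*cX + a*cX)*sY)^2)
        ≤ r^2 * (1 - a*t)^2 * (((cX - a*(t*cX))*cY)^2 + ((t*cX + a*cX)*sY)^2) := by
      calc (t - a)^2 * (((cX - a*(t*cX))*cY)^2 + ((t*cX + a*cX)*sY)^2)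
          ≤ (1 - a*t)^2 * (((t*cX - a*cX)*cY)^2 + ((cX + a*(t*cX))*sY)^2) := claim
        _ ≤ (1 - a*t)^2 * (r^2 * (((cX - a*(t*cX))*cY)^2 + ((t*cX + a*cX)*sY)^2)) :=
            mul_le_mul_of_nonneg_left h2' (sq_nonneg _)
        _ = r^2 * (1 - a*t)^2 * (((cX - a*(t*cX))*cY)^2 + ((t*cX + a*cX)*sY)^2) := by ring
    exact le_of_mul_le_mul_right step hn4pos
  have h1ar : 0 < 1 + a*r := by nlinarith
  rw [le_div_iff₀ h1ar]
  nlinarith [mul_nonneg hr0 h1at.le, sq_nonneg (t - a - r*(1-a*t)), sq_nonneg (t - a + r*(1-a*t))]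

/-- The arctan inequality (Lemma B). -/
lemma lemB {r a : ℝ} (hr0 : 0 ≤ r) (hr1 : r < 1) (ha : |a| < 1) :
    Real.arctan ((a + r) / (1 + a * r))
      ≤ Real.arctan r + (1 - r^2) / (1 + r^2) * Real.arctan a := by
  obtain ⟨ha1, ha2⟩ := abs_lt.1 ha
  set k := (1 - r^2) / (1 + r^2) with hk
  set D : ℝ → ℝ := fun x => Real.arctan r + k * Real.arctan x - Real.arctan ((x + r) / (1 + x * r))
    with hD
  have hD0 : D 0 = 0 := by simp [hD]
  have hderiv : ∀ x ∈ Ioo (-1 : ℝ) 1, HasDerivAt D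
      (k * (1 / (1 + x^2)) -
        1 / (1 + ((x + r) / (1 + x * r))^2) * ((1 * (1 + x * r) - (x + r) * (1 * r)) / (1 + x * r)^2)) x := by
    intro x hx
    have hne : 1 + x * r ≠ 0 := by nlinarith [hx.1, hx.2]
    have hq : HasDerivAt (fun x : ℝ => (x + r) / (1 + x * r))
        ((1 * (1 + x * r) - (x + r) * (1 * r)) / (1 + x * r)^2) x :=
      ((hasDerivAt_id x).add_const r).div (((hasDerivAt_id x).mul_const r).const_add 1) hne
    have harc := (Real.hasDerivAt_arctan ((x + r) / (1 + x * r))).comp x hq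
    exact (((Real.hasDerivAt_arctan x).const_mul k).const_add (Real.arctan r)).sub harc
  have hveq : ∀ x : ℝ, -1 < x → x < 1 →
      (k * (1 / (1 + x^2)) -
        1 / (1 + ((x + r) / (1 + x * r))^2) * ((1 * (1 + x * r) - (x + r) * (1 * r)) / (1 + x * r)^2))
      = (1 - r^2) * (4 * x * r) / ((1 + r^2) * (1 + x^2) * ((1 + x * r)^2 + (x + r)^2)) := by
    intro x h1 h2
    have hd1 : 0 < 1 + x * r := by nlinarith
    have hd2 : (0:ℝ) < (1 + x * r)^2 + (x + r)^2 := by positivity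
    have hx2 : (0:ℝ) < 1 + x^2 := by positivity
    have hr2 : (0:ℝ) < 1 + r^2 := by positivity
    have e : 1 + ((x + r) / (1 + x * r))^2 = ((1 + x * r)^2 + (x + r)^2) / (1 + x * r)^2 := by
      field_simp
    have hne2 : ((1 + x * r)^2 : ℝ) ≠ 0 := by positivity
    have hneS : ((1 + x * r)^2 + (x + r)^2 : ℝ) ≠ 0 := ne_of_gt hd2
    have hnex : ((1 + x^2) : ℝ) ≠ 0 := ne_of_gt hx2
    have hner : ((1 + r^2) : ℝ) ≠ 0 := ne_of_gt hr2
    rw [e, one_div_div, hk]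
    rw [div_mul_div_comm, div_mul_div_comm, div_sub_div _ _ (by positivity) (by positivity),
      div_eq_div_iff (by positivity) (by positivity)]
    ring
  rcases le_or_gt 0 a with hsgn | hsgn
  · -- monotone on [0, a]
    have hsub : Icc (0:ℝ) a ⊆ Ioo (-1:ℝ) 1 := fun x hx => ⟨by linarith [hx.1], by linarith [hx.2]⟩
    have hmono : MonotoneOn D (Icc 0 a) := by
      apply monotoneOn_of_deriv_nonneg (convex_Icc 0 a)
      · intro x hx
        exact (hderiv x (hsub hx)).differentiableAt.continuousAt.continuousWithinAt
      · intro x hx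
        rw [interior_Icc] at hx
        exact ((hderiv x (hsub ⟨hx.1.le, hx.2.le⟩)).differentiableAt).differentiableWithinAt
      · intro x hx
        rw [interior_Icc] at hx
        have hx' := hsub ⟨hx.1.le, hx.2.le⟩
        rw [(hderiv x hx').deriv, hveq x hx'.1 hx'.2]
        have hd1 : 0 < 1 + x * r := by nlinarith [hx'.1, hx'.2]
        have hd2 : (0:ℝ) < (1 + x * r)^2 + (x + r)^2 := by positivity
        apply div_nonneg
        · have hx0 : 0 ≤ x := hx.1.le
          have h4 : 0 ≤ 4 * x * r := by positivity
          have hr' : (0:ℝ) ≤ 1 - r^2 := by nlinarith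
          exact mul_nonneg hr' h4
        · positivity
    have := hmono (left_mem_Icc.2 hsgn) (right_mem_Icc.2 hsgn) hsgn
    rw [hD0] at this
    simp only [hD] at this
    linarith
  · -- antitone on [a, 0]
    have hsub : Icc a (0:ℝ) ⊆ Ioo (-1:ℝ) 1 := fun x hx => ⟨by linarith [hx.1], by linarith [hx.2]⟩
    have hanti : AntitoneOn D (Icc a 0) := by
      apply antitoneOn_of_deriv_nonpos (convex_Icc a 0)
      · intro x hx
        exact (hderiv x (hsub hx)).differentiableAt.continuousAt.continuousWithinAt
      · intro x hx
        rw [interior_Icc] at hx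
        exact ((hderiv x (hsub ⟨hx.1.le, hx.2.le⟩)).differentiableAt).differentiableWithinAt
      · intro x hx
        rw [interior_Icc] at hx
        have hx' := hsub ⟨hx.1.le, hx.2.le⟩
        rw [(hderiv x hx').deriv, hveq x hx'.1 hx'.2]
        have hd1 : 0 < 1 + x * r := by nlinarith [hx'.1, hx'.2]
        have hd2 : (0:ℝ) < (1 + x * r)^2 + (x + r)^2 := by positivity
        apply div_nonpos_of_nonpos_of_nonneg
        · have hx0 : x ≤ 0 := hx.2.le
          have h4 : 4 * x * r ≤ 0 := by
            have h5 : 0 ≤ -x := by linarith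
            nlinarith [mul_nonneg h5 hr0]
          have hr' : (0:ℝ) ≤ 1 - r^2 := by nlinarith
          exact mul_nonpos_iff.2 (Or.inl ⟨hr', h4⟩)
        · positivity
    have := hanti (left_mem_Icc.2 hsgn.le) (right_mem_Icc.2 hsgn.le) hsgn.le
    rw [hD0] at this
    simp only [hD] at this
    linarith

set_option maxHeartbeats 1000000 in
lemma scalar_lemma (G : ℂ → ℂ) (hG : DifferentiableOn ℂ G (ball 0 1))
    (hstrip : ∀ ζ ∈ ball (0:ℂ) 1, |(G ζ).re| < 1)
    (r : ℝ) (hr0 : 0 ≤ r) (hr1 : r < 1) :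
    (G r).re - (1 - r^2) / (1 + r^2) * (G 0).re ≤ 4 / Real.pi * Real.arctan r := by
  have hpi := Real.pi_pos
  have h0mem : (0:ℂ) ∈ ball (0:ℂ) 1 := mem_ball_self one_pos
  set c := (G 0).re with hc
  have hcabs : |c| < 1 := hstrip 0 h0mem
  obtain ⟨hc1, hc2⟩ := abs_lt.1 hcabs
  -- normalized G
  set G₁ : ℂ → ℂ := fun ζ => G ζ - ((G 0).im : ℂ) * Complex.I with hG₁
  have hG₁re : ∀ ζ, (G₁ ζ).re = (G ζ).re := by
    intro ζ; simp [hG₁]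
  have hG₁0 : G₁ 0 = (c : ℂ) := by
    simp only [hG₁, hc]
    rw [sub_eq_iff_eq_add]
    exact (Complex.re_add_im (G 0)).symm
  have hG₁diff : DifferentiableOn ℂ G₁ (ball 0 1) := by
    apply DifferentiableOn.sub hG
    exact differentiableOn_const _
  set a := Real.tan (Real.pi / 4 * c) with hadef
  have hπ4c : |Real.pi / 4 * c| < Real.pi / 4 := by
    rw [abs_mul, abs_of_pos (by positivity : (0:ℝ) < Real.pi / 4)]
    nlinarith [abs_nonneg c]
  have haabs : |a| < 1 := abs_tan_lt_one hπ4c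
  -- T and F
  set T : ℂ → ℂ := fun ζ => Complex.tan (((Real.pi / 4 : ℝ) : ℂ) * G₁ ζ) with hT
  have hqre : ∀ ζ, ((((Real.pi / 4 : ℝ) : ℂ) * G₁ ζ)).re = Real.pi / 4 * (G₁ ζ).re := by
    intro ζ; rw [Complex.re_ofReal_mul]
  have hstripq : ∀ ζ ∈ ball (0:ℂ) 1,
      |((((Real.pi / 4 : ℝ) : ℂ) * G₁ ζ)).re| < Real.pi / 4 := by
    intro ζ hζ
    rw [hqre, abs_mul, abs_of_pos (by positivity : (0:ℝ) < Real.pi / 4)]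
    have := hstrip ζ hζ
    rw [← hG₁re ζ] at this
    nlinarith [abs_nonneg (G₁ ζ).re]
  have hTabs : ∀ ζ ∈ ball (0:ℂ) 1, ‖T ζ‖ < 1 := by
    intro ζ hζ
    exact (tan_strip (hstripq ζ hζ)).2
  have hTdiff : DifferentiableOn ℂ T (ball 0 1) := by
    intro ζ hζ
    have hcos := (tan_strip (hstripq ζ hζ)).1
    have hin : DifferentiableWithinAt ℂ (fun ζ => ((Real.pi / 4 : ℝ) : ℂ) * G₁ ζ) (ball 0 1) ζ :=
      (hG₁diff ζ hζ).const_mul _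
    exact (Complex.differentiableAt_tan.2 hcos).comp_differentiableWithinAt ζ hin
  set F : ℂ → ℂ := fun ζ => (T ζ - (a:ℂ)) / (1 - (a:ℂ) * T ζ) with hF
  have hT0 : T 0 = (a:ℂ) := by
    rw [hT]
    simp only
    rw [hG₁0, ← Complex.ofReal_mul, ← Complex.ofReal_tan, hadef]
  have hF0 : F 0 = 0 := by
    rw [hF]; simp only; rw [hT0, sub_self, zero_div]
  have hFdiff : DifferentiableOn ℂ F (ball 0 1) := by
    intro ζ hζ
    have hne := mobius_ne haabs (hTabs ζ hζ)
    apply DifferentiableWithinAt.div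
    · exact (hTdiff ζ hζ).sub_const _
    · exact (differentiableWithinAt_const _).sub ((hTdiff ζ hζ).const_mul _)
    · exact hne
  have hFmaps : MapsTo F (ball 0 1) (ball 0 1) := by
    intro ζ hζ
    rw [mem_ball_zero_iff]
    exact mobius_abs_lt haabs (hTabs ζ hζ)
  -- Schwarz
  have hrball : ‖(r:ℂ)‖ < 1 := by
    rw [Complex.norm_real, Real.norm_eq_abs, abs_of_nonneg hr0]; exact hr1
  have hSchwarz : ‖F (r:ℂ)‖ ≤ ‖(r:ℂ)‖ :=
    Complex.norm_le_norm_of_mapsTo_ball_self hFdiff (hFmaps.mono_right ball_subset_closedBall) hF0 hrball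
  rw [Complex.norm_real, Real.norm_eq_abs, abs_of_nonneg hr0] at hSchwarz
  -- apply lemA
  have hrmem : (r:ℂ) ∈ ball (0:ℂ) 1 := mem_ball_zero_iff.2 hrball
  set q : ℂ := ((Real.pi / 4 : ℝ) : ℂ) * G₁ (r:ℂ) with hqdef
  set Xv := q.re with hXv
  set Yv := q.im with hYv
  have hqeq : q = (Xv:ℂ) + (Yv:ℂ) * Complex.I := (Complex.re_add_im q).symm
  have hXabs : |Xv| < Real.pi / 4 := hstripq (r:ℂ) hrmem
  have hFr : ‖(Complex.tan ((Xv:ℂ) + (Yv:ℂ) * Complex.I) - (a:ℂ)) /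
      (1 - (a:ℂ) * Complex.tan ((Xv:ℂ) + (Yv:ℂ) * Complex.I))‖ ≤ r := by
    rw [← hqeq]
    exact hSchwarz
  have htX := lemA hXabs haabs hr0 hr1 hFr
  -- from tan bound to arctan bound
  have h1ar : 0 < 1 + a * r := by
    obtain ⟨hA1, hA2⟩ := abs_lt.1 haabs; nlinarith
  have hsabs : |(a + r) / (1 + a * r)| < 1 := by
    rw [abs_div, abs_of_pos h1ar, div_lt_one h1ar]
    obtain ⟨hA1, hA2⟩ := abs_lt.1 haabs
    rw [abs_lt]; constructor <;> nlinarith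
  have hXle : Xv ≤ Real.arctan ((a + r) / (1 + a * r)) := by
    have := Real.arctan_strictMono.monotone htX
    rwa [Real.arctan_tan (by linarith [abs_lt.1 hXabs]) (by linarith [abs_lt.1 hXabs])] at this
  have harctana : Real.arctan a = Real.pi / 4 * c := by
    rw [hadef]
    exact Real.arctan_tan (by linarith [abs_lt.1 hπ4c]) (by linarith [abs_lt.1 hπ4c])
  have hB := lemB (a := a) hr0 hr1 haabs
  rw [harctana] at hB
  have hXval : Xv = Real.pi / 4 * (G (r:ℂ)).re := by
    rw [hXv, hqdef, Complex.re_ofReal_mul, hG₁re]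
  have hfinal : Real.pi / 4 * (G (r:ℂ)).re
      ≤ Real.arctan r + (1 - r^2) / (1 + r^2) * (Real.pi / 4 * c) := by
    rw [← hXval]; linarith
  have h4pi : 0 < 4 / Real.pi := by positivity
  have hmul := mul_le_mul_of_nonneg_left hfinal (le_of_lt h4pi)
  have e1' : 4 / Real.pi * (Real.pi / 4 * (G (r:ℂ)).re) = (G (r:ℂ)).re := by
    field_simp
  have e2' : 4 / Real.pi * (Real.arctan r + (1 - r^2) / (1 + r^2) * (Real.pi / 4 * c))
      = 4 / Real.pi * Real.arctan r + (1 - r^2) / (1 + r^2) * c := by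
    field_simp
  have hgoal : (G (r:ℂ)).re - (1 - r^2) / (1 + r^2) * c ≤ 4 / Real.pi * Real.arctan r := by
    linarith
  rw [hc] at hgoal
  exact hgoal

end PHSchwarz

set_option maxHeartbeats 1000000 in
theorem pluriharmonic_schwarz_banach {X Y : Type*}
    [NormedAddCommGroup X] [NormedSpace ℂ X] [CompleteSpace X]
    [NormedAddCommGroup Y] [NormedSpace ℂ Y] [CompleteSpace Y]
    (f : X → Y)
    (hph : ∀ (l : Y →L[ℂ] ℂ) (φ : ℂ → X), DifferentiableOn ℂ φ (ball 0 1) →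
      MapsTo φ (ball 0 1) (ball 0 1) → IsHarmonicOnDisk (fun ζ => l (f (φ ζ))))
    (hb : ∀ z ∈ ball (0:X) 1, ‖f z‖ < 1)
    (z : X) (hz : z ∈ ball (0:X) 1) :
    ‖f z - ((1 - ‖z‖ ^ 2) / (1 + ‖z‖ ^ 2)) • f 0‖ ≤ (4 / Real.pi) * Real.arctan ‖z‖ := by
  have hpi := Real.pi_pos
  have harctan0 : 0 ≤ Real.arctan ‖z‖ := by
    rw [← Real.arctan_zero]
    exact Real.arctan_strictMono.monotone (norm_nonneg z)
  have hRHS : 0 ≤ (4 / Real.pi) * Real.arctan ‖z‖ := by positivity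
  rcases eq_or_ne z 0 with rfl | hz0
  · simp only [norm_zero, ne_eq, OfNat.ofNat_ne_zero, not_false_eq_true, zero_pow, sub_zero,
      add_zero, div_one, one_smul, sub_self]
    simpa using hRHS
  set k : ℝ := (1 - ‖z‖ ^ 2) / (1 + ‖z‖ ^ 2) with hk
  set y0 : Y := f z - k • f 0 with hy0
  rcases eq_or_ne y0 0 with h0 | hne
  · rw [h0, norm_zero]; exact hRHS
  obtain ⟨l, hl1, hlv⟩ := exists_dual_vector ℂ y0 (norm_ne_zero_iff.2 hne)
  -- the curve
  set u : X := ((‖z‖ : ℂ))⁻¹ • z with hu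
  have hunorm : ‖u‖ = 1 := by
    rw [hu]
    exact norm_smul_inv_norm (𝕜 := ℂ) hz0
  set curve : ℂ → X := fun ζ => ζ • u with hcurve
  have hcdiff : DifferentiableOn ℂ curve (ball 0 1) := by
    apply Differentiable.differentiableOn
    exact fun ζ => (differentiableAt_id.smul_const u)
  have hcmaps : MapsTo curve (ball 0 1) (ball 0 1) := by
    intro ζ hζ
    rw [mem_ball_zero_iff] at hζ ⊢
    rw [hcurve]
    simp only
    rw [norm_smul, hunorm, mul_one]
    exact hζ
  have hznorm : ‖z‖ < 1 := mem_ball_zero_iff.1 hz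
  have hznorm0 : (0:ℝ) ≤ ‖z‖ := norm_nonneg z
  have hcz : curve ((‖z‖ : ℝ) : ℂ) = z := by
    rw [hcurve]
    simp only [hu]
    rw [smul_smul]
    rw [mul_inv_cancel₀ (by exact_mod_cast norm_ne_zero_iff.2 hz0), one_smul]
  have hc0 : curve 0 = 0 := by rw [hcurve]; simp
  obtain ⟨h, g, hhdiff, hgdiff, hrep⟩ := hph l curve hcdiff hcmaps
  set G : ℂ → ℂ := fun ζ => h ζ + g ζ with hG
  have hGdiff : DifferentiableOn ℂ G (ball 0 1) := hhdiff.add hgdiff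
  have hGre : ∀ ζ ∈ ball (0:ℂ) 1, (G ζ).re = (l (f (curve ζ))).re := by
    intro ζ hζ
    have := hrep ζ hζ
    have : (l (f (curve ζ))).re = (h ζ + (starRingEnd ℂ) (g ζ)).re := by rw [← this]
    rw [this, hG]
    simp [Complex.add_re, Complex.conj_re]
  have hstrip : ∀ ζ ∈ ball (0:ℂ) 1, |(G ζ).re| < 1 := by
    intro ζ hζ
    rw [hGre ζ hζ]
    calc |(l (f (curve ζ))).re| ≤ ‖l (f (curve ζ))‖ := Complex.abs_re_le_norm _
      _ = ‖l (f (curve ζ))‖ := rfl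
      _ ≤ ‖l‖ * ‖f (curve ζ)‖ := l.le_opNorm _
      _ = ‖f (curve ζ)‖ := by rw [hl1, one_mul]
      _ < 1 := hb _ (hcmaps hζ)
  have hrmem : ((‖z‖ : ℝ) : ℂ) ∈ ball (0:ℂ) 1 := by
    rw [mem_ball_zero_iff, Complex.norm_real, Real.norm_eq_abs, abs_of_nonneg hznorm0]
    exact hznorm
  have h0mem : (0:ℂ) ∈ ball (0:ℂ) 1 := mem_ball_self one_pos
  -- value identity
  have hval2 : l y0 = l (f z) - (k : ℂ) * l (f 0) := by
    rw [hy0, map_sub, ContinuousLinearMap.map_smul_of_tower, Complex.real_smul]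
  have hnorm_eq : ‖y0‖ = (l (f z)).re - k * (l (f 0)).re := by
    have h' := hlv
    rw [hval2] at h'
    have hre := congrArg Complex.re h'
    simp only [Complex.sub_re, Complex.re_ofReal_mul, Complex.ofReal_re,
      RCLike.ofReal_re] at hre
    simp at hre
    linarith [hre]
  have hGr : (G ((‖z‖ : ℝ) : ℂ)).re = (l (f z)).re := by
    rw [hGre _ hrmem, hcz]
  have hG0 : (G 0).re = (l (f 0)).re := by
    rw [hGre _ h0mem, hc0]
  have hmain := PHSchwarz.scalar_lemma G hGdiff hstrip ‖z‖ hznorm0 hznorm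
  rw [hGr, hG0] at hmain
  rw [hnorm_eq]
  exact hmain
end

section
/- Let f : U → U be a harmonic mapping of the unit disk into itself with f(0) = 0. Then for all z ∈ U, |f(z)| ≤ (4/π) arctan( |z| (|z| + (π/4)(|f_z(0)| + |f_{z̄}(0)|)) / (1 + (π/4)(|f_z(0)| + |f_{z̄}(0)|)|z|) ). -/
open Metric Complex


lemma sq_abs_sin_eq (ζ : ℂ) : (‖Complex.sin ζ‖)^2
    = Real.sin ζ.re ^ 2 * Real.cosh ζ.im ^ 2 + Real.cos ζ.re ^ 2 * Real.sinh ζ.im ^ 2 := by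
  have hs : Complex.sin ζ = (Real.sin ζ.re * Real.cosh ζ.im : ℝ)
      + (Real.cos ζ.re * Real.sinh ζ.im : ℝ) * I := by
    conv_lhs => rw [← Complex.re_add_im ζ]
    rw [Complex.sin_add, Complex.sin_mul_I, Complex.cos_mul_I]
    push_cast
    ring
  rw [hs, Complex.sq_norm, Complex.normSq_add_mul_I, mul_pow, mul_pow]

lemma sq_abs_cos_eq (ζ : ℂ) : (‖Complex.cos ζ‖)^2
    = Real.cos ζ.re ^ 2 * Real.cosh ζ.im ^ 2 + Real.sin ζ.re ^ 2 * Real.sinh ζ.im ^ 2 := by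
  have hs : Complex.cos ζ = (Real.cos ζ.re * Real.cosh ζ.im : ℝ)
      + (-(Real.sin ζ.re * Real.sinh ζ.im) : ℝ) * I := by
    conv_lhs => rw [← Complex.re_add_im ζ]
    rw [Complex.cos_add, Complex.sin_mul_I, Complex.cos_mul_I]
    push_cast
    ring
  rw [hs, Complex.sq_norm, Complex.normSq_add_mul_I, mul_pow, neg_pow, mul_pow]
  ring

lemma strip_cos_pos {ζ : ℂ} (hζ : |ζ.re| < Real.pi/4) :
    0 < ‖Complex.cos ζ‖ := by
  have hc : 0 < Real.cos ζ.re := by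
    apply Real.cos_pos_of_mem_Ioo
    constructor <;> [nlinarith [abs_lt.1 hζ, Real.pi_pos]; nlinarith [abs_lt.1 hζ, Real.pi_pos]]
  have h1 : (1:ℝ) ≤ Real.cosh ζ.im := Real.one_le_cosh _
  have heq := sq_abs_cos_eq ζ
  have hsq : 0 < ‖Complex.cos ζ‖^2 := by
    have hc2 : (1:ℝ) ≤ Real.cosh ζ.im ^ 2 := by nlinarith
    nlinarith [pow_pos hc 2, mul_nonneg (sq_nonneg (Real.sin ζ.re)) (sq_nonneg (Real.sinh ζ.im)),
      mul_le_mul_of_nonneg_left hc2 (pow_pos hc 2).le]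
  rcases (norm_nonneg (Complex.cos ζ)).eq_or_lt with h | h
  · exfalso; rw [← h] at hsq; simp at hsq
  · exact h

lemma strip_cos_ne {ζ : ℂ} (hζ : |ζ.re| < Real.pi/4) : Complex.cos ζ ≠ 0 := by
  intro h
  have := strip_cos_pos hζ
  rw [h] at this
  simp at this

lemma strip_sin_sq_lt {ζ : ℂ} (hζ : |ζ.re| < Real.pi/4) :
    Real.sin ζ.re ^ 2 < Real.cos ζ.re ^ 2 := by
  have h2 : Real.cos (2 * ζ.re) > 0 := by
    apply Real.cos_pos_of_mem_Ioo
    constructor <;> [nlinarith [abs_lt.1 hζ]; nlinarith [abs_lt.1 hζ]]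
  have := Real.cos_two_mul' ζ.re
  linarith

lemma strip_abs_tan_lt_one {ζ : ℂ} (hζ : |ζ.re| < Real.pi/4) :
    ‖Complex.tan ζ‖ < 1 := by
  have hcos := strip_cos_pos hζ
  have hkey : (‖Complex.sin ζ‖)^2 < (‖Complex.cos ζ‖)^2 := by
    rw [sq_abs_sin_eq, sq_abs_cos_eq]
    have h1 := strip_sin_sq_lt hζ
    have h2 := Real.cosh_sq_sub_sinh_sq ζ.im
    nlinarith [Real.one_le_cosh ζ.im, sq_nonneg (Real.sinh ζ.im)]
  have habs : ‖Complex.sin ζ‖ < ‖Complex.cos ζ‖ := by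
    nlinarith [norm_nonneg (Complex.sin ζ), norm_nonneg (Complex.cos ζ)]
  rw [Complex.tan_eq_sin_div_cos, norm_div]
  exact (div_lt_one hcos).2 habs

lemma strip_tan_le {ζ : ℂ} (h0 : 0 ≤ ζ.re) (hζ : ζ.re < Real.pi/4) :
    Real.tan ζ.re ≤ ‖Complex.tan ζ‖ := by
  have habs : |ζ.re| < Real.pi/4 := by rw [_root_.abs_of_nonneg h0]; exact hζ
  have hcosR : 0 < Real.cos ζ.re := by
    apply Real.cos_pos_of_mem_Ioo
    constructor <;> nlinarith [Real.pi_pos]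
  have hsinR : 0 ≤ Real.sin ζ.re := Real.sin_nonneg_of_nonneg_of_le_pi h0 (by nlinarith [Real.pi_pos])
  have hcos := strip_cos_pos habs
  have hkey : Real.sin ζ.re * ‖Complex.cos ζ‖ ≤ Real.cos ζ.re * ‖Complex.sin ζ‖ := by
    have hsq : (Real.sin ζ.re * ‖Complex.cos ζ‖)^2
        ≤ (Real.cos ζ.re * ‖Complex.sin ζ‖)^2 := by
      rw [mul_pow, mul_pow, sq_abs_sin_eq, sq_abs_cos_eq]
      have h1 := strip_sin_sq_lt habs
      have key : 0 ≤ Real.sinh ζ.im^2 * ((Real.cos ζ.re^2 - Real.sin ζ.re^2) * (Real.cos ζ.re^2 + Real.sin ζ.re^2)) :=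
        mul_nonneg (sq_nonneg _) (mul_nonneg (by linarith) (by positivity))
      nlinarith [key]
    nlinarith [mul_nonneg hsinR (norm_nonneg (Complex.cos ζ)),
      mul_nonneg hcosR.le (norm_nonneg (Complex.sin ζ))]
  rw [Real.tan_eq_sin_div_cos, Complex.tan_eq_sin_div_cos, norm_div]
  rw [div_le_div_iff₀ hcosR hcos]
  linarith [hkey]

-- |u - v| and |1 - conj v * u| squared expansions
lemma sq_abs_sub (u v : ℂ) : ‖u - v‖ ^ 2
    = ‖u‖ ^ 2 - 2 * ((starRingEnd ℂ) v * u).re + ‖v‖ ^ 2 := by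
  rw [Complex.sq_norm, Complex.normSq_sub, Complex.normSq_eq_norm_sq, Complex.normSq_eq_norm_sq]
  rw [mul_comm ((starRingEnd ℂ) v) u]
  ring

lemma sq_abs_one_sub (u v : ℂ) : ‖1 - (starRingEnd ℂ) v * u‖ ^ 2
    = 1 - 2 * ((starRingEnd ℂ) v * u).re + ‖v‖ ^ 2 * ‖u‖ ^ 2 := by
  rw [Complex.sq_norm, Complex.normSq_sub, Complex.normSq_one, Complex.normSq_mul,
    Complex.normSq_conj, Complex.normSq_eq_norm_sq, Complex.normSq_eq_norm_sq]
  simp [Complex.conj_re]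
  ring

lemma schwarz_pick_aux {φ : ℂ → ℂ} (hd : DifferentiableOn ℂ φ (ball 0 1))
    (hb : ∀ w ∈ ball (0:ℂ) 1, ‖φ w‖ ≤ 1) {z : ℂ} (hz : z ∈ ball (0:ℂ) 1) :
    ‖φ z‖ ≤ (‖z‖ + ‖φ 0‖) /
      (1 + ‖φ 0‖ * ‖z‖) := by
  have h0m : (0:ℂ) ∈ ball (0:ℂ) 1 := mem_ball_self one_pos
  set a0 : ℂ := φ 0 with ha0
  set a : ℝ := ‖a0‖ with ha
  have ha0nn : 0 ≤ a := norm_nonneg _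
  have ha1 : a ≤ 1 := hb 0 h0m
  have hr : ‖z‖ < 1 := by simpa using mem_ball_zero_iff.1 hz
  have hrnn : 0 ≤ ‖z‖ := norm_nonneg _
  have hden : 0 < 1 + a * ‖z‖ := by nlinarith
  rcases eq_or_lt_of_le ha1 with heq | ha'
  · have : (‖z‖ + a) / (1 + a * ‖z‖) = 1 := by
      rw [heq]; field_simp; ring
    rw [this]; exact hb z hz
  -- a < 1
  · set M : ℂ → ℂ := fun w => (w - a0) / (1 - (starRingEnd ℂ) a0 * w) with hM
    have hne : ∀ u : ℂ, ‖u‖ ≤ 1 → 1 - (starRingEnd ℂ) a0 * u ≠ 0 := by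
      intro u hu hcon
      have h1 : (1:ℂ) = (starRingEnd ℂ) a0 * u := by linear_combination hcon
      have : (1:ℝ) = a * ‖u‖ := by
        calc (1:ℝ) = ‖(1:ℂ)‖ := by simp
        _ = ‖(starRingEnd ℂ) a0 * u‖ := by rw [← h1]
        _ = a * ‖u‖ := by rw [norm_mul, Complex.norm_conj]
      nlinarith
    have hMle : ∀ u : ℂ, ‖u‖ ≤ 1 → ‖M u‖ ≤ 1 := by
      intro u hu
      have hdpos : 0 < ‖1 - (starRingEnd ℂ) a0 * u‖ :=
        norm_pos_iff.2 (hne u hu)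
      rw [hM]
      simp only [norm_div]
      apply div_le_one_of_le₀ _ hdpos.le
      have hsq : ‖u - a0‖ ^ 2 ≤ ‖1 - (starRingEnd ℂ) a0 * u‖ ^ 2 := by
        rw [sq_abs_sub, sq_abs_one_sub]
        nlinarith [mul_nonneg (by nlinarith : (0:ℝ) ≤ 1 - ‖a0‖^2)
          (by nlinarith [norm_nonneg u] : (0:ℝ) ≤ 1 - ‖u‖^2)]
      nlinarith [norm_nonneg (u - a0), hdpos]
    set χ : ℂ → ℂ := fun w => M (φ w) with hχ
    have hχd : DifferentiableOn ℂ χ (ball 0 1) := by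
      apply DifferentiableOn.div (hd.sub_const a0)
      · exact (differentiableOn_const 1).sub ((differentiableOn_const _).mul hd)
      · intro w hw; exact hne (φ w) (hb w hw)
    have hχ0 : χ 0 = 0 := by
      simp [hχ, hM, ha0]
    have hχb : ∀ w ∈ ball (0:ℂ) 1, ‖χ w‖ ≤ 1 := fun w hw => hMle (φ w) (hb w hw)
    have hχz : ‖χ z‖ ≤ ‖z‖ := by
      have key : ∀ ε : ℝ, 0 < ε → ‖χ z‖ ≤ ‖z‖ + ε := by
        intro ε hε
        have hmaps : Set.MapsTo χ (ball 0 1) (ball (χ 0) (1 + ε)) := by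
          intro w hw
          rw [hχ0, mem_ball_zero_iff]
          calc ‖χ w‖ = ‖χ w‖ := rfl
          _ ≤ 1 := hχb w hw
          _ < 1 + ε := by linarith
        have hds := norm_dslope_le_div_of_mapsTo_ball hχd (hmaps.mono_right ball_subset_closedBall) hz
        rcases eq_or_ne z 0 with rfl | hz0
        · rw [hχ0]; simpa using hε.le
        · rw [dslope_of_ne _ hz0, slope_def_field] at hds
          have : ‖χ z - χ 0‖ / ‖z - 0‖ ≤ (1 + ε) / 1 := by
            simpa [norm_div] using hds
          rw [hχ0, sub_zero, sub_zero, div_one] at this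
          have hzpos : 0 < ‖z‖ := norm_pos_iff.2 hz0
          rw [div_le_iff₀ hzpos] at this
          nlinarith
      by_contra hcon
      push_neg at hcon
      have := key ((‖χ z‖ - ‖z‖)/2) (by linarith)
      linarith
    -- unfold χ z
    have hdpos : 0 < ‖1 - (starRingEnd ℂ) a0 * φ z‖ :=
      norm_pos_iff.2 (hne (φ z) (hb z hz))
    have hineq : ‖φ z - a0‖ ≤ ‖z‖ * ‖1 - (starRingEnd ℂ) a0 * φ z‖ := by
      have : ‖φ z - a0‖ / ‖1 - (starRingEnd ℂ) a0 * φ z‖ ≤ ‖z‖ := by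
        simpa [hχ, hM, norm_div] using hχz
      rw [div_le_iff₀ hdpos] at this
      linarith [this]
    -- now the algebra
    set s := ‖φ z‖ with hs
    set r := ‖z‖ with hrr
    set t := ((starRingEnd ℂ) a0 * φ z).re with htt
    have hsnn : 0 ≤ s := norm_nonneg _
    have hs1 : s ≤ 1 := hb z hz
    have ht : t ≤ a * s := by
      calc t ≤ ‖(starRingEnd ℂ) a0 * φ z‖ := Complex.re_le_norm _
      _ = a * s := by rw [norm_mul, Complex.norm_conj]
    have hsq : s^2 - 2*t + a^2 ≤ r^2 * (1 - 2*t + a^2 * s^2) := by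
      have h3 := pow_le_pow_left₀ (norm_nonneg (φ z - a0)) hineq 2
      rw [mul_pow, sq_abs_sub, sq_abs_one_sub] at h3
      rw [← htt, ← ha] at h3
      linarith [h3]
    have key : 0 ≤ (1 - r^2) * (a*s - t) :=
      mul_nonneg (by nlinarith) (by linarith)
    have e2 : (s - a)^2 ≤ (r * (1 - a*s))^2 := by nlinarith [hsq, key]
    have hras : 0 ≤ r * (1 - a*s) := mul_nonneg hrnn (by nlinarith)
    have e3 : s - a ≤ r * (1 - a*s) := by nlinarith [sq_nonneg (s - a + r*(1-a*s))]
    rw [le_div_iff₀ hden]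
    nlinarith [e3]

set_option maxHeartbeats 2000000 in
theorem zhu_harmonic_schwarz (f h g : ℂ → ℂ)
    (hh : DifferentiableOn ℂ h (ball 0 1))
    (hg : DifferentiableOn ℂ g (ball 0 1))
    (hfhg : ∀ z ∈ ball (0:ℂ) 1, f z = h z + (starRingEnd ℂ) (g z))
    (hb : ∀ z ∈ ball (0:ℂ) 1, ‖f z‖ < 1)
    (hf0 : f 0 = 0)
    (z : ℂ) (hz : z ∈ ball (0:ℂ) 1) :
    ‖f z‖ ≤ (4 / Real.pi) * Real.arctan
      (‖z‖ *
        (‖z‖ + (Real.pi / 4) * (‖deriv h 0‖ + ‖deriv g 0‖)) /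
        (1 + (Real.pi / 4) * (‖deriv h 0‖ + ‖deriv g 0‖) *
          ‖z‖)) := by
  have hπ := Real.pi_pos
  have h0m : (0:ℂ) ∈ ball (0:ℂ) 1 := mem_ball_self one_pos
  set c := Real.pi / 4 * (‖deriv h 0‖ + ‖deriv g 0‖) with hc
  have hc0 : 0 ≤ c := by positivity
  have hr : ‖z‖ < 1 := by simpa using mem_ball_zero_iff.1 hz
  have hrnn : 0 ≤ ‖z‖ := norm_nonneg _
  have hdenc : 0 < 1 + c * ‖z‖ := by nlinarith
  have hargnn : 0 ≤ ‖z‖ * (‖z‖ + c) / (1 + c * ‖z‖) := by positivity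
  have harctnn : 0 ≤ Real.arctan (‖z‖ * (‖z‖ + c) / (1 + c * ‖z‖)) := by
    rw [← Real.arctan_zero]
    exact Real.arctan_strictMono.monotone hargnn
  by_cases hfz : f z = 0
  · rw [hfz]
    simp only [norm_zero]
    positivity
  have hfzabs : 0 < ‖f z‖ := norm_pos_iff.2 hfz
  have hz0 : z ≠ 0 := by rintro rfl; exact hfz hf0
  set e : ℂ := f z / ((‖f z‖ : ℝ) : ℂ) with he_def
  have habsne : ((‖f z‖ : ℝ) : ℂ) ≠ 0 := by
    exact_mod_cast hfzabs.ne'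
  have he : ‖e‖ = 1 := by
    rw [he_def, norm_div, Complex.norm_real, Real.norm_eq_abs, _root_.abs_of_nonneg (norm_nonneg _)]
    exact div_self hfzabs.ne'
  have hefz : (starRingEnd ℂ) e * f z = ((‖f z‖ : ℝ) : ℂ) := by
    rw [he_def, map_div₀, Complex.conj_ofReal, div_mul_eq_mul_div, mul_comm, Complex.mul_conj,
      Complex.normSq_eq_norm_sq]
    push_cast
    rw [sq, mul_div_assoc, div_self habsne, mul_one]
  set K : ℂ → ℂ := fun w => (starRingEnd ℂ) e * h w + e * g w with hK
  set H : ℂ → ℂ := fun w => K w - K 0 with hHdef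
  have hKre : ∀ w ∈ ball (0:ℂ) 1, (K w).re = ((starRingEnd ℂ) e * f w).re := by
    intro w hw
    have h1 : (starRingEnd ℂ) e * f w = (starRingEnd ℂ) e * h w + (starRingEnd ℂ) (e * g w) := by
      rw [hfhg w hw, map_mul]; ring
    rw [h1, hK]
    simp [Complex.add_re, Complex.conj_re]
  have hK0re : (K 0).re = 0 := by
    rw [hKre 0 h0m, hf0, mul_zero, Complex.zero_re]
  have hHre : ∀ w ∈ ball (0:ℂ) 1, (H w).re = ((starRingEnd ℂ) e * f w).re := by
    intro w hw
    rw [hHdef]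
    simp only [Complex.sub_re, hK0re, sub_zero]
    exact hKre w hw
  have hH0 : H 0 = 0 := sub_self _
  have hHd : DifferentiableOn ℂ H (ball 0 1) :=
    ((hh.const_mul _).add (hg.const_mul _)).sub_const _
  set k : ℂ := ((Real.pi / 4 : ℝ) : ℂ) with hk
  set ψ : ℂ → ℂ := fun w => Complex.tan (k * H w) with hψ
  have hζre : ∀ w : ℂ, (k * H w).re = Real.pi / 4 * (H w).re := fun w =>
    Complex.re_ofReal_mul _ _
  have hζlt : ∀ w ∈ ball (0:ℂ) 1, |(k * H w).re| < Real.pi / 4 := by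
    intro w hw
    rw [hζre, abs_mul, _root_.abs_of_nonneg (by positivity : (0:ℝ) ≤ Real.pi/4)]
    have h1 : |(H w).re| < 1 := by
      rw [hHre w hw]
      calc |((starRingEnd ℂ) e * f w).re| ≤ ‖(starRingEnd ℂ) e * f w‖ :=
        Complex.abs_re_le_norm _
      _ = ‖f w‖ := by rw [norm_mul, Complex.norm_conj, he, one_mul]
      _ < 1 := hb w hw
    nlinarith [abs_nonneg (H w).re]
  have hψd : DifferentiableOn ℂ ψ (ball 0 1) := by
    intro w hw
    have hin : DifferentiableWithinAt ℂ (fun w => k * H w) (ball 0 1) w := (hHd w hw).const_mul k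
    exact (Complex.differentiableAt_tan.2
      (strip_cos_ne (hζlt w hw))).comp_differentiableWithinAt w hin
  have hψ0 : ψ 0 = 0 := by
    rw [hψ]
    simp only [hH0, mul_zero, Complex.tan_zero]
  have hψlt : ∀ w ∈ ball (0:ℂ) 1, ‖ψ w‖ < 1 := fun w hw =>
    strip_abs_tan_lt_one (hζlt w hw)
  have hmaps : Set.MapsTo ψ (ball 0 1) (ball (ψ 0) 1) := by
    intro w hw
    rw [hψ0, mem_ball_zero_iff]
    exact hψlt w hw
  have hφd : DifferentiableOn ℂ (dslope ψ 0) (ball 0 1) :=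
    (Complex.differentiableOn_dslope (ball_mem_nhds 0 one_pos)).2 hψd
  have hφb : ∀ w ∈ ball (0:ℂ) 1, ‖dslope ψ 0 w‖ ≤ 1 := by
    intro w hw
    have := norm_dslope_le_div_of_mapsTo_ball hψd (hmaps.mono_right ball_subset_closedBall) hw
    simpa using this
  -- derivative
  have hh0 : DifferentiableAt ℂ h 0 := hh.differentiableAt (isOpen_ball.mem_nhds h0m)
  have hg0 : DifferentiableAt ℂ g 0 := hg.differentiableAt (isOpen_ball.mem_nhds h0m)
  have hHder : HasDerivAt H ((starRingEnd ℂ) e * deriv h 0 + e * deriv g 0) 0 :=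
    ((hh0.hasDerivAt.const_mul _).add (hg0.hasDerivAt.const_mul _)).sub_const _
  have hψder : HasDerivAt ψ (k * ((starRingEnd ℂ) e * deriv h 0 + e * deriv g 0)) 0 := by
    have h1 : HasDerivAt (fun w => k * H w)
        (k * ((starRingEnd ℂ) e * deriv h 0 + e * deriv g 0)) 0 := hHder.const_mul k
    have h2 : HasDerivAt Complex.tan (1 / Complex.cos (k * H 0) ^ 2) (k * H 0) :=
      Complex.hasDerivAt_tan (by rw [hH0, mul_zero, Complex.cos_zero]; exact one_ne_zero)
    have h3 := h2.comp 0 h1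
    have h4 : (1 : ℂ) / Complex.cos (k * H 0) ^ 2 = 1 := by
      rw [hH0, mul_zero, Complex.cos_zero, one_pow, div_one]
    rw [h4, one_mul] at h3
    exact h3
  have hderψ : deriv ψ 0 = k * ((starRingEnd ℂ) e * deriv h 0 + e * deriv g 0) := hψder.deriv
  set a := ‖deriv ψ 0‖ with ha_def
  have ha_le : a ≤ c := by
    rw [ha_def, hderψ, norm_mul, hk, Complex.norm_real, Real.norm_eq_abs,
      _root_.abs_of_nonneg (by positivity : (0:ℝ) ≤ Real.pi/4), hc]
    have h1 : ‖(starRingEnd ℂ) e * deriv h 0 + e * deriv g 0‖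
        ≤ ‖deriv h 0‖ + ‖deriv g 0‖ := by
      calc ‖(starRingEnd ℂ) e * deriv h 0 + e * deriv g 0‖
          ≤ ‖(starRingEnd ℂ) e * deriv h 0‖ + ‖e * deriv g 0‖ :=
            norm_add_le _ _
      _ = ‖deriv h 0‖ + ‖deriv g 0‖ := by
          rw [norm_mul, norm_mul, Complex.norm_conj, he, one_mul, one_mul]
    exact mul_le_mul_of_nonneg_left h1 (by positivity)
  have ha0 : 0 ≤ a := norm_nonneg _
  have ha1 : a ≤ 1 := by
    have h1 := hφb 0 h0m
    rwa [dslope_same] at h1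
  have hφz := schwarz_pick_aux hφd hφb hz
  rw [dslope_same] at hφz
  have hψzabs : ‖ψ z‖ = ‖z‖ * ‖dslope ψ 0 z‖ := by
    have h1 : dslope ψ 0 z = ψ z / z := by
      rw [dslope_of_ne _ hz0, slope_def_field, hψ0, sub_zero, sub_zero]
    rw [h1, norm_div, mul_comm, div_mul_cancel₀ _ (norm_ne_zero_iff.2 hz0)]
  have hchain1 : ‖ψ z‖ ≤ ‖z‖ * ((‖z‖ + a) / (1 + a * ‖z‖)) := by
    rw [hψzabs]
    exact mul_le_mul_of_nonneg_left hφz hrnn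
  have hdena : 0 < 1 + a * ‖z‖ := by nlinarith
  have hchain2 : (‖z‖ + a) / (1 + a * ‖z‖)
      ≤ (‖z‖ + c) / (1 + c * ‖z‖) := by
    rw [div_le_div_iff₀ hdena hdenc]
    nlinarith [mul_nonneg (sub_nonneg.2 ha_le) (by nlinarith : (0:ℝ) ≤ 1 - ‖z‖ ^ 2)]
  have habsψz : ‖ψ z‖ ≤ ‖z‖ * (‖z‖ + c) / (1 + c * ‖z‖) := by
    calc ‖ψ z‖ ≤ ‖z‖ * ((‖z‖ + a) / (1 + a * ‖z‖)) := hchain1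
    _ ≤ ‖z‖ * ((‖z‖ + c) / (1 + c * ‖z‖)) :=
        mul_le_mul_of_nonneg_left hchain2 hrnn
    _ = ‖z‖ * (‖z‖ + c) / (1 + c * ‖z‖) := by ring
  -- real part at z
  have hHzre : (H z).re = ‖f z‖ := by
    rw [hHre z hz, hefz, Complex.ofReal_re]
  have hxre : (k * H z).re = Real.pi / 4 * ‖f z‖ := by
    rw [hζre, hHzre]
  have hx0 : 0 ≤ (k * H z).re := by rw [hxre]; positivity
  have hxlt : (k * H z).re < Real.pi / 4 := by
    have := hζlt z hz
    exact lt_of_abs_lt this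
  have htan : Real.tan ((k * H z).re) ≤ ‖ψ z‖ := strip_tan_le hx0 hxlt
  have harct : Real.pi / 4 * ‖f z‖
      ≤ Real.arctan (‖z‖ * (‖z‖ + c) / (1 + c * ‖z‖)) := by
    have h1 : Real.pi / 4 * ‖f z‖
        = Real.arctan (Real.tan (Real.pi / 4 * ‖f z‖)) := by
      have hflt : Real.pi / 4 * ‖f z‖ < Real.pi / 4 := by rw [← hxre]; exact hxlt
      rw [Real.arctan_tan (by nlinarith) (by nlinarith)]
    rw [h1]
    apply Real.arctan_strictMono.monotone
    calc Real.tan (Real.pi / 4 * ‖f z‖) = Real.tan ((k * H z).re) := by rw [hxre]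
    _ ≤ ‖ψ z‖ := htan
    _ ≤ _ := habsψz
  calc ‖f z‖ = (4 / Real.pi) * (Real.pi / 4 * ‖f z‖) := by
        field_simp
  _ ≤ (4 / Real.pi) * Real.arctan (‖z‖ * (‖z‖ + c) / (1 + c * ‖z‖)) :=
        mul_le_mul_of_nonneg_left harct (by positivity)
end

section
/- Let X, Y be complex Banach spaces with open unit balls B_X, B_Y, and f : B_X → B_Y a pluriharmonic mapping. Suppose b ∈ ∂B_X is such that the radial limit f(b) and the radial derivative Df(b)b exist, with ‖f(b)‖ = 1. Then ‖Df(b)b‖ ≥ max{ 2/π − ‖f(0)‖, (1 − ‖f(0)‖)/2 }. -/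
open Metric Set Filter Topology

section BSPAux
open Real


lemma cos_ne_zero_of_Icc {x : ℝ} (h : x ∈ Icc 0 (π/4)) : Real.cos x ≠ 0 := by
  have := Real.pi_pos
  simp only [mem_Icc] at h
  exact ne_of_gt (Real.cos_pos_of_mem_Ioo ⟨by linarith [h.1], by linarith [h.2]⟩)

lemma key_tan {s : ℝ} (h0 : 0 < s) (h2 : s < π/2) : 2*s + 1 - π/2 ≤ Real.tan s := by
  have hpi := Real.pi_pos
  have hmin : ∀ x : ℝ, 0 < x → x < π/2 → Real.tan (π/4) - 2*(π/4) ≤ Real.tan x - 2*x := by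
    intro x hx0 hx2
    have hcos : ∀ y : ℝ, 0 ≤ y → y < π/2 → Real.cos y ≠ 0 := fun y hy0 hy2 =>
      ne_of_gt (Real.cos_pos_of_mem_Ioo ⟨by linarith, hy2⟩)
    rcases le_or_gt x (π/4) with hc | hc
    · -- antitone on [x, π/4]
      have hA : AntitoneOn (fun y => Real.tan y - 2*y) (Icc x (π/4)) := by
        apply antitoneOn_of_deriv_nonpos (convex_Icc _ _)
        · apply ContinuousOn.sub ?_ (by fun_prop)
          apply Real.continuousOn_tan.mono
          intro y hy
          simp only [mem_Icc] at hy
          exact hcos y (le_trans hx0.le hy.1) (by linarith [hy.2])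
        · intro y hy
          rw [interior_Icc, mem_Ioo] at hy
          have h1 : Real.cos y ≠ 0 := hcos y (by linarith) (by linarith [hy.2])
          have hd : HasDerivAt (fun y : ℝ => Real.tan y - 2*y) (1/Real.cos y^2 - 2*1) y :=
            (Real.hasDerivAt_tan h1).sub ((hasDerivAt_id y).const_mul 2)
          exact hd.differentiableAt.differentiableWithinAt
        · intro y hy
          rw [interior_Icc, mem_Ioo] at hy
          have h1 : Real.cos y ≠ 0 := hcos y (by linarith) (by linarith [hy.2])
          have hd : HasDerivAt (fun y : ℝ => Real.tan y - 2*y) (1/Real.cos y^2 - 2*1) y :=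
            (Real.hasDerivAt_tan h1).sub ((hasDerivAt_id y).const_mul 2)
          rw [hd.deriv]
          have hcc : Real.cos (π/4) ≤ Real.cos y :=
            Real.cos_le_cos_of_nonneg_of_le_pi (by linarith) (by linarith) (by linarith)
          have h4 : Real.cos (π/4) = Real.sqrt 2 / 2 := Real.cos_pi_div_four
          have h5 : (Real.sqrt 2)^2 = 2 := Real.sq_sqrt (by norm_num)
          have h6 : (1:ℝ)/2 ≤ Real.cos y ^ 2 := by nlinarith [Real.sqrt_nonneg 2]
          have h7 : (0:ℝ) < Real.cos y ^ 2 := by positivity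
          have : 1 / Real.cos y ^2 ≤ 2 := by rw [div_le_iff₀ h7]; nlinarith
          simp only [mul_one]
          linarith
      exact hA ⟨le_refl x, hc⟩ ⟨hc, le_refl _⟩ hc
    · -- monotone on [π/4, x]
      have hM : MonotoneOn (fun y => Real.tan y - 2*y) (Icc (π/4) x) := by
        apply monotoneOn_of_deriv_nonneg (convex_Icc _ _)
        · apply ContinuousOn.sub ?_ (by fun_prop)
          apply Real.continuousOn_tan.mono
          intro y hy
          simp only [mem_Icc] at hy
          exact hcos y (by linarith [hy.1]) (by linarith [hy.2])
        · intro y hy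
          rw [interior_Icc, mem_Ioo] at hy
          have h1 : Real.cos y ≠ 0 := hcos y (by linarith) (by linarith [hy.2])
          have hd : HasDerivAt (fun y : ℝ => Real.tan y - 2*y) (1/Real.cos y^2 - 2*1) y :=
            (Real.hasDerivAt_tan h1).sub ((hasDerivAt_id y).const_mul 2)
          exact hd.differentiableAt.differentiableWithinAt
        · intro y hy
          rw [interior_Icc, mem_Ioo] at hy
          have h1 : Real.cos y ≠ 0 := hcos y (by linarith) (by linarith [hy.2])
          have hd : HasDerivAt (fun y : ℝ => Real.tan y - 2*y) (1/Real.cos y^2 - 2*1) y :=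
            (Real.hasDerivAt_tan h1).sub ((hasDerivAt_id y).const_mul 2)
          rw [hd.deriv]
          have hcc : Real.cos y ≤ Real.cos (π/4) :=
            Real.cos_le_cos_of_nonneg_of_le_pi (by linarith) (by linarith) (by linarith)
          have h4 : Real.cos (π/4) = Real.sqrt 2 / 2 := Real.cos_pi_div_four
          have h5 : (Real.sqrt 2)^2 = 2 := Real.sq_sqrt (by norm_num)
          have hcp : 0 < Real.cos y := Real.cos_pos_of_mem_Ioo ⟨by linarith, by linarith [hy.2]⟩
          have h6 : Real.cos y ^ 2 ≤ 1/2 := by nlinarith [Real.sqrt_nonneg 2]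
          have h7 : (0:ℝ) < Real.cos y ^ 2 := by positivity
          have : 2 ≤ 1 / Real.cos y ^2 := by rw [le_div_iff₀ h7]; nlinarith
          simp only [mul_one]
          linarith
      exact hM ⟨le_refl _, hc.le⟩ ⟨hc.le, le_refl x⟩ hc.le
  have := hmin s h0 h2
  rw [Real.tan_pi_div_four] at this
  linarith

lemma ineq_one {α : ℝ} (h1 : -(π/2) < α) (h2 : α < π/2) :
    (1-α) * Real.cos α ≤ 1 - Real.sin α := by
  have hpi := Real.pi_pos
  set s : ℝ := π/4 - α/2 with hsdef
  clear_value s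
  have hs0 : 0 < s := by rw [hsdef]; linarith
  have hs2 : s < π/2 := by rw [hsdef]; linarith
  have hα : α = π/2 - 2*s := by rw [hsdef]; ring
  have hcs : 0 < Real.cos s := Real.cos_pos_of_mem_Ioo ⟨by linarith, hs2⟩
  have hss : 0 < Real.sin s := Real.sin_pos_of_pos_of_lt_pi hs0 (by linarith)
  have htan := key_tan hs0 hs2
  rw [Real.tan_eq_sin_div_cos, le_div_iff₀ hcs] at htan
  rw [hα, Real.sin_pi_div_two_sub, Real.cos_pi_div_two_sub, Real.sin_two_mul, Real.cos_two_mul]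
  nlinarith [mul_le_mul_of_nonneg_left htan (by positivity : (0:ℝ) ≤ 2*Real.sin s),
    Real.sin_sq_add_cos_sq s]

lemma ineq_two {α : ℝ} (h1 : -(π/2) < α) (h2 : α < π/2) :
    (π/2 - α) * Real.cos α ≤ 2*(1 - Real.sin α) := by
  have hpi := Real.pi_pos
  set s : ℝ := π/4 - α/2 with hsdef
  clear_value s
  have hs0 : 0 < s := by rw [hsdef]; linarith
  have hs2 : s < π/2 := by rw [hsdef]; linarith
  have hα : α = π/2 - 2*s := by rw [hsdef]; ring
  have hcs : 0 < Real.cos s := Real.cos_pos_of_mem_Ioo ⟨by linarith, hs2⟩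
  have hss : 0 < Real.sin s := Real.sin_pos_of_pos_of_lt_pi hs0 (by linarith)
  have htan := Real.lt_tan hs0 hs2
  rw [Real.tan_eq_sin_div_cos, lt_div_iff₀ hcs] at htan
  rw [hα, Real.sin_pi_div_two_sub, Real.cos_pi_div_two_sub, Real.sin_two_mul, Real.cos_two_mul]
  nlinarith [mul_le_mul_of_nonneg_left htan.le (by positivity : (0:ℝ) ≤ 4*Real.sin s),
    Real.sin_sq_add_cos_sq s]


lemma final_bounds {X0 ρ₀ lD : ℝ} (hX : |X0| < 1) (hρ : 0 < ρ₀)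
    (hle : 2*(ρ₀ - ρ₀*Real.sin (π/2*X0))/(π*(ρ₀*Real.cos (π/2*X0))) ≤ lD) :
    2/π - X0 ≤ lD ∧ (1-X0)/2 ≤ lD := by
  have hpi := Real.pi_pos
  have hX1 := (abs_lt.mp hX).1
  have hX2 := (abs_lt.mp hX).2
  have hα1 : -(π/2) < π/2*X0 := by nlinarith
  have hα2 : π/2*X0 < π/2 := by nlinarith
  have i1 := ineq_one hα1 hα2
  have i2 := ineq_two hα1 hα2
  set c := Real.cos (π/2*X0) with hc
  set s := Real.sin (π/2*X0) with hs
  clear_value c s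
  have hcpos : 0 < c := by
    rw [hc]; exact Real.cos_pos_of_mem_Ioo ⟨hα1, hα2⟩
  have heq : 2*(ρ₀ - ρ₀*s)/(π*(ρ₀*c)) = 2*(1-s)/(π*c) := by
    rw [show 2*(ρ₀ - ρ₀*s) = ρ₀*(2*(1-s)) by ring, show π*(ρ₀*c) = ρ₀*(π*c) by ring,
      mul_div_mul_left _ _ (ne_of_gt hρ)]
  rw [heq] at hle
  constructor
  · refine le_trans ?_ hle
    rw [le_div_iff₀ (by positivity)]
    have hexpand : (2/π - X0)*(π*c) = 2*c - X0*π*c := by field_simp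
    rw [hexpand]
    nlinarith [i1]
  · refine le_trans ?_ hle
    rw [le_div_iff₀ (by positivity)]
    nlinarith [i2]


lemma lem_N2 {P0 re0 im0 ρ c s : ℝ} (hpy : s^2 + c^2 = 1) (hP : P0^2 = re0*re0 + im0*im0) :
    2*ρ*(P0 + re0*c - im0*s) ≤ (re0 + ρ*c)^2 + (ρ*s - im0)^2 := by
  have hρp : ρ^2*(s^2+c^2) = ρ^2 := by rw [hpy, mul_one]
  nlinarith [sq_nonneg (P0 - ρ), hρp, hP]

lemma lem_upper {re0 c ρ G N : ℝ} (hre0 : 0 < re0) (hc : 0 < c) (hρ : 0 < ρ)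
    (hG : 0 < G) (hN : 0 < N) (h2 : 2*ρ*G ≤ N) : 4*re0*(ρ*c)/N ≤ 2*re0*c/G := by
  rw [div_le_div_iff₀ hN hG]
  nlinarith [mul_le_mul_of_nonneg_right h2 (mul_pos hre0 hc).le]

lemma lem_chain {T G c x ρ N re0 : ℝ} (hpi : 0 < π) (hT0 : 0 ≤ T) (hρ : 0 < ρ)
    (hre0 : 0 < re0) (hc : 0 < c) (hG : 0 < G) (hN : 0 < N) (hN2 : 2*ρ*G ≤ N)
    (hcle : c ≤ π/2 - π/2*x) (hx : x < 1) :
    (1+T)*G/(π*re0) ≤ (1-x)*(1+T)*N/(4*re0*(ρ*c)) := by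
  rw [div_le_div_iff₀ (by positivity) (by positivity)]
  have k1 : (2*c)*((1+T)*re0*N) ≤ ((1-x)*π)*((1+T)*re0*N) := by
    apply mul_le_mul_of_nonneg_right _ (by positivity)
    linarith
  have k2 : (2*ρ*G)*(2*c*(1+T)*re0) ≤ N*(2*c*(1+T)*re0) :=
    mul_le_mul_of_nonneg_right hN2 (by positivity)
  nlinarith [k1, k2]

set_option maxHeartbeats 1000000 in
lemma main_disk (F : ℂ → ℂ) (hFd : DifferentiableOn ℂ F (ball 0 1))
    (hF1 : ∀ z ∈ ball (0:ℂ) 1, |(F z).re| < 1)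
    (lD : ℝ)
    (hlim : Tendsto (fun r : ℝ => (1 - (F ↑r).re)/(1 - r)) (𝓝[<] (1:ℝ)) (𝓝 lD))
    (hv1 : Tendsto (fun r : ℝ => (F ↑r).re) (𝓝[<] (1:ℝ)) (𝓝 1)) :
    2/π - (F 0).re ≤ lD ∧ (1 - (F 0).re)/2 ≤ lD := by
  have hpi := Real.pi_pos
  -- the half-plane map
  set W : ℂ → ℂ := fun z => Complex.exp (↑(π/2:ℝ) * Complex.I * F z) with hWdef
  have hWd : DifferentiableOn ℂ W (ball 0 1) := ((differentiableOn_const _).mul hFd).cexp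
  have hWre : ∀ z : ℂ, (W z).re = Real.exp (-(π/2 * (F z).im)) * Real.cos (π/2 * (F z).re) := by
    intro z
    rw [hWdef]
    simp only
    rw [Complex.exp_re]
    congr 2
    · simp [Complex.mul_re, Complex.mul_im]; try ring
    · simp [Complex.mul_re, Complex.mul_im]; try ring
  have hWim : ∀ z : ℂ, (W z).im = Real.exp (-(π/2 * (F z).im)) * Real.sin (π/2 * (F z).re) := by
    intro z
    rw [hWdef]
    simp only
    rw [Complex.exp_im]
    congr 2
    · simp [Complex.mul_re, Complex.mul_im]; try ring
    · simp [Complex.mul_re, Complex.mul_im]; try ring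
  have hWabs : ∀ z : ℂ, ‖W z‖ = Real.exp (-(π/2 * (F z).im)) := by
    intro z
    rw [hWdef]
    simp only
    rw [Complex.norm_exp]
    congr 1
    simp [Complex.mul_re, Complex.mul_im]; try ring
  have hWpos : ∀ z ∈ ball (0:ℂ) 1, 0 < (W z).re := by
    intro z hz
    rw [hWre z]
    have hx := abs_lt.mp (hF1 z hz)
    have : 0 < Real.cos (π/2 * (F z).re) :=
      Real.cos_pos_of_mem_Ioo ⟨by nlinarith [hx.1], by nlinarith [hx.2]⟩
    positivity
  clear_value W
  clear hWdef
  have h0mem : (0:ℂ) ∈ ball (0:ℂ) 1 := mem_ball_self one_pos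
  have hA : 0 < (W 0).re := hWpos 0 h0mem
  have hA1 : (W 0) + 1 ≠ 0 := by
    intro hcon
    have := congrArg Complex.re hcon
    simp [Complex.add_re] at this
    linarith
  have hden : ∀ z ∈ ball (0:ℂ) 1, (starRingEnd ℂ) (W 0) + W z ≠ 0 := by
    intro z hz hcon
    have := congrArg Complex.re hcon
    simp [Complex.add_re, Complex.conj_re] at this
    linarith [hWpos z hz]
  -- the schwarz function
  obtain ⟨ψ, hψd, hψ0, hψsq⟩ : ∃ ψ : ℂ → ℂ, DifferentiableOn ℂ ψ (ball 0 1) ∧ ψ 0 = 0 ∧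
      ∀ z ∈ ball (0:ℂ) 1, Complex.normSq (ψ z) =
        1 - 4*(W 0).re*(W z).re / Complex.normSq ((starRingEnd ℂ) (W 0) + W z) := by
    refine ⟨fun z => ((W z - W 0) * ((starRingEnd ℂ) (W 0) + 1)) /
      (((W 0) + 1) * ((starRingEnd ℂ) (W 0) + W z)), ?_, by simp, ?_⟩
    · exact ((hWd.sub (differentiableOn_const _)).mul (differentiableOn_const _)).div
        ((differentiableOn_const _).mul ((differentiableOn_const _).add hWd))
        (fun z hz => mul_ne_zero hA1 (hden z hz))
    · intro z hz
      have hNpos : 0 < Complex.normSq ((starRingEnd ℂ) (W 0) + W z) :=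
        Complex.normSq_pos.mpr (hden z hz)
      have hA1pos : 0 < Complex.normSq ((W 0) + 1) := Complex.normSq_pos.mpr hA1
      rw [map_div₀ Complex.normSq, map_mul, map_mul]
      have e1 : Complex.normSq ((starRingEnd ℂ) (W 0) + 1) = Complex.normSq ((W 0) + 1) := by
        rw [show (starRingEnd ℂ) (W 0) + 1 = (starRingEnd ℂ) ((W 0) + 1) by simp [map_add],
          Complex.normSq_conj]
      rw [e1]
      have e2 : Complex.normSq (W z - W 0) =
          Complex.normSq ((starRingEnd ℂ) (W 0) + W z) - 4*(W 0).re*(W z).re := by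
        simp [Complex.normSq_apply, Complex.add_re, Complex.add_im, Complex.sub_re,
          Complex.sub_im, Complex.conj_re, Complex.conj_im]
        ring
      rw [e2]
      field_simp
  have hmaps : MapsTo ψ (ball 0 1) (ball 0 1) := by
    intro z hz
    rw [mem_ball_zero_iff]
    have hNpos : 0 < Complex.normSq ((starRingEnd ℂ) (W 0) + W z) :=
      Complex.normSq_pos.mpr (hden z hz)
    have h1 : ‖ψ z‖^2 < 1^2 := by
      rw [Complex.sq_norm, hψsq z hz, one_pow]
      have : 0 < 4*(W 0).re*(W z).re / Complex.normSq ((starRingEnd ℂ) (W 0) + W z) :=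
        div_pos (mul_pos (by linarith : (0:ℝ) < 4*(W 0).re) (hWpos z hz)) hNpos
      linarith
    exact lt_of_pow_lt_pow_left₀ 2 zero_le_one h1

  have hSch : ∀ z ∈ ball (0:ℂ) 1, ‖ψ z‖ ≤ ‖z‖ := by
    intro z hz
    exact Complex.norm_le_norm_of_mapsTo_ball_self hψd (hmaps.mono_right ball_subset_closedBall) hψ0
      (by rwa [mem_ball_zero_iff] at hz)
  have hIoo : Ioo (0:ℝ) 1 ∈ 𝓝[<] (1:ℝ) := Ioo_mem_nhdsLT_of_mem ⟨zero_lt_one, le_refl 1⟩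
  have hrmem : ∀ r : ℝ, r ∈ Ioo (0:ℝ) 1 → (↑r : ℂ) ∈ ball (0:ℂ) 1 := by
    intro r hr
    rw [mem_ball_zero_iff, Complex.norm_real, Real.norm_eq_abs]
    exact abs_lt.mpr ⟨by linarith [hr.1], hr.2⟩
  have hcos1 : Tendsto (fun r : ℝ => Real.cos (π/2 * (F ↑r).re)) (𝓝[<] (1:ℝ)) (𝓝 0) := by
    have h1 : Tendsto (fun r : ℝ => π/2 * (F ↑r).re) (𝓝[<] (1:ℝ)) (𝓝 (π/2 * 1)) :=
      tendsto_const_nhds.mul hv1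
    have h2 := (Real.continuous_cos.tendsto (π/2 * 1)).comp h1
    simpa [Real.cos_pi_div_two, Function.comp_def] using h2
  have hsin1 : Tendsto (fun r : ℝ => Real.sin (π/2 * (F ↑r).re)) (𝓝[<] (1:ℝ)) (𝓝 1) := by
    have h1 : Tendsto (fun r : ℝ => π/2 * (F ↑r).re) (𝓝[<] (1:ℝ)) (𝓝 (π/2 * 1)) :=
      tendsto_const_nhds.mul hv1
    have h2 := (Real.continuous_sin.tendsto (π/2 * 1)).comp h1
    simpa [Real.sin_pi_div_two, Function.comp_def] using h2
  have hGlim : Tendsto (fun r : ℝ => ‖W 0‖ + (W 0).re * Real.cos (π/2 * (F ↑r).re)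
      - (W 0).im * Real.sin (π/2 * (F ↑r).re)) (𝓝[<] (1:ℝ))
      (𝓝 (‖W 0‖ - (W 0).im)) := by
    have h3 : Tendsto (fun r : ℝ => ‖W 0‖ + (W 0).re * Real.cos (π/2 * (F ↑r).re)
        - (W 0).im * Real.sin (π/2 * (F ↑r).re)) (𝓝[<] (1:ℝ))
        (𝓝 (‖W 0‖ + (W 0).re * 0 - (W 0).im * 1)) :=
      (tendsto_const_nhds.add (tendsto_const_nhds.mul hcos1)).sub
        (tendsto_const_nhds.mul hsin1)
    simpa using h3
  have hγpos : 0 < ‖W 0‖ - (W 0).im := by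
    have h2 := Complex.sq_norm (W 0)
    rw [Complex.normSq_apply] at h2
    nlinarith [Complex.im_le_norm (W 0), hA, mul_pos hA hA,
      norm_nonneg (W 0)]
  have hGpos : ∀ᶠ r : ℝ in 𝓝[<] (1:ℝ), 0 < ‖W 0‖ + (W 0).re * Real.cos (π/2 * (F ↑r).re)
      - (W 0).im * Real.sin (π/2 * (F ↑r).re) := hGlim.eventually (eventually_gt_nhds hγpos)
  -- the key pointwise estimates
  have hkey : ∀ᶠ r : ℝ in 𝓝[<] (1:ℝ),
      (0 ≤ 4*(W 0).re*(W ↑r).re / Complex.normSq ((starRingEnd ℂ) (W 0) + W ↑r) ∧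
       4*(W 0).re*(W ↑r).re / Complex.normSq ((starRingEnd ℂ) (W 0) + W ↑r) ≤
         2*(W 0).re * Real.cos (π/2 * (F ↑r).re) /
           (‖W 0‖ + (W 0).re * Real.cos (π/2 * (F ↑r).re)
             - (W 0).im * Real.sin (π/2 * (F ↑r).re))) ∧
      Complex.normSq (ψ ↑r) =
        1 - 4*(W 0).re*(W ↑r).re / Complex.normSq ((starRingEnd ℂ) (W 0) + W ↑r) ∧
      (1 + Complex.normSq (ψ ↑r)) * (‖W 0‖ + (W 0).re * Real.cos (π/2 * (F ↑r).re)
        - (W 0).im * Real.sin (π/2 * (F ↑r).re)) / (π * (W 0).re) ≤ (1 - (F ↑r).re)/(1 - r) := by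
    filter_upwards [hIoo, hGpos] with r hr hG
    obtain ⟨hr0, hr1⟩ := hr
    have hzm : (↑r : ℂ) ∈ ball (0:ℂ) 1 := hrmem r ⟨hr0, hr1⟩
    have hxab := abs_lt.mp (hF1 _ hzm)
    have hx1 : -1 < (F ↑r).re := hxab.1
    have hx2 : (F ↑r).re < 1 := hxab.2
    have hWr := hWre (↑r : ℂ)
    have hWi := hWim (↑r : ℂ)
    have hWrpos : 0 < (W ↑r).re := hWpos _ hzm
    have hρr : 0 < Real.exp (-(π/2 * (F (↑r:ℂ)).im)) := Real.exp_pos _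
    have hSr : ‖ψ ↑r‖ ≤ r := by
      have h5 := hSch _ hzm
      rwa [Complex.norm_real, Real.norm_eq_abs, abs_of_pos hr0] at h5
    have ht0 : 0 ≤ ‖ψ ↑r‖ := norm_nonneg _
    have hsq : ‖ψ ↑r‖^2 = Complex.normSq (ψ ↑r) := Complex.sq_norm _
    have hψr := hψsq _ hzm
    have hNpos : 0 < Complex.normSq ((starRingEnd ℂ) (W 0) + W ↑r) :=
      Complex.normSq_pos.mpr (hden _ hzm)
    have hA0sq := Complex.sq_norm (W 0)
    rw [Complex.normSq_apply] at hA0sq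
    have hNexp : Complex.normSq ((starRingEnd ℂ) (W 0) + W ↑r) =
        ((W 0).re + (W ↑r).re)^2 + ((W ↑r).im - (W 0).im)^2 := by
      simp [Complex.normSq_apply, Complex.add_re, Complex.add_im, Complex.conj_re,
        Complex.conj_im]
      ring
    have hpyth := Real.sin_sq_add_cos_sq (π/2 * (F (↑r:ℂ)).re)
    have hρp : (Real.exp (-(π/2 * (F (↑r:ℂ)).im)))^2 * (Real.sin (π/2 * (F (↑r:ℂ)).re)^2
        + Real.cos (π/2 * (F (↑r:ℂ)).re)^2) = (Real.exp (-(π/2 * (F (↑r:ℂ)).im)))^2 := by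
      rw [hpyth, mul_one]
    have k1 : (0:ℝ) < π/2 * ((F (↑r:ℂ)).re + 1) := mul_pos (by linarith) (by linarith)
    have k2 : (0:ℝ) < π/2 * (1 - (F (↑r:ℂ)).re) := mul_pos (by linarith) (by linarith)
    have hN2 : 2*Real.exp (-(π/2 * (F (↑r:ℂ)).im))*(‖W 0‖
        + (W 0).re * Real.cos (π/2 * (F ↑r).re) - (W 0).im * Real.sin (π/2 * (F ↑r).re))
        ≤ Complex.normSq ((starRingEnd ℂ) (W 0) + W ↑r) := by
      rw [hNexp, hWr, hWi]
      exact lem_N2 hpyth hA0sq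
    have hcpos : 0 < Real.cos (π/2 * (F (↑r:ℂ)).re) :=
      Real.cos_pos_of_mem_Ioo ⟨by linarith [k1], by linarith [k2]⟩
    have hcle : Real.cos (π/2 * (F (↑r:ℂ)).re) ≤ π/2 - π/2*(F (↑r:ℂ)).re := by
      have h6 : Real.cos (π/2 * (F (↑r:ℂ)).re) = Real.sin (π/2 - π/2 * (F (↑r:ℂ)).re) :=
        (Real.sin_pi_div_two_sub _).symm
      rw [h6]
      exact (Real.sin_le (by linarith [k2])).trans (le_refl _)
    -- abstract everything
    set x := (F (↑r:ℂ)).re with hxd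
    set c := Real.cos (π/2 * x) with hcd
    set s := Real.sin (π/2 * x) with hsd
    set ρ := Real.exp (-(π/2 * (F (↑r:ℂ)).im)) with hρd
    set wr := (W (↑r:ℂ)).re with hwd
    set N := Complex.normSq ((starRingEnd ℂ) (W 0) + W ↑r) with hNd
    set t := ‖ψ ↑r‖ with htd
    set T := Complex.normSq (ψ ↑r) with hTd
    set re0 := (W 0).re with hre0d
    set im0 := (W 0).im with him0d
    set P0 := ‖W 0‖ with hP0d
    clear_value x c s ρ wr N t T re0 im0 P0
    clear hxd hcd hsd hρd hwd hNd htd hTd hre0d him0d hP0d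
    clear hzm hxab hWi hNexp hA0sq hpyth hρp k1 k2
    clear hlim hv1 hFd hF1 hWd hWre hWim hWabs hWpos hden hA1 hψd hψ0 hψsq hmaps hSch
    clear hIoo hrmem hcos1 hsin1 hGlim hγpos hGpos
    have ht1 : t < 1 := lt_of_le_of_lt hSr hr1
    have hT0 : 0 ≤ T := by nlinarith [sq_nonneg t]
    have hTt : T ≤ t := by nlinarith
    have hT1 : T < 1 := by nlinarith
    have hTE : 1 - T = 4*re0*wr/N := by rw [hψr]; ring
    refine ⟨⟨by positivity, ?_⟩, hψr, ?_⟩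
    · -- squeeze upper bound
      rw [hWr]
      exact lem_upper hA hcpos hρr hG hNpos hN2
    · -- main chain
      calc (1+T)*(P0 + re0*c - im0*s)/(π*re0)
          ≤ (1-x)*(1+T)*N/(4*re0*wr) := by
            rw [hWr]
            exact lem_chain hpi hT0 hρr hA hcpos hG hNpos hN2 hcle hx2
        _ = (1-x)*(1+T)/(1-T) := by
            rw [hTE, div_div_eq_mul_div]
        _ ≤ (1-x)*(1+t)/(1-T) := by
            have h1T : 0 < 1 - T := by linarith
            gcongr
        _ = (1-x)/(1-t) := by
            rw [show (1:ℝ) - T = (1-t)*(1+t) by nlinarith]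
            rw [mul_div_mul_right _ _ (by linarith : (1:ℝ)+t ≠ 0)]
        _ ≤ (1-x)/(1-r) := by
            gcongr
  -- limit assembly
  have hElim : Tendsto (fun r : ℝ => 4*(W 0).re*(W ↑r).re /
      Complex.normSq ((starRingEnd ℂ) (W 0) + W ↑r)) (𝓝[<] (1:ℝ)) (𝓝 0) := by
    have hupper : Tendsto (fun r : ℝ => 2*(W 0).re * Real.cos (π/2 * (F ↑r).re) /
        (‖W 0‖ + (W 0).re * Real.cos (π/2 * (F ↑r).re)
          - (W 0).im * Real.sin (π/2 * (F ↑r).re))) (𝓝[<] (1:ℝ)) (𝓝 0) := by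
      have h7 : Tendsto (fun r : ℝ => 2*(W 0).re * Real.cos (π/2 * (F ↑r).re) /
          (‖W 0‖ + (W 0).re * Real.cos (π/2 * (F ↑r).re)
            - (W 0).im * Real.sin (π/2 * (F ↑r).re))) (𝓝[<] (1:ℝ))
          (𝓝 (2*(W 0).re * 0 / (‖W 0‖ - (W 0).im))) :=
        (tendsto_const_nhds.mul hcos1).div hGlim (ne_of_gt hγpos)
      simpa using h7
    refine tendsto_of_tendsto_of_tendsto_of_le_of_le' tendsto_const_nhds hupper ?_ ?_
    · filter_upwards [hkey] with r hk
      exact hk.1.1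
    · filter_upwards [hkey] with r hk
      exact hk.1.2
  have hTlim : Tendsto (fun r : ℝ => Complex.normSq (ψ ↑r)) (𝓝[<] (1:ℝ)) (𝓝 1) := by
    have h1 : Tendsto (fun r : ℝ => 1 - 4*(W 0).re*(W ↑r).re /
        Complex.normSq ((starRingEnd ℂ) (W 0) + W ↑r)) (𝓝[<] (1:ℝ)) (𝓝 (1 - 0)) :=
      tendsto_const_nhds.sub hElim
    rw [sub_zero] at h1
    apply Tendsto.congr' _ h1
    filter_upwards [hkey] with r hk
    exact hk.2.1.symm
  have hBlim : Tendsto (fun r : ℝ => (1 + Complex.normSq (ψ ↑r)) *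
      (‖W 0‖ + (W 0).re * Real.cos (π/2 * (F ↑r).re)
        - (W 0).im * Real.sin (π/2 * (F ↑r).re)) / (π * (W 0).re)) (𝓝[<] (1:ℝ))
      (𝓝 ((1+1) * (‖W 0‖ - (W 0).im) / (π * (W 0).re))) :=
    ((tendsto_const_nhds.add hTlim).mul hGlim).div_const _
  have hfinal : (1+1) * (‖W 0‖ - (W 0).im) / (π * (W 0).re) ≤ lD := by
    refine le_of_tendsto_of_tendsto hBlim hlim ?_
    filter_upwards [hkey] with r hk
    exact hk.2.2
  rw [hWre 0, hWim 0, hWabs 0] at hfinal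
  refine final_bounds (hF1 0 h0mem) (Real.exp_pos (-(π/2 * (F 0).im))) ?_
  calc 2*(Real.exp (-(π/2 * (F 0).im)) - Real.exp (-(π/2 * (F 0).im)) * Real.sin (π/2 * (F 0).re))
        / (π*(Real.exp (-(π/2 * (F 0).im)) * Real.cos (π/2 * (F 0).re)))
      = (1+1)*(Real.exp (-(π/2 * (F 0).im)) - Real.exp (-(π/2 * (F 0).im)) * Real.sin (π/2 * (F 0).re))
        / (π*(Real.exp (-(π/2 * (F 0).im)) * Real.cos (π/2 * (F 0).re))) := by norm_num
    _ ≤ lD := hfinal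



end BSPAux

theorem boundary_schwarz_pluriharmonic {X Y : Type*}
    [NormedAddCommGroup X] [NormedSpace ℂ X] [CompleteSpace X]
    [NormedAddCommGroup Y] [NormedSpace ℂ Y] [CompleteSpace Y]
    (f : X → Y)
    (hph : ∀ (l : Y →L[ℂ] ℂ) (φ : ℂ → X), DifferentiableOn ℂ φ (ball 0 1) →
      MapsTo φ (ball 0 1) (ball 0 1) → IsHarmonicOnDisk (fun ζ => l (f (φ ζ))))
    (hb : ∀ z ∈ ball (0:X) 1, ‖f z‖ < 1)
    (b : X) (hbn : ‖b‖ = 1) (fb D : Y)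
    (hfb : Tendsto (fun r : ℝ => f (r • b)) (𝓝[<] (1:ℝ)) (𝓝 fb))
    (hD : Tendsto (fun r : ℝ => (r - 1)⁻¹ • (f (r • b) - fb)) (𝓝[<] (1:ℝ)) (𝓝 D))
    (hfbn : ‖fb‖ = 1) :
    ‖D‖ ≥ max (2 / Real.pi - ‖f 0‖) ((1 - ‖f 0‖) / 2) := by
  have hpi := Real.pi_pos
  have hfb0 : fb ≠ 0 := by
    intro hh
    rw [hh, norm_zero] at hfbn
    exact one_ne_zero hfbn.symm
  obtain ⟨l, hl1, hlfb⟩ := exists_dual_vector ℂ fb (norm_ne_zero_iff.mpr hfb0)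
  have hφd : DifferentiableOn ℂ (fun ζ : ℂ => ζ • b) (ball 0 1) :=
    (differentiable_id.smul_const b).differentiableOn
  have hφm : MapsTo (fun ζ : ℂ => ζ • b) (ball 0 1) (ball (0:X) 1) := by
    intro ζ hζ
    rw [mem_ball_zero_iff] at hζ ⊢
    rw [norm_smul, hbn, mul_one]
    exact hζ
  obtain ⟨h, g, hhd, hgd, hrep⟩ := hph l _ hφd hφm
  obtain ⟨F, hFd, hFre⟩ : ∃ F : ℂ → ℂ, DifferentiableOn ℂ F (ball 0 1) ∧
      ∀ z ∈ ball (0:ℂ) 1, (F z).re = (l (f (z • b))).re := by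
    refine ⟨fun z => h z + g z, hhd.add hgd, ?_⟩
    intro z hz
    have h7 := hrep z hz
    simp only at h7
    rw [h7]
    simp [Complex.add_re, Complex.conj_re]
  have hF1 : ∀ z ∈ ball (0:ℂ) 1, |(F z).re| < 1 := by
    intro z hz
    rw [hFre z hz]
    calc |(l (f (z • b))).re| ≤ ‖l (f (z • b))‖ := Complex.abs_re_le_norm _
      _ = ‖l (f (z • b))‖ := rfl
      _ ≤ ‖l‖ * ‖f (z • b)‖ := l.le_opNorm _
      _ = ‖f (z • b)‖ := by rw [hl1, one_mul]
      _ < 1 := hb _ (hφm hz)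
  have hl1C : l fb = 1 := by
    rw [hlfb, hfbn]
    norm_num
  have hIoo : Ioo (0:ℝ) 1 ∈ 𝓝[<] (1:ℝ) := Ioo_mem_nhdsLT_of_mem ⟨zero_lt_one, le_refl 1⟩
  have hrmem : ∀ r : ℝ, r ∈ Ioo (0:ℝ) 1 → (↑r : ℂ) ∈ ball (0:ℂ) 1 := by
    intro r hr
    rw [mem_ball_zero_iff, Complex.norm_real, Real.norm_eq_abs]
    exact abs_lt.mpr ⟨by linarith [hr.1], hr.2⟩
  have hu1 : Tendsto (fun r : ℝ => (l (f (r • b))).re) (𝓝[<] (1:ℝ)) (𝓝 1) := by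
    have h9 : Tendsto (fun r : ℝ => l (f (r • b))) (𝓝[<] (1:ℝ)) (𝓝 (l fb)) :=
      (l.continuous.tendsto fb).comp hfb
    rw [hl1C] at h9
    have h10 := (Complex.continuous_re.tendsto 1).comp h9
    simpa [Function.comp_def] using h10
  have hv1 : Tendsto (fun r : ℝ => (F ↑r).re) (𝓝[<] (1:ℝ)) (𝓝 1) := by
    apply Tendsto.congr' _ hu1
    filter_upwards [hIoo] with r hr
    have h11 := hFre _ (hrmem r hr)
    rw [Complex.coe_smul] at h11
    exact h11.symm
  have hlim : Tendsto (fun r : ℝ => (1 - (F ↑r).re)/(1 - r)) (𝓝[<] (1:ℝ))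
      (𝓝 ((l D).re)) := by
    have h10 : Tendsto (fun r : ℝ => (l ((r - 1)⁻¹ • (f (r • b) - fb))).re)
        (𝓝[<] (1:ℝ)) (𝓝 ((l D).re)) :=
      (Complex.continuous_re.tendsto _).comp ((l.continuous.tendsto D).comp hD)
    apply Tendsto.congr' _ h10
    filter_upwards [hIoo] with r hr
    have hne : (1:ℝ) - r ≠ 0 := sub_ne_zero.mpr (ne_of_lt hr.2).symm
    have hne' : r - 1 ≠ 0 := sub_ne_zero.mpr (ne_of_lt hr.2)
    have hFr : (F ↑r).re = (l (f (r • b))).re := by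
      have h11 := hFre _ (hrmem r hr)
      rwa [Complex.coe_smul] at h11
    rw [l.map_smul_of_tower, map_sub, hl1C, Complex.smul_re, Complex.sub_re,
      Complex.one_re, ← hFr]
    rw [eq_div_iff hne]
    rw [smul_eq_mul]
    linear_combination (1 - (F ↑r).re) * inv_mul_cancel₀ hne'
  obtain ⟨hb1, hb2⟩ := main_disk F hFd hF1 ((l D).re) hlim hv1
  have h0m : (0:ℂ) ∈ ball (0:ℂ) 1 := mem_ball_self one_pos
  have hF0 : (F 0).re ≤ ‖f 0‖ := by
    have h12 := hFre 0 h0m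
    rw [zero_smul] at h12
    rw [h12]
    calc (l (f 0)).re ≤ ‖l (f 0)‖ := Complex.re_le_norm _
      _ = ‖l (f 0)‖ := rfl
      _ ≤ ‖l‖ * ‖f 0‖ := l.le_opNorm _
      _ = ‖f 0‖ := by rw [hl1, one_mul]
  have hDre : (l D).re ≤ ‖D‖ := by
    calc (l D).re ≤ ‖l D‖ := Complex.re_le_norm _
      _ = ‖l D‖ := rfl
      _ ≤ ‖l‖ * ‖D‖ := l.le_opNorm _
      _ = ‖D‖ := by rw [hl1, one_mul]
  rw [ge_iff_le, max_le_iff]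
  constructor
  · linarith [hb1, hF0, hDre]
  · linarith [hb2, hF0, hDre]
end

section
/- Let f : U → U be a harmonic mapping of the unit disk into itself. Then for all z ∈ U, |f_z(z)| + |f_{z̄}(z)| ≤ (4/π) · 1/(1 − |z|²). -/
open Metric Complex


lemma aux_normsq (a w : ℂ) :
    Complex.normSq (1 - (starRingEnd ℂ) a * w) - Complex.normSq (a - w)
      = (1 - Complex.normSq a) * (1 - Complex.normSq w) := by
  simp [Complex.normSq_apply, Complex.mul_re, Complex.mul_im]
  ring

lemma aux_lt (a w : ℂ) (ha : ‖a‖ < 1) (hw : ‖w‖ < 1) :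
    ‖a - w‖ < ‖1 - (starRingEnd ℂ) a * w‖ := by
  have h0 : Complex.normSq a < 1 := by
    rw [← Complex.sq_norm]; nlinarith [norm_nonneg a]
  have h1 : Complex.normSq w < 1 := by
    rw [← Complex.sq_norm]; nlinarith [norm_nonneg w]
  have h3 := aux_normsq a w
  have h2 : Complex.normSq (a - w) < Complex.normSq (1 - (starRingEnd ℂ) a * w) := by
    nlinarith
  rw [← Complex.sq_norm, ← Complex.sq_norm] at h2
  exact lt_of_pow_lt_pow_left₀ 2 (norm_nonneg _) h2

lemma schwarz_pick_zero_s12 (G : ℂ → ℂ) (hG : DifferentiableOn ℂ G (ball 0 1))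
    (hm : Set.MapsTo G (ball 0 1) (ball 0 1)) :
    ‖deriv G 0‖ ≤ 1 - ‖G 0‖ ^ 2 := by
  have h0 : (0:ℂ) ∈ ball (0:ℂ) 1 := by simp
  set a := G 0 with ha
  have haabs : ‖a‖ < 1 := by simpa using hm h0
  set M : ℂ → ℂ := fun w => (a - w) / (1 - (starRingEnd ℂ) a * w) with hM
  have hden : ∀ w : ℂ, ‖w‖ < 1 → 1 - (starRingEnd ℂ) a * w ≠ 0 := by
    intro w hw h
    have h1 : (starRingEnd ℂ) a * w = 1 := by linear_combination -h
    have : ‖(starRingEnd ℂ) a * w‖ < 1 := by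
      rw [norm_mul, Complex.norm_conj]
      calc ‖a‖ * ‖w‖ ≤ ‖w‖ := by
            nlinarith [norm_nonneg w, norm_nonneg a]
        _ < 1 := hw
    rw [h1] at this; simp at this
  have hMdiff : DifferentiableOn ℂ M (ball 0 1) := by
    apply DifferentiableOn.div
    · exact (differentiableOn_const a).sub differentiableOn_id
    · exact (differentiableOn_const 1).sub (differentiableOn_id.const_mul _)
    · intro w hw; exact hden w (by simpa using hw)
  have hMmaps : Set.MapsTo M (ball 0 1) (ball 0 1) := by
    intro w hw
    have hw' : ‖w‖ < 1 := by simpa using hw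
    have hd := hden w hw'
    have hpos : 0 < ‖1 - (starRingEnd ℂ) a * w‖ := by
      simpa [norm_pos_iff] using hd
    simp only [mem_ball, dist_zero_right, hM]
    rw [norm_div, div_lt_one hpos]
    exact aux_lt a w haabs hw'
  -- derivative of M at a
  have hd1 : HasDerivAt (fun w => a - w) (-1) a := by
    simpa using (hasDerivAt_id a).const_sub a
  have hd2 : HasDerivAt (fun w => 1 - (starRingEnd ℂ) a * w) (-((starRingEnd ℂ) a)) a := by
    simpa using ((hasDerivAt_id a).const_mul ((starRingEnd ℂ) a)).const_sub (1:ℂ)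
  have hdenne : 1 - (starRingEnd ℂ) a * a ≠ 0 := hden a haabs
  have hMd : HasDerivAt M ((-1 * (1 - (starRingEnd ℂ) a * a) - (a - a) * -((starRingEnd ℂ) a)) / (1 - (starRingEnd ℂ) a * a)^2) a := hd1.div hd2 hdenne
  have hval : deriv M a = -(1 - (starRingEnd ℂ) a * a)⁻¹ := by
    rw [hMd.deriv]; field_simp; ring
  have hre : (1 - (starRingEnd ℂ) a * a) = ((1 - ‖a‖ ^ 2 : ℝ) : ℂ) := by
    rw [mul_comm, Complex.mul_conj]
    norm_cast
    rw [Complex.sq_norm]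
  have habsM : ‖deriv M a‖ = (1 - ‖a‖ ^ 2)⁻¹ := by
    rw [hval, norm_neg, norm_inv, hre, Complex.norm_real, Real.norm_eq_abs,
      abs_of_pos (by nlinarith [norm_nonneg a])]
  -- Schwarz for M ∘ G
  have hF : DifferentiableOn ℂ (M ∘ G) (ball 0 1) := hMdiff.comp hG hm
  have hF0 : (M ∘ G) 0 = 0 := by
    simp [hM, Function.comp, ← ha]
  have hschwarz : ‖deriv (M ∘ G) 0‖ ≤ 1 :=
    Complex.norm_deriv_le_one_of_mapsTo_ball hF (by rw [hF0]; exact (hMmaps.comp hm).mono_right ball_subset_closedBall) one_pos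
  have hGat : DifferentiableAt ℂ G 0 := hG.differentiableAt (isOpen_ball.mem_nhds h0)
  have hMat : DifferentiableAt ℂ M a := hMd.differentiableAt
  have hcomp : deriv (M ∘ G) 0 = deriv M a * deriv G 0 := deriv_comp 0 hMat hGat
  rw [hcomp, norm_mul, habsM] at hschwarz
  have hpos : 0 < 1 - ‖a‖ ^ 2 := by nlinarith [norm_nonneg a]
  rw [inv_mul_le_iff₀ hpos] at hschwarz  -- maybe wrong name
  simpa using hschwarz

lemma strip_bound (H : ℂ → ℂ) (hH : DifferentiableOn ℂ H (ball 0 1))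
    (hs : ∀ w ∈ ball (0:ℂ) 1, |(H w).re| < 1) :
    ‖deriv H 0‖ ≤ 4 / Real.pi := by
  have h0 : (0:ℂ) ∈ ball (0:ℂ) 1 := by simp
  set c : ℂ := (Real.pi/2 : ℝ) * I with hc
  set E : ℂ → ℂ := fun ζ => Complex.exp (c * ζ) with hE
  -- positivity of real part on the strip
  have hEre : ∀ ζ : ℂ, |ζ.re| < 1 → 0 < (E ζ).re := by
    intro ζ hζ
    have him : (c * ζ).im = Real.pi/2 * ζ.re := by
      simp [hc, Complex.mul_im, Complex.mul_re]
    rw [hE]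
    simp only [Complex.exp_re, him]
    apply mul_pos (Real.exp_pos _)
    apply Real.cos_pos_of_mem_Ioo
    constructor
    · nlinarith [Real.pi_pos, abs_lt.mp hζ |>.1, abs_lt.mp hζ |>.2]
    · nlinarith [Real.pi_pos, abs_lt.mp hζ |>.1, abs_lt.mp hζ |>.2]
  have hdnz : ∀ ζ : ℂ, |ζ.re| < 1 → E ζ + 1 ≠ 0 := by
    intro ζ hζ h
    have := hEre ζ hζ
    have h2 : (E ζ + 1).re = 0 := by rw [h]; simp
    simp only [Complex.add_re, Complex.one_re] at h2
    linarith
  have hnsq : ∀ e : ℂ, Complex.normSq (e + 1) - Complex.normSq (e - 1) = 4 * e.re := by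
    intro e; simp [Complex.normSq_apply]; ring
  have hlt : ∀ ζ : ℂ, |ζ.re| < 1 → ‖E ζ - 1‖ < ‖E ζ + 1‖ := by
    intro ζ hζ
    have h1 := hEre ζ hζ
    have h2 := hnsq (E ζ)
    have h3 : Complex.normSq (E ζ - 1) < Complex.normSq (E ζ + 1) := by linarith
    rw [← Complex.sq_norm, ← Complex.sq_norm] at h3
    exact lt_of_pow_lt_pow_left₀ 2 (norm_nonneg _) h3
  set φ : ℂ → ℂ := fun ζ => (E ζ - 1) / (E ζ + 1) with hφ
  set G : ℂ → ℂ := φ ∘ H with hG2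
  have hstrip : ∀ w ∈ ball (0:ℂ) 1, |(H w).re| < 1 := hs
  have hGmaps : Set.MapsTo G (ball 0 1) (ball 0 1) := by
    intro w hw
    have h1 := hlt (H w) (hs w hw)
    have hpos : 0 < ‖E (H w) + 1‖ :=
      (norm_nonneg _).lt_of_ne' (by simpa [norm_eq_zero] using (norm_ne_zero_iff.mpr (hdnz (H w) (hs w hw))))
    simp only [mem_ball, dist_zero_right, hG2, Function.comp, hφ]
    rw [norm_div, div_lt_one hpos]
    exact h1
  have hφdiff : ∀ ζ : ℂ, |ζ.re| < 1 → HasDerivAt φ (2 * c * E ζ / (E ζ + 1)^2) ζ := by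
    intro ζ hζ
    have hEd : HasDerivAt E (c * E ζ) ζ := by
      have h : HasDerivAt (fun x => cexp (c * id x)) _ ζ := ((hasDerivAt_id ζ).const_mul c).cexp
      simp only [id_eq] at h
      convert h using 1
      show c * cexp (c * ζ) = cexp (c * ζ) * (c * 1)
      ring
    have h1 : HasDerivAt (fun x => E x - 1) (c * E ζ) ζ := hEd.sub_const 1
    have h2 : HasDerivAt (fun x => E x + 1) (c * E ζ) ζ := hEd.add_const 1
    have this : HasDerivAt (fun x => (E x - 1) / (E x + 1)) _ ζ := h1.div h2 (hdnz ζ hζ)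
    convert this using 1
    congr 1
    ring
  have hφdiffOn : DifferentiableOn ℂ φ {ζ : ℂ | |ζ.re| < 1} := by
    intro ζ hζ
    exact ((hφdiff ζ hζ).differentiableAt).differentiableWithinAt
  have hGdiff : DifferentiableOn ℂ G (ball 0 1) :=
    hφdiffOn.comp hH (fun w hw => hs w hw)
  have hsp := schwarz_pick_zero_s12 G hGdiff hGmaps
  -- compute deriv G 0
  have hHat : DifferentiableAt ℂ H 0 := hH.differentiableAt (isOpen_ball.mem_nhds h0)
  set ζ := H 0 with hζdef
  have hζs : |ζ.re| < 1 := hs 0 h0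
  have hcomp : deriv G 0 = (2 * c * E ζ / (E ζ + 1)^2) * deriv H 0 := by
    rw [hG2, deriv_comp 0 (hφdiff ζ hζs).differentiableAt hHat, (hφdiff ζ hζs).deriv]
  have hG0 : G 0 = (E ζ - 1) / (E ζ + 1) := rfl
  -- abs computations
  set e := E ζ with he
  have hene : ‖e‖ ≠ 0 := norm_ne_zero_iff.mpr (Complex.exp_ne_zero _)
  have hd1 : (0:ℝ) < ‖e + 1‖ := norm_pos_iff.mpr (hdnz ζ hζs)
  have habs_c : ‖c‖ = Real.pi / 2 := by
    rw [hc, norm_mul, Complex.norm_I, Complex.norm_real, Real.norm_eq_abs, abs_of_pos (by positivity)]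
    ring
  have hre_pos := hEre ζ hζs
  have hkey : Real.pi * ‖e‖ * ‖deriv H 0‖ / ‖e+1‖^2
      ≤ 4 * ‖e‖ / ‖e+1‖^2 := by
    have lhs_eq : ‖deriv G 0‖
        = Real.pi * ‖e‖ * ‖deriv H 0‖ / ‖e+1‖^2 := by
      rw [hcomp, norm_mul, norm_div, norm_mul, norm_mul, norm_pow, habs_c, Complex.norm_two]
      ring
    have rhs_le : 1 - ‖G 0‖ ^ 2 ≤ 4 * ‖e‖ / ‖e+1‖^2 := by
      rw [hG0, norm_div, div_pow]
      rw [one_sub_div (by positivity)]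
      have hnum : ‖e+1‖^2 - ‖e-1‖^2 ≤ 4 * ‖e‖ := by
        rw [Complex.sq_norm, Complex.sq_norm]
        have h2 := hnsq e
        have h3 := Complex.re_le_norm e
        linarith
      gcongr
    calc Real.pi * ‖e‖ * ‖deriv H 0‖ / ‖e+1‖^2
        = ‖deriv G 0‖ := lhs_eq.symm
      _ ≤ 1 - ‖G 0‖ ^ 2 := hsp
      _ ≤ 4 * ‖e‖ / ‖e+1‖^2 := rhs_le
  have habse : 0 < ‖e‖ := lt_of_le_of_ne (norm_nonneg e) (Ne.symm hene)
  have h4 : Real.pi * ‖e‖ * ‖deriv H 0‖ ≤ 4 * ‖e‖ :=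
    (div_le_div_iff_of_pos_right (by positivity)).mp hkey
  have h4' : (Real.pi * ‖deriv H 0‖) * ‖e‖ ≤ 4 * ‖e‖ := by
    nlinarith [h4]
  have h5 : Real.pi * ‖deriv H 0‖ ≤ 4 := le_of_mul_le_mul_right h4' habse
  rw [le_div_iff₀ Real.pi_pos]
  linarith

theorem colonna_schwarz_pick (f h g : ℂ → ℂ)
    (hh : DifferentiableOn ℂ h (ball 0 1))
    (hg : DifferentiableOn ℂ g (ball 0 1))
    (hfhg : ∀ z ∈ ball (0:ℂ) 1, f z = h z + (starRingEnd ℂ) (g z))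
    (hb : ∀ z ∈ ball (0:ℂ) 1, ‖f z‖ < 1)
    (z : ℂ) (hz : z ∈ ball (0:ℂ) 1) :
    ‖deriv h z‖ + ‖deriv g z‖ ≤
      (4 / Real.pi) * (1 / (1 - ‖z‖ ^ 2)) := by
  have hzabs : ‖z‖ < 1 := by simpa using hz
  have hzpos : 0 < 1 - ‖z‖ ^ 2 := by nlinarith [norm_nonneg z]
  set T : ℂ → ℂ := fun w => (w + z) / (1 + (starRingEnd ℂ) z * w) with hT
  have hden : ∀ w : ℂ, ‖w‖ < 1 → 1 + (starRingEnd ℂ) z * w ≠ 0 := by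
    intro w hw hcon
    have h1 : (starRingEnd ℂ) z * w = -1 := by linear_combination hcon
    have h2 : ‖(starRingEnd ℂ) z * w‖ < 1 := by
      rw [norm_mul, Complex.norm_conj]
      nlinarith [norm_nonneg w, norm_nonneg z]
    rw [h1] at h2; simp at h2
  have hTlt : ∀ w : ℂ, ‖w‖ < 1 →
      ‖w + z‖ < ‖1 + (starRingEnd ℂ) z * w‖ := by
    intro w hw
    have := aux_lt (-z) w (by simpa using hzabs) hw
    rw [map_neg] at this
    calc ‖w + z‖ = ‖-z - w‖ := by
          rw [show w + z = -(-z - w) from by ring, norm_neg]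
      _ < ‖1 - -(starRingEnd ℂ) z * w‖ := this
      _ = ‖1 + (starRingEnd ℂ) z * w‖ := by
          rw [show (1 : ℂ) - -(starRingEnd ℂ) z * w = 1 + (starRingEnd ℂ) z * w from by ring]
  have hTmaps : Set.MapsTo T (ball 0 1) (ball 0 1) := by
    intro w hw
    have hw' : ‖w‖ < 1 := by simpa using hw
    have hpos : 0 < ‖1 + (starRingEnd ℂ) z * w‖ := norm_pos_iff.mpr (hden w hw')
    simp only [mem_ball, dist_zero_right, hT]
    rw [norm_div, div_lt_one hpos]
    exact hTlt w hw'
  have hTdiff : DifferentiableOn ℂ T (ball 0 1) := by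
    apply DifferentiableOn.div
    · exact differentiableOn_id.add (differentiableOn_const z)
    · exact (differentiableOn_const 1).add (differentiableOn_id.const_mul _)
    · intro w hw; exact hden w (by simpa using hw)
  have hT0 : T 0 = z := by simp [hT]
  -- derivative of T at 0
  set d0 : ℂ := 1 - (starRingEnd ℂ) z * z with hd0
  have hTd : HasDerivAt T d0 0 := by
    have h1 : HasDerivAt (fun w : ℂ => w + z) 1 (0:ℂ) := (hasDerivAt_id 0).add_const z
    have h2 : HasDerivAt (fun w : ℂ => 1 + (starRingEnd ℂ) z * w) ((starRingEnd ℂ) z) (0:ℂ) := by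
      simpa using ((hasDerivAt_id (0:ℂ)).const_mul ((starRingEnd ℂ) z)).const_add 1
    have this : HasDerivAt (fun w : ℂ => (w + z) / (1 + (starRingEnd ℂ) z * w)) _ (0:ℂ) := h1.div h2 (hden 0 (by simp))
    convert this using 1
    simp [hd0, mul_comm]
  have hd0re : d0 = ((1 - ‖z‖ ^ 2 : ℝ) : ℂ) := by
    rw [hd0, mul_comm, Complex.mul_conj]
    norm_cast
    rw [Complex.sq_norm]
  -- rotation
  set α := Complex.arg (deriv h z) with hα
  set β := Complex.arg (deriv g z) with hβ
  set lam : ℂ := Complex.exp ((((β - α)/2 : ℝ) : ℂ) * I) with hlam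
  have hlamabs : ‖lam‖ = 1 := Complex.norm_exp_ofReal_mul_I _
  have hconjlam : (starRingEnd ℂ) lam = Complex.exp ((((α - β)/2 : ℝ) : ℂ) * I) := by
    rw [hlam, ← Complex.exp_conj, map_mul, Complex.conj_I, Complex.conj_ofReal]
    congr 1
    push_cast
    ring
  have hlamA : lam * deriv h z
      = ((‖deriv h z‖ : ℝ) : ℂ) * Complex.exp ((((α+β)/2 : ℝ) : ℂ) * I) := by
    conv_lhs => rw [← Complex.norm_mul_exp_arg_mul_I (deriv h z)]
    rw [hlam, show Complex.exp ((((β - α)/2 : ℝ) : ℂ) * I) * (((‖deriv h z‖ : ℝ):ℂ) * Complex.exp ((α : ℂ) * I)) = ((‖deriv h z‖ : ℝ):ℂ) * (Complex.exp ((((β - α)/2 : ℝ) : ℂ) * I) * Complex.exp ((α:ℂ) * I)) from by ring, ← Complex.exp_add]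
    congr 2
    push_cast
    ring
  have hlamB : (starRingEnd ℂ) lam * deriv g z
      = ((‖deriv g z‖ : ℝ) : ℂ) * Complex.exp ((((α+β)/2 : ℝ) : ℂ) * I) := by
    conv_lhs => rw [← Complex.norm_mul_exp_arg_mul_I (deriv g z)]
    rw [hconjlam, show Complex.exp ((((α - β)/2 : ℝ) : ℂ) * I) * (((‖deriv g z‖ : ℝ):ℂ) * Complex.exp ((β : ℂ) * I)) = ((‖deriv g z‖ : ℝ):ℂ) * (Complex.exp ((((α - β)/2 : ℝ) : ℂ) * I) * Complex.exp ((β:ℂ) * I)) from by ring, ← Complex.exp_add]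
    congr 2
    push_cast
    ring
  -- the holomorphic function with bounded real part
  set H : ℂ → ℂ := fun w => lam * (h ∘ T) w + (starRingEnd ℂ) lam * (g ∘ T) w with hH
  have hHdiff : DifferentiableOn ℂ H (ball 0 1) := by
    apply DifferentiableOn.add
    · exact (differentiableOn_const lam).mul (hh.comp hTdiff hTmaps)
    · exact (differentiableOn_const _).mul (hg.comp hTdiff hTmaps)
  have hHs : ∀ w ∈ ball (0:ℂ) 1, |(H w).re| < 1 := by
    intro w hw
    have hTw : T w ∈ ball (0:ℂ) 1 := hTmaps hw
    have hre : (H w).re = (lam * f (T w)).re := by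
      rw [hfhg (T w) hTw]
      simp only [hH, Function.comp_apply, Complex.add_re, Complex.mul_re, Complex.mul_im,
        Complex.conj_re, Complex.conj_im, Complex.add_im]
      ring
    rw [hre]
    calc |(lam * f (T w)).re| ≤ ‖lam * f (T w)‖ := Complex.abs_re_le_norm _
      _ = ‖f (T w)‖ := by rw [norm_mul, hlamabs, one_mul]
      _ < 1 := hb (T w) hTw
  have hbound := strip_bound H hHdiff hHs
  -- compute deriv H 0
  have hhz : HasDerivAt h (deriv h z) z :=
    (hh.differentiableAt (isOpen_ball.mem_nhds hz)).hasDerivAt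
  have hgz : HasDerivAt g (deriv g z) z :=
    (hg.differentiableAt (isOpen_ball.mem_nhds hz)).hasDerivAt
  have hhz' : HasDerivAt h (deriv h z) (T 0) := hT0 ▸ hhz
  have hgz' : HasDerivAt g (deriv g z) (T 0) := hT0 ▸ hgz
  have hHd : HasDerivAt H (lam * (deriv h z * d0) + (starRingEnd ℂ) lam * (deriv g z * d0)) 0 :=
    ((hhz'.comp 0 hTd).const_mul lam).add ((hgz'.comp 0 hTd).const_mul ((starRingEnd ℂ) lam))
  have habsH : ‖deriv H 0‖
      = (‖deriv h z‖ + ‖deriv g z‖) * (1 - ‖z‖ ^ 2) := by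
    rw [hHd.deriv]
    have : lam * (deriv h z * d0) + (starRingEnd ℂ) lam * (deriv g z * d0)
        = (lam * deriv h z + (starRingEnd ℂ) lam * deriv g z) * d0 := by ring
    rw [this, hlamA, hlamB, ← add_mul, norm_mul, norm_mul, hd0re]
    rw [show ((‖deriv h z‖ : ℝ):ℂ) + ((‖deriv g z‖ : ℝ):ℂ)
      = (((‖deriv h z‖ + ‖deriv g z‖ : ℝ)):ℂ) from by push_cast; ring]
    rw [Complex.norm_real, Complex.norm_real, Complex.norm_exp_ofReal_mul_I, mul_one, Real.norm_eq_abs, Real.norm_eq_abs,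
      _root_.abs_of_nonneg (by positivity : (0:ℝ) ≤ ‖deriv h z‖ + ‖deriv g z‖),
      _root_.abs_of_pos hzpos]
  rw [habsH] at hbound
  rw [mul_one_div, le_div_iff₀ hzpos]
  exact hbound
end
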